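/- arXiv:1003.1441 — 7 statements merged into one kernel-verified Lean document; each statement's English description precedes it below -/
import Mathlib

section
/- Fix m < -1, let n ∈ β⁰ and let V(·; n) : [0, ∞) → ℝ be the unique solution of V'' + 3V' = R(V), V(0) = m, V'(0) = n. Then for every ε ∈ (0, 1) there is a constant C(ε) > 0 such that -C(ε)·e^{-4(1-ε)t} < V(t; n) + 1 < 0 for all t ≥ 0. -/
open Real Filter Set

lemma sub_exp_mono {a b : ℝ} (hab : a ≤ b) (hb : b < 0) :
    a - Real.exp a ≤ b - Real.exp b := by
  have h1 : (a - b) + 1 ≤ Real.exp (a - b) := Real.add_one_le_exp _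
  have h2 : Real.exp a = Real.exp b * Real.exp (a - b) := by
    rw [← Real.exp_add]; ring_nf
  have h3 : Real.exp b < 1 := Real.exp_lt_one_iff.mpr hb
  nlinarith [Real.exp_pos b]

lemma ratio_bound (ε : ℝ) (hε0 : 0 < ε) (hε1 : ε < 1) {a : ℝ}
    (ha1 : Real.log (1 - ε) < a) (ha0 : a < 0) :
    0 ≤ 4 * (1 - ε) * (a - Real.exp a + 1) + 2 * (1 - Real.exp a) ^ 2 := by
  set g : ℝ → ℝ := fun q => 4 * (1 - ε) * (q - Real.exp q + 1) + 2 * (1 - Real.exp q) ^ 2 with hg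
  have hgd : ∀ q : ℝ, HasDerivAt g
      (4 * (1 - ε) * (1 - Real.exp q) + 2 * (2 * (1 - Real.exp q) * (-Real.exp q))) q := by
    intro q
    have h1 : HasDerivAt (fun q : ℝ => q - Real.exp q + 1) (1 - Real.exp q) q :=
      ((hasDerivAt_id q).sub (Real.hasDerivAt_exp q)).add_const 1
    have h2 : HasDerivAt (fun q : ℝ => (1 - Real.exp q) ^ 2)
        (2 * (1 - Real.exp q) * (-Real.exp q)) q := by
      have := ((hasDerivAt_const q (1:ℝ)).sub (Real.hasDerivAt_exp q)).pow 2
      exact this.congr_deriv (by norm_num)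
    exact (h1.const_mul _).add (h2.const_mul 2)
  have hanti : AntitoneOn g (Icc (Real.log (1 - ε)) 0) := by
    apply antitoneOn_of_deriv_nonpos (convex_Icc _ _)
    · exact fun q hq => ((hgd q).continuousAt).continuousWithinAt
    · exact fun q hq => ((hgd q).differentiableAt).differentiableWithinAt
    · intro q hq
      rw [interior_Icc, mem_Ioo] at hq
      rw [(hgd q).deriv]
      have he1 : Real.exp q < 1 := Real.exp_lt_one_iff.mpr hq.2
      have he2 : 1 - ε < Real.exp q := by
        calc 1 - ε = Real.exp (Real.log (1 - ε)) := (Real.exp_log (by linarith)).symm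
        _ < Real.exp q := Real.exp_lt_exp.mpr hq.1
      nlinarith
  have hmem1 : a ∈ Icc (Real.log (1 - ε)) 0 := ⟨le_of_lt ha1, le_of_lt ha0⟩
  have hmem2 : (0:ℝ) ∈ Icc (Real.log (1 - ε)) 0 := ⟨by linarith, le_refl 0⟩
  have h := hanti hmem1 hmem2 (le_of_lt ha0)
  have hg0 : g 0 = 0 := by simp [hg, Real.exp_zero]
  rw [hg0] at h
  simpa [hg] using h

set_option maxHeartbeats 1000000 in
/-- For fixed `m < -1` and `n ∈ β⁰`, the solution `V` of `V'' + 3V' = R(V)`,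
`V(0) = m`, `V'(0) = n` satisfies: for every `ε ∈ (0,1)` there is a constant
`C(ε) > 0` with `-C(ε) e^{-4(1-ε)t} < V(t) + 1 < 0` for all `t ≥ 0`. -/
theorem shooting_solution_decay_rate
    (Q R : ℝ → ℝ)
    (hQ : ∀ v : ℝ, v < -1 → Q v < 0 ∧ Q v - Real.exp (Q v) = v)
    (hR : ∀ v : ℝ, R v = if v < -1 then -2 * (1 - Real.exp (Q v)) ^ 2 else 4 * (v + 1))
    (m n : ℝ) (hm : m < -1)
    (V : ℝ → ℝ)
    (hdiff : ∀ t : ℝ, 0 ≤ t →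
      DifferentiableAt ℝ V t ∧ DifferentiableAt ℝ (deriv V) t)
    (hode : ∀ t : ℝ, 0 ≤ t → deriv (deriv V) t + 3 * deriv V t = R (V t))
    (hic : V 0 = m ∧ deriv V 0 = n)
    (hB0 : ∀ t > 0, 0 < deriv V t ∧ V t ≤ -1) :
    ∀ ε : ℝ, 0 < ε → ε < 1 → ∃ C : ℝ, 0 < C ∧
      ∀ t : ℝ, 0 ≤ t →
        -C * Real.exp (-4 * (1 - ε) * t) < V t + 1 ∧ V t + 1 < 0 := by
  -- continuity of V on [0,∞)
  have hVc : ContinuousOn V (Ici 0) := fun t ht =>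
    ((hdiff t ht).1.continuousAt).continuousWithinAt
  -- V strictly increasing on [0,∞)
  have hVsm : StrictMonoOn V (Ici 0) := by
    apply strictMonoOn_of_deriv_pos (convex_Ici 0) hVc
    intro t ht
    rw [interior_Ici] at ht
    exact (hB0 t ht).1
  have hVmono : MonotoneOn V (Ici 0) := hVsm.monotoneOn
  -- V < -1 on [0,∞)
  have hVlt : ∀ t : ℝ, 0 ≤ t → V t < -1 := by
    intro t ht
    rcases eq_or_lt_of_le ht with h | h
    · rw [← h, hic.1]; exact hm
    · calc V t < V (t + 1) := hVsm (le_of_lt h) (by simp; linarith) (by linarith)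
      _ ≤ -1 := (hB0 (t + 1) (by linarith)).2
  have hw : ∀ t : ℝ, 0 ≤ t → V t + 1 < 0 := fun t ht => by linarith [hVlt t ht]
  -- Q is monotone below -1
  have hQmono : ∀ v w : ℝ, v ≤ w → w < -1 → Q v ≤ Q w := by
    intro v w hvw hw1
    by_contra hgt
    push_neg at hgt
    have hv1 : v < -1 := lt_of_le_of_lt hvw hw1
    have h1 := (hQ v hv1)
    have h2 := (hQ w hw1)
    have := sub_exp_mono (le_of_lt hgt) h1.1
    rw [h1.2, h2.2] at this
    have hvw2 : v = w := le_antisymm hvw this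
    rw [hvw2] at hgt
    exact absurd hgt (lt_irrefl _)
  -- formula for R(V t)
  have hRV : ∀ t : ℝ, 0 ≤ t → R (V t) = -2 * (1 - Real.exp (Q (V t))) ^ 2 := by
    intro t ht
    rw [hR]
    exact if_pos (hVlt t ht)
  -- second derivative formula
  have hV2 : ∀ t : ℝ, 0 ≤ t → deriv (deriv V) t = R (V t) - 3 * deriv V t := by
    intro t ht; linarith [hode t ht]
  -- convergence: V(t) eventually ≥ -1 - δ
  have hconv : ∀ δ : ℝ, 0 < δ → ∃ T : ℝ, 0 ≤ T ∧ ∀ t : ℝ, T ≤ t → -1 - δ ≤ V t := by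
    intro δ hδ
    by_contra hcon
    push_neg at hcon
    -- so for every T ≥ 0 there is t ≥ T with V t < -1 - δ; by monotonicity V < -1-δ everywhere
    have hall : ∀ t : ℝ, 0 ≤ t → V t < -1 - δ := by
      intro t ht
      obtain ⟨T, hTt, hVT⟩ := hcon t ht
      exact lt_of_le_of_lt (hVmono ht (le_trans ht hTt) hTt) hVT
    -- uniform negative bound on R(V t)
    set qb := Q (-1 - δ) with hqb
    have hqbprop := hQ (-1 - δ) (by linarith)
    set c : ℝ := 2 * (1 - Real.exp qb) ^ 2 with hc
    have hexpqb : Real.exp qb < 1 := Real.exp_lt_one_iff.mpr hqbprop.1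
    have hc0 : 0 < c := by nlinarith
    have hRle : ∀ t : ℝ, 0 ≤ t → R (V t) ≤ -c := by
      intro t ht
      have hQle : Q (V t) ≤ qb := hQmono (V t) (-1 - δ) (le_of_lt (hall t ht)) (by linarith)
      have : Real.exp (Q (V t)) ≤ Real.exp qb := Real.exp_le_exp.mpr hQle
      rw [hRV t ht]
      nlinarith
    -- h := V' + 3V + c t is antitone on [0,∞)
    set h : ℝ → ℝ := fun t => deriv V t + 3 * V t + c * t with hhdef
    have hhD : ∀ t : ℝ, 0 ≤ t →
        HasDerivAt h (deriv (deriv V) t + 3 * deriv V t + c) t := by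
      intro t ht
      have h1 : HasDerivAt (fun t => c * t) (c * 1) t := (hasDerivAt_id t).const_mul c
      have := (((hdiff t ht).2.hasDerivAt).add (((hdiff t ht).1.hasDerivAt).const_mul 3)).add h1
      exact this.congr_deriv (by ring)
    have hanti : AntitoneOn h (Ici 0) := by
      apply antitoneOn_of_deriv_nonpos (convex_Ici 0)
      · exact fun t ht => ((hhD t ht).continuousAt).continuousWithinAt
      · intro t ht
        rw [interior_Ici] at ht
        exact ((hhD t (le_of_lt ht)).differentiableAt).differentiableWithinAt
      · intro t ht
        rw [interior_Ici] at ht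
        rw [(hhD t (le_of_lt ht)).deriv]
        have := hRle t (le_of_lt ht)
        have h2 := hV2 t (le_of_lt ht)
        linarith
    -- contradiction at large time
    set t₀ : ℝ := max 1 (n / c + 1) with ht₀def
    have ht₀1 : (1:ℝ) ≤ t₀ := le_max_left _ _
    have ht₀2 : n / c + 1 ≤ t₀ := le_max_right _ _
    have ht₀0 : (0:ℝ) ≤ t₀ := by linarith
    have hle : h t₀ ≤ h 0 := hanti (self_mem_Ici) (by exact ht₀0) ht₀0
    have hh0 : h 0 = n + 3 * m := by
      simp [hhdef, hic.1, hic.2]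
    have hlow : deriv V t₀ > 0 := (hB0 t₀ (by linarith)).1
    have hVt₀ : m ≤ V t₀ := by
      have := hVmono (self_mem_Ici) (by exact ht₀0 : t₀ ∈ Ici (0:ℝ)) ht₀0
      rw [hic.1] at this; exact this
    have hct₀ : n + c ≤ c * t₀ := by
      have := mul_le_mul_of_nonneg_left ht₀2 (le_of_lt hc0)
      have hcc : c * (n / c + 1) = n + c := by field_simp
      linarith
    have : h t₀ > 3 * m + n + c := by
      simp only [hhdef]
      nlinarith
    rw [hh0] at hle
    linarith
  intro ε hε0 hε1
  have h1ε : (0:ℝ) < 1 - ε := by linarith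
  have hlog : Real.log (1 - ε) < -ε := by
    have := Real.log_lt_sub_one_of_pos h1ε (by linarith)
    linarith
  set δe : ℝ := -Real.log (1 - ε) - ε with hδedef
  have hδe : 0 < δe := by simp only [hδedef]; linarith
  -- ratio estimate near -1
  have hRatio : ∀ v : ℝ, -1 - δe < v → v < -1 → R v ≤ 4 * (1 - ε) * (v + 1) := by
    intro v hv1 hv2
    obtain ⟨ha0, hav⟩ := hQ v hv2
    have hstep1 : Real.log (1 - ε) < Q v := by
      by_contra hle
      push_neg at hle
      have hb : Real.log (1 - ε) < 0 := Real.log_neg h1ε (by linarith)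
      have h2 := sub_exp_mono hle hb
      rw [hav, Real.exp_log h1ε] at h2
      have : v ≤ -1 - δe := by simp only [hδedef]; linarith
      linarith
    have hkey := ratio_bound ε hε0 hε1 hstep1 ha0
    rw [hav] at hkey
    rw [hR v, if_pos hv2]
    linarith
  -- choose T
  obtain ⟨T₀, hT₀0, hT₀⟩ := hconv (δe / 2) (by linarith)
  set T : ℝ := max T₀ 1 with hTdef
  have hT1 : (1:ℝ) ≤ T := le_max_right _ _
  have hT0 : (0:ℝ) ≤ T := by linarith
  have htpos : ∀ t : ℝ, T ≤ t → (0:ℝ) < t := fun t ht => lt_of_lt_of_le (by linarith) ht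
  have ht0 : ∀ t : ℝ, T ≤ t → (0:ℝ) ≤ t := fun t ht => (htpos t ht).le
  have hVT : ∀ t : ℝ, T ≤ t → -1 - δe < V t := by
    intro t ht
    have := hT₀ t (le_trans (le_max_left _ _) ht)
    linarith
  have hRle2 : ∀ t : ℝ, T ≤ t → R (V t) ≤ 4 * (1 - ε) * (V t + 1) := fun t ht =>
    hRatio (V t) (hVT t ht) (hVlt t (ht0 t ht))
  -- roots
  set s : ℝ := Real.sqrt (25 - 16 * ε) with hsdef
  have hs2 : s ^ 2 = 25 - 16 * ε := Real.sq_sqrt (by nlinarith)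
  have hsnn : 0 ≤ s := Real.sqrt_nonneg _
  have hs3 : 3 < s := by nlinarith
  have hs5 : s < 5 := by nlinarith
  set rp : ℝ := (s - 3) / 2 with hrpdef
  set rm : ℝ := -(s + 3) / 2 with hrmdef
  have hrp0 : 0 < rp := by simp only [hrpdef]; linarith
  set μ : ℝ := 4 * (1 - ε) with hμdef
  have hμ0 : 0 < μ := by simp only [hμdef]; linarith
  have hrmμ : rm ≤ -μ := by
    have h58 : 5 - 8 * ε ≤ s := by
      rcases le_or_gt (5 - 8 * ε) 0 with h | h
      · linarith
      · nlinarith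
    simp only [hrmdef, hμdef]; linarith
  -- the Riccati quantity
  set x : ℝ → ℝ := fun t => deriv V t / (V t + 1) with hxdef
  have hxneg : ∀ t : ℝ, T ≤ t → x t < 0 := fun t ht =>
    div_neg_of_pos_of_neg (hB0 t (htpos t ht)).1 (hw t (ht0 t ht))
  set x' : ℝ → ℝ := fun t =>
    (deriv (deriv V) t * (V t + 1) - deriv V t * deriv V t) / (V t + 1) ^ 2 with hx'def
  have hxD : ∀ t : ℝ, T ≤ t → HasDerivAt x (x' t) t := by
    intro t ht
    exact ((hdiff t (ht0 t ht)).2.hasDerivAt).div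
      (((hdiff t (ht0 t ht)).1.hasDerivAt).add_const 1) (ne_of_lt (hw t (ht0 t ht)))
  have hxineq : ∀ t : ℝ, T ≤ t → 4 * (1 - ε) - 3 * x t - (x t) ^ 2 ≤ x' t := by
    intro t ht
    have hwt := hw t (ht0 t ht)
    have hR2 := hRle2 t ht
    have hV2t := hV2 t (ht0 t ht)
    have hw2 : (0:ℝ) < (V t + 1) ^ 2 := by nlinarith [mul_pos_of_neg_of_neg hwt hwt]
    simp only [hxdef, hx'def]
    rw [le_div_iff₀ hw2]
    have expand : (4 * (1 - ε) - 3 * (deriv V t / (V t + 1)) - (deriv V t / (V t + 1)) ^ 2)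
        * (V t + 1) ^ 2
        = 4 * (1 - ε) * (V t + 1) * (V t + 1) - 3 * (deriv V t * (V t + 1))
          - deriv V t * deriv V t := by
      field_simp [ne_of_lt hwt]
    have key : 4 * (1 - ε) * (V t + 1) * (V t + 1) ≤ R (V t) * (V t + 1) := by
      have := mul_le_mul_of_nonpos_right hR2 hwt.le
      simp only [hμdef] at this
      linarith
    rw [expand, hV2t]
    nlinarith [key]
  -- Claim A : x t ≤ rm for all t ≥ T
  have hA : ∀ t : ℝ, T ≤ t → x t ≤ rm := by
    intro t₀ ht₀
    by_contra hgt
    push_neg at hgt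
    set u : ℝ → ℝ := fun t => (x t - rm) / (rp - x t) with hudef
    have hdpos : ∀ t : ℝ, T ≤ t → 0 < rp - x t := fun t ht => by
      have := hxneg t ht; linarith
    set u' : ℝ → ℝ := fun t =>
      (x' t * (rp - x t) - (x t - rm) * (0 - x' t)) / (rp - x t) ^ 2 with hu'def
    have huD : ∀ t : ℝ, T ≤ t → HasDerivAt u (u' t) t := by
      intro t ht
      exact ((hxD t ht).sub_const rm).div
        ((hasDerivAt_const t rp).sub (hxD t ht)) (ne_of_gt (hdpos t ht))
    set φ : ℝ → ℝ := fun t => Real.exp (-s * t) * u t with hφdef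
    have hφD : ∀ t : ℝ, T ≤ t → HasDerivAt φ
        (Real.exp (-s * t) * -s * u t + Real.exp (-s * t) * u' t) t := by
      intro t ht
      have h0 : HasDerivAt (fun t : ℝ => -s * t) (-s) t := by
        simpa using (hasDerivAt_id t).const_mul (-s)
      exact h0.exp.mul (huD t ht)
    have hmono : MonotoneOn φ (Ici t₀) := by
      apply monotoneOn_of_deriv_nonneg (convex_Ici t₀)
      · exact fun t ht => ((hφD t (le_trans ht₀ ht)).continuousAt).continuousWithinAt
      · intro t ht
        rw [interior_Ici] at ht
        exact ((hφD t (le_trans ht₀ ht.le)).differentiableAt).differentiableWithinAt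
      · intro t ht
        rw [interior_Ici] at ht
        have htT : T ≤ t := le_trans ht₀ ht.le
        rw [(hφD t htT).deriv]
        have hd := hdpos t htT
        have hxi := hxineq t htT
        have hfact : 4 * (1 - ε) - 3 * x t - (x t) ^ 2 = (rp - x t) * (x t - rm) := by
          simp only [hrpdef, hrmdef]
          linear_combination (-1/4 : ℝ) * hs2
        have hx'ge : (rp - x t) * (x t - rm) ≤ x' t := by rw [← hfact]; exact hxi
        have key : s * u t ≤ u' t := by
          have hd2 : (0:ℝ) < (rp - x t) ^ 2 := by positivity
          have e : s * u t = (s * (x t - rm)) / (rp - x t) := by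
            simp only [hudef]; ring
          rw [e, hu'def, div_le_div_iff₀ hd hd2]
          have hint := mul_le_mul_of_nonneg_left hx'ge
            (mul_nonneg (by linarith : (0:ℝ) ≤ s) hd.le)
          simp only [hrpdef, hrmdef] at hint ⊢
          nlinarith [hint]
        nlinarith [Real.exp_pos (-s * t), key,
          mul_le_mul_of_nonneg_left key (Real.exp_pos (-s * t)).le]
    have hu₀ : 0 < u t₀ := div_pos (by linarith) (hdpos t₀ ht₀)
    set c₀ : ℝ := Real.exp (-s * t₀) * u t₀ with hc₀def
    have hc₀ : 0 < c₀ := mul_pos (Real.exp_pos _) hu₀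
    set B : ℝ := (s + 3) / (s - 3) with hBdef
    have hBpos : 0 < B := div_pos (by linarith) (by linarith)
    have hub : ∀ t : ℝ, T ≤ t → u t ≤ B := by
      intro t ht
      have hd := hdpos t ht
      have hxn := hxneg t ht
      simp only [hudef, hBdef]
      rw [div_le_div_iff₀ hd (by linarith : (0:ℝ) < s - 3)]
      have hsx : s * x t < 0 := mul_neg_of_pos_of_neg (by linarith) hxn
      simp only [hrpdef, hrmdef]
      nlinarith
    set t₁ : ℝ := max t₀ (Real.log (B / c₀ + 1) / s + 1) with ht₁def
    have ht₁0 : t₀ ≤ t₁ := le_max_left _ _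
    have hTt₁ : T ≤ t₁ := le_trans ht₀ ht₁0
    have hmain : c₀ ≤ Real.exp (-s * t₁) * u t₁ :=
      hmono self_mem_Ici (mem_Ici.mpr ht₁0) ht₁0
    have hspos : (0:ℝ) < s := by linarith
    have hlarge : B < Real.exp (s * t₁) * c₀ := by
      have h1 : Real.log (B / c₀ + 1) / s + 1 ≤ t₁ := le_max_right _ _
      have e : s * (Real.log (B / c₀ + 1) / s + 1) = Real.log (B / c₀ + 1) + s := by
        field_simp
      have h2 : Real.log (B / c₀ + 1) + s ≤ s * t₁ := by
        have := mul_le_mul_of_nonneg_left h1 hspos.le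
        linarith [e ▸ this]
      have h3 : B / c₀ + 1 ≤ Real.exp (s * t₁) := by
        calc B / c₀ + 1 = Real.exp (Real.log (B / c₀ + 1)) :=
              (Real.exp_log (by positivity)).symm
        _ ≤ Real.exp (s * t₁) := Real.exp_le_exp.mpr (by linarith)
      have h4 := mul_le_mul_of_nonneg_right h3 hc₀.le
      have e2 : (B / c₀ + 1) * c₀ = B + c₀ := by field_simp
      nlinarith
    have h4 : Real.exp (s * t₁) * c₀ ≤ u t₁ := by
      have h5 := mul_le_mul_of_nonneg_left hmain (Real.exp_pos (s * t₁)).le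
      have e : Real.exp (s * t₁) * (Real.exp (-s * t₁) * u t₁) = u t₁ := by
        rw [← mul_assoc, ← Real.exp_add]
        have : s * t₁ + -s * t₁ = 0 := by ring
        rw [this, Real.exp_zero, one_mul]
      linarith [e ▸ h5]
    linarith [hub t₁ hTt₁]
  -- conclude : V' ≥ -μ (V+1) for t ≥ T
  have hderiv_ge : ∀ t : ℝ, T ≤ t → -μ * (V t + 1) ≤ deriv V t := by
    intro t ht
    have h1 : x t ≤ -μ := le_trans (hA t ht) hrmμ
    have hwt := hw t (ht0 t ht)
    simp only [hxdef] at h1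
    exact (div_le_iff_of_neg hwt).mp h1
  set ψ : ℝ → ℝ := fun t => Real.exp (μ * t) * (V t + 1) with hψdef
  have hψD : ∀ t : ℝ, 0 ≤ t → HasDerivAt ψ
      (Real.exp (μ * t) * μ * (V t + 1) + Real.exp (μ * t) * deriv V t) t := by
    intro t ht
    have h0 : HasDerivAt (fun t : ℝ => μ * t) μ t := by
      simpa using (hasDerivAt_id t).const_mul μ
    exact h0.exp.mul ((hdiff t ht).1.hasDerivAt.add_const 1)
  have hψmono : MonotoneOn ψ (Ici T) := by
    apply monotoneOn_of_deriv_nonneg (convex_Ici T)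
    · exact fun t ht => ((hψD t (le_trans hT0 ht)).continuousAt).continuousWithinAt
    · intro t ht
      rw [interior_Ici] at ht
      exact ((hψD t (le_trans hT0 ht.le)).differentiableAt).differentiableWithinAt
    · intro t ht
      rw [interior_Ici] at ht
      have htT : T ≤ t := ht.le
      rw [(hψD t (le_trans hT0 htT)).deriv]
      have h1 := hderiv_ge t htT
      nlinarith [mul_le_mul_of_nonneg_left h1 (Real.exp_pos (μ * t)).le]
  have hbound : ∀ t : ℝ, 0 ≤ t →
      Real.exp (μ * T) * (m + 1) * Real.exp (-(μ * t)) ≤ V t + 1 := by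
    intro t ht
    rcases le_or_gt T t with hTt | htT
    · have h1 : ψ T ≤ ψ t := hψmono self_mem_Ici (mem_Ici.mpr hTt) hTt
      have h2 : m + 1 ≤ V T + 1 := by
        have := hVmono self_mem_Ici (mem_Ici.mpr hT0) hT0
        rw [hic.1] at this; linarith
      have h3 : Real.exp (μ * T) * (m + 1) ≤ ψ T := by
        simp only [hψdef]
        exact mul_le_mul_of_nonneg_left h2 (Real.exp_pos _).le
      have h4 : Real.exp (μ * T) * (m + 1) ≤ Real.exp (μ * t) * (V t + 1) := by
        simp only [hψdef] at h1 h3; linarith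
      have h5 := mul_le_mul_of_nonneg_left h4 (Real.exp_pos (-(μ * t))).le
      have e : Real.exp (-(μ * t)) * (Real.exp (μ * t) * (V t + 1)) = V t + 1 := by
        rw [← mul_assoc, ← Real.exp_add]
        simp
      rw [e] at h5
      nlinarith [h5]
    · have h2 : m + 1 ≤ V t + 1 := by
        have := hVmono self_mem_Ici (mem_Ici.mpr ht) ht
        rw [hic.1] at this; linarith
      have h5 : (1:ℝ) ≤ Real.exp (μ * T) * Real.exp (-(μ * t)) := by
        rw [← Real.exp_add]
        apply Real.one_le_exp
        nlinarith
      have h6 := mul_le_mul_of_nonpos_left h5 (by linarith : m + 1 ≤ 0)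
      nlinarith [h6, h2]
  refine ⟨-2 * (m + 1) * Real.exp (μ * T), by nlinarith [Real.exp_pos (μ * T)], ?_⟩
  intro t ht
  refine ⟨?_, hw t ht⟩
  have hb := hbound t ht
  have he : Real.exp (-4 * (1 - ε) * t) = Real.exp (-(μ * t)) := by
    congr 1
    simp only [hμdef]; ring
  rw [he]
  have hEpos : 0 < Real.exp (μ * T) * Real.exp (-(μ * t)) := by positivity
  nlinarith [hb, mul_neg_of_neg_of_pos (show m + 1 < 0 by linarith) hEpos]
end

section
/- There exists a twice differentiable function V : ℝ → ℝ satisfying V''(s) - 3V'(s) = R(V(s)) for all s ∈ ℝ, with V(s) < -1 and V'(s) < 0 for all s ∈ ℝ, V(s) → -1 as s → -∞, and V(s) → -∞ as s → +∞. -/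
set_option linter.unusedSectionVars false
set_option maxHeartbeats 1000000
open Real Filter Set MeasureTheory intervalIntegral Topology



/-- `q ↦ q - e^q` is strictly monotone on nonpositives. -/
lemma bvp_aux_mono {q1 q2 : ℝ} (h : q1 < q2) (h2 : q2 ≤ 0) :
    q1 - Real.exp q1 < q2 - Real.exp q2 := by
  have he2 : Real.exp q2 ≤ 1 := Real.exp_le_one_iff.mpr h2
  have hexp : Real.exp q1 = Real.exp q2 * Real.exp (q1 - q2) := by
    rw [← Real.exp_add]; ring_nf
  have key : Real.exp q2 - Real.exp q1 < q2 - q1 := by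
    nlinarith [Real.add_one_lt_exp (x := q1 - q2) (by linarith : q1 - q2 ≠ 0),
      Real.exp_pos q2]
  linarith

/-- `F q = q + (1 - e^q) + (1 - e^q)^2/2 ≤ 0` for `q ≤ 0`. -/
lemma bvp_aux_F_nonpos {q : ℝ} (hq : q ≤ 0) :
    q + (1 - Real.exp q) + (1 - Real.exp q) ^ 2 / 2 ≤ 0 := by
  set F : ℝ → ℝ := fun q => q + (1 - Real.exp q) + (1 - Real.exp q) ^ 2 / 2 with hF
  have hder : ∀ x : ℝ, HasDerivAt F ((1 - Real.exp x) ^ 2) x := by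
    intro x
    have h1 : HasDerivAt (fun y : ℝ => 1 - Real.exp y) (-Real.exp x) x := by
      simpa using (Real.hasDerivAt_exp x).const_sub 1
    have h2 : HasDerivAt (fun y : ℝ => (1 - Real.exp y) ^ 2)
        (2 * (1 - Real.exp x) ^ (2-1) * (-Real.exp x)) x := h1.pow 2
    have h3 : HasDerivAt F (1 + (-Real.exp x) + 2 * (1 - Real.exp x) ^ (2-1) * (-Real.exp x) / 2) x :=
      ((hasDerivAt_id x).add h1).add (h2.div_const 2)
    convert h3 using 1
    ring
  have hmono : Monotone F := by
    apply monotone_of_deriv_nonneg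
    · exact fun x => (hder x).differentiableAt
    · intro x
      rw [(hder x).deriv]
      positivity
  have := hmono hq
  simpa [hF] using this



section Rprops
variable {Q R : ℝ → ℝ}
  (hQ : ∀ v : ℝ, v < -1 → Q v < 0 ∧ Q v - Real.exp (Q v) = v)
  (hR : ∀ v : ℝ, R v = if v < -1 then -2 * (1 - Real.exp (Q v)) ^ 2 else 4 * (v + 1))

include hQ hR

lemma bvp_R_le_zero : ∀ v : ℝ, v ≤ -1 → R v ≤ 0 := by
  intro v hv
  rcases lt_or_eq_of_le hv with hv | hv
  · rw [hR v, if_pos hv]; nlinarith [sq_nonneg (1 - Real.exp (Q v))]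
  · rw [hR v, if_neg (by rw [hv]; exact lt_irrefl _)]; rw [hv]; norm_num

lemma bvp_R_neg : ∀ v : ℝ, v < -1 → R v < 0 := by
  intro v hv
  rw [hR v, if_pos hv]
  have h1 : Real.exp (Q v) < 1 := Real.exp_lt_one_iff.mpr (hQ v hv).1
  nlinarith [sq_nonneg (1 - Real.exp (Q v))]

lemma bvp_R_ge_neg_two : ∀ v : ℝ, v ≤ -1 → -2 ≤ R v := by
  intro v hv
  rcases lt_or_eq_of_le hv with hv | hv
  · rw [hR v, if_pos hv]
    have h1 : Real.exp (Q v) < 1 := Real.exp_lt_one_iff.mpr (hQ v hv).1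
    have h2 : 0 < Real.exp (Q v) := Real.exp_pos _
    nlinarith
  · rw [hR v, if_neg (by rw [hv]; exact lt_irrefl _)]; rw [hv]; norm_num

lemma bvp_R_ge_lin : ∀ v : ℝ, v ≤ -1 → 4 * (v + 1) ≤ R v := by
  intro v hv
  rcases lt_or_eq_of_le hv with hv | hv
  · rw [hR v, if_pos hv]
    obtain ⟨hq0, hqv⟩ := hQ v hv
    have hF := bvp_aux_F_nonpos (le_of_lt hq0)
    nlinarith
  · rw [hR v, if_neg (by rw [hv]; exact lt_irrefl _)]

lemma bvp_Q_cont : ∀ v : ℝ, v < -1 → ContinuousAt Q v := by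
  intro v hv
  obtain ⟨hq0, hqv⟩ := hQ v hv
  rw [Metric.continuousAt_iff]
  intro ε hε
  set ε' : ℝ := min ε (-Q v / 2) with hε'def
  have hε' : 0 < ε' := lt_min hε (by linarith)
  have hup : Q v + ε' < 0 := by
    have : ε' ≤ -Q v / 2 := min_le_right _ _
    linarith
  have h1 : (Q v - ε') - Real.exp (Q v - ε') < v := by
    have := bvp_aux_mono (show Q v - ε' < Q v by linarith) (le_of_lt hq0)
    linarith [hqv]
  have h2 : v < (Q v + ε') - Real.exp (Q v + ε') := by
    have := bvp_aux_mono (show Q v < Q v + ε' by linarith) (le_of_lt hup)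
    linarith [hqv]
  -- also Q v + ε' - exp (Q v + ε') < -1 since it's h of a negative number
  have hlt : (Q v + ε') - Real.exp (Q v + ε') < -1 := by
    have := bvp_aux_mono hup (le_refl (0:ℝ))
    simpa using this
  refine ⟨min (v - ((Q v - ε') - Real.exp (Q v - ε')))
      (((Q v + ε') - Real.exp (Q v + ε')) - v), lt_min (by linarith) (by linarith), ?_⟩
  intro v' hv'
  rw [Real.dist_eq] at hv' ⊢
  have hd1 : |v' - v| < v - ((Q v - ε') - Real.exp (Q v - ε')) :=
    lt_of_lt_of_le hv' (min_le_left _ _)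
  have hd2 : |v' - v| < ((Q v + ε') - Real.exp (Q v + ε')) - v :=
    lt_of_lt_of_le hv' (min_le_right _ _)
  rw [abs_lt] at hd1 hd2
  have hv'lo : (Q v - ε') - Real.exp (Q v - ε') < v' := by linarith
  have hv'hi : v' < (Q v + ε') - Real.exp (Q v + ε') := by linarith
  have hv'lt : v' < -1 := lt_trans hv'hi hlt
  obtain ⟨hq0', hqv'⟩ := hQ v' hv'lt
  -- compare Q v' with Q v ± ε'
  have hQlo : Q v - ε' < Q v' := by
    by_contra hcon
    push_neg at hcon
    rcases lt_or_eq_of_le hcon with hcon | hcon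
    · have := bvp_aux_mono hcon (by linarith)
      rw [hqv'] at this
      linarith
    · rw [← hcon] at hv'lo; rw [hqv'] at hv'lo; linarith
  have hQhi : Q v' < Q v + ε' := by
    by_contra hcon
    push_neg at hcon
    rcases lt_or_eq_of_le hcon with hcon | hcon
    · have := bvp_aux_mono hcon (le_of_lt hq0')
      rw [hqv'] at this
      linarith
    · rw [hcon] at hv'hi; rw [hqv'] at hv'hi; linarith
  have : |Q v' - Q v| < ε' := by rw [abs_lt]; constructor <;> linarith
  exact lt_of_lt_of_le this (min_le_left _ _)

lemma bvp_R_cont : Continuous R := by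
  rw [continuous_iff_continuousAt]
  intro v
  rcases lt_trichotomy v (-1) with hv | hv | hv
  · -- v < -1 : R agrees with continuous expression near v
    have heq : R =ᶠ[nhds v] fun z => -2 * (1 - Real.exp (Q z)) ^ 2 := by
      filter_upwards [Iio_mem_nhds hv] with z hz
      have hz' : z < -1 := hz
      rw [hR z, if_pos hz']
    apply ContinuousAt.congr _ heq.symm
    have hQc := bvp_Q_cont hQ hR v hv
    exact (((Real.continuous_exp.continuousAt.comp hQc).const_sub 1).pow 2).const_mul (-2)
  · -- v = -1 : squeeze
    subst hv
    rw [Metric.continuousAt_iff]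
    intro ε hε
    refine ⟨ε / 4, by positivity, ?_⟩
    intro z hz
    rw [Real.dist_eq] at hz ⊢
    have hRz : |R z| ≤ 4 * |z + 1| := by
      rcases lt_or_ge z (-1) with h | h
      · have h1 := bvp_R_neg hQ hR z h
        have h2 := bvp_R_ge_lin hQ hR z (le_of_lt h)
        rw [abs_of_nonpos (le_of_lt h1), abs_of_nonpos (by linarith : z + 1 ≤ 0)]
        linarith
      · rw [hR z, if_neg (by push_neg; linarith)]
        rw [abs_mul]
        norm_num
    have hR1 : R (-1) = 0 := by rw [hR (-1), if_neg (lt_irrefl _)]; norm_num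
    rw [hR1, sub_zero]
    calc |R z| ≤ 4 * |z + 1| := hRz
      _ = 4 * |z - (-1)| := by ring_nf
      _ < 4 * (ε / 4) := by
          apply mul_lt_mul_of_pos_left _ (by norm_num)
          exact hz
      _ = ε := by ring
  · have heq : R =ᶠ[nhds v] fun z => 4 * (z + 1) := by
      filter_upwards [Ioi_mem_nhds hv] with z hz
      rw [hR z, if_neg (by push_neg; linarith [mem_Ioi.mp hz])]
    apply ContinuousAt.congr _ heq.symm
    fun_prop

end Rprops


noncomputable def bvpPsi (R f : ℝ → ℝ) : ℝ → ℝ :=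
  fun v => -Real.sqrt (2 * ∫ z in v..(-1:ℝ), (-3 * f z - R z))

noncomputable def bvpW0 : ℝ → ℝ := fun v => 4 * (v + 1) - 2

noncomputable def bvpSeq (R : ℝ → ℝ) : ℕ → ℝ → ℝ
  | 0 => bvpW0
  | n+1 => bvpPsi R (bvpSeq R n)

noncomputable def bvpW (R : ℝ → ℝ) : ℝ → ℝ := fun v => ⨆ n, bvpSeq R n (min v (-1))

lemma bvp_int_linear (a b c d : ℝ) :
    ∫ z in a..b, (c * z + d) = c * (b ^ 2 - a ^ 2) / 2 + d * (b - a) := by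
  have hd : ∀ x ∈ uIcc a b, HasDerivAt (fun z : ℝ => c * z ^ 2 / 2 + d * z) (c * x + d) x := by
    intro x _
    have h1 : HasDerivAt (fun z : ℝ => z ^ 2) (2 * x) x := by simpa using hasDerivAt_pow 2 x
    have h2 : HasDerivAt (fun z : ℝ => c * z ^ 2 / 2 + d * z) (c * (2 * x) / 2 + d * 1) x :=
      (((h1.const_mul c).div_const 2).add ((hasDerivAt_id x).const_mul d))
    convert h2 using 1; ring
  rw [intervalIntegral.integral_eq_sub_of_hasDerivAt hd
    ((by fun_prop : Continuous fun z : ℝ => c * z + d).intervalIntegrable a b)]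
  ring

section W
variable {R : ℝ → ℝ} (hRc : Continuous R)
  (hR0 : ∀ v : ℝ, v ≤ -1 → R v ≤ 0)
  (hR2 : ∀ v : ℝ, v ≤ -1 → -2 ≤ R v)
  (hR4 : ∀ v : ℝ, v ≤ -1 → 4 * (v + 1) ≤ R v)
  (hRneg : ∀ v : ℝ, v < -1 → R v < 0)

lemma bvp_w0_cont : Continuous bvpW0 := by unfold bvpW0; fun_prop

include hRc in
lemma bvp_psi_cont {f : ℝ → ℝ} (hf : Continuous f) : Continuous (bvpPsi R f) := by
  have hg : Continuous fun z => -3 * f z - R z := by fun_prop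
  have hint : Continuous fun v => ∫ z in v..(-1:ℝ), (-3 * f z - R z) := by
    have h1 := intervalIntegral.continuous_primitive
      (fun a b => hg.intervalIntegrable a b) (-1 : ℝ) (μ := volume)
    have heq : (fun v => ∫ z in v..(-1:ℝ), (-3 * f z - R z)) =
        fun v => -(∫ z in (-1:ℝ)..v, (-3 * f z - R z)) := by
      funext v; rw [intervalIntegral.integral_symm]
    rw [heq]; exact h1.neg
  exact (Real.continuous_sqrt.comp (continuous_const.mul hint)).neg

include hRc in
lemma bvp_seq_cont : ∀ n, Continuous (bvpSeq R n) := by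
  intro n
  induction n with
  | zero => exact bvp_w0_cont
  | succ n ih => exact bvp_psi_cont hRc ih

lemma bvp_psi_nonpos (f : ℝ → ℝ) (v : ℝ) : bvpPsi R f v ≤ 0 :=
  neg_nonpos.mpr (Real.sqrt_nonneg _)

include hRc in
lemma bvp_psi_mono {f g : ℝ → ℝ} (hfc : Continuous f) (hgc : Continuous g) {v : ℝ}
    (hv : v ≤ -1) (hfg : ∀ z, v ≤ z → z ≤ -1 → f z ≤ g z) :
    bvpPsi R f v ≤ bvpPsi R g v := by
  unfold bvpPsi
  apply neg_le_neg
  apply Real.sqrt_le_sqrt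
  have hmono : (∫ z in v..(-1:ℝ), (-3 * g z - R z)) ≤ ∫ z in v..(-1:ℝ), (-3 * f z - R z) := by
    apply intervalIntegral.integral_mono_on hv
    · exact (by fun_prop : Continuous fun z => -3 * g z - R z).intervalIntegrable _ _
    · exact (by fun_prop : Continuous fun z => -3 * f z - R z).intervalIntegrable _ _
    · intro x hx; have := hfg x hx.1 hx.2; linarith
  linarith

include hRc hR4 in
lemma bvp_w0_le_psi : ∀ v : ℝ, v ≤ -1 → bvpW0 v ≤ bvpPsi R bvpW0 v := by
  intro v hv
  have hI : (∫ z in v..(-1:ℝ), (-3 * bvpW0 z - R z)) ≤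
      ∫ z in v..(-1:ℝ), ((-16) * z + (-10)) := by
    apply intervalIntegral.integral_mono_on hv
    · exact (by unfold bvpW0; fun_prop :
        Continuous fun z => -3 * bvpW0 z - R z).intervalIntegrable _ _
    · exact ((continuous_const.mul continuous_id).add continuous_const).intervalIntegrable _ _
    · intro x hx
      have := hR4 x hx.2
      unfold bvpW0
      linarith
  rw [bvp_int_linear] at hI
  have hb : bvpW0 v = 4 * (v + 1) - 2 := rfl
  have hI2 : 2 * (∫ z in v..(-1:ℝ), (-3 * bvpW0 z - R z)) ≤ (bvpW0 v) ^ 2 := by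
    rw [hb]; nlinarith
  have h1 : Real.sqrt (2 * ∫ z in v..(-1:ℝ), (-3 * bvpW0 z - R z)) ≤ -(bvpW0 v) := by
    calc Real.sqrt (2 * ∫ z in v..(-1:ℝ), (-3 * bvpW0 z - R z))
        ≤ Real.sqrt ((bvpW0 v) ^ 2) := Real.sqrt_le_sqrt hI2
      _ = |bvpW0 v| := Real.sqrt_sq_eq_abs _
      _ = -(bvpW0 v) := abs_of_nonpos (by rw [hb]; linarith)
  unfold bvpPsi
  linarith

include hRc hR4 in
lemma bvp_seq_ge_w0 : ∀ n, ∀ v : ℝ, v ≤ -1 → bvpW0 v ≤ bvpSeq R n v := by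
  intro n
  induction n with
  | zero => exact fun v _ => le_refl _
  | succ n ih =>
    intro v hv
    calc bvpW0 v ≤ bvpPsi R bvpW0 v := bvp_w0_le_psi hRc hR4 v hv
      _ ≤ bvpPsi R (bvpSeq R n) v :=
        bvp_psi_mono hRc bvp_w0_cont (bvp_seq_cont hRc n) hv (fun z _ hz => ih z hz)
      _ = bvpSeq R (n+1) v := rfl

lemma bvp_seq_le_zero : ∀ n, ∀ v : ℝ, v ≤ -1 → bvpSeq R n v ≤ 0 := by
  intro n v hv
  cases n with
  | zero => unfold bvpSeq bvpW0; linarith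
  | succ n => exact bvp_psi_nonpos _ _

include hRc hR4 in
lemma bvp_seq_succ_mono : ∀ n, ∀ v : ℝ, v ≤ -1 → bvpSeq R n v ≤ bvpSeq R (n+1) v := by
  intro n
  induction n with
  | zero => exact fun v hv => bvp_w0_le_psi hRc hR4 v hv
  | succ n ih =>
    intro v hv
    exact bvp_psi_mono hRc (bvp_seq_cont hRc n) (bvp_seq_cont hRc (n+1)) hv
      (fun z _ hz => ih z hz)

include hRc hR4 in
lemma bvp_seq_mono : ∀ v : ℝ, v ≤ -1 → Monotone (fun n => bvpSeq R n v) := by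
  intro v hv
  apply monotone_nat_of_le_succ
  intro n
  exact bvp_seq_succ_mono hRc hR4 n v hv

lemma bvp_seq_bdd (v : ℝ) : BddAbove (range fun n => bvpSeq R n (min v (-1))) := by
  refine ⟨0, ?_⟩
  rintro x ⟨n, rfl⟩
  exact bvp_seq_le_zero n _ (min_le_right _ _)

include hRc hR4 in
lemma bvp_W_tendsto (v : ℝ) :
    Tendsto (fun n => bvpSeq R n (min v (-1))) atTop (𝓝 (bvpW R v)) :=
  tendsto_atTop_ciSup (bvp_seq_mono hRc hR4 _ (min_le_right _ _)) (bvp_seq_bdd v)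

lemma bvp_W_le_zero (v : ℝ) : bvpW R v ≤ 0 :=
  ciSup_le fun n => bvp_seq_le_zero n _ (min_le_right _ _)

lemma bvp_W_eq (v : ℝ) (hv : v ≤ -1) : bvpW R v = ⨆ n, bvpSeq R n v := by
  unfold bvpW; rw [min_eq_left hv]

lemma bvp_W_ge_seq (n : ℕ) (v : ℝ) (hv : v ≤ -1) : bvpSeq R n v ≤ bvpW R v := by
  rw [bvp_W_eq v hv]
  refine le_ciSup (f := fun n => bvpSeq R n v) ⟨0, ?_⟩ n
  rintro x ⟨m, rfl⟩
  exact bvp_seq_le_zero m _ hv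

lemma bvp_W_ge_w0 (v : ℝ) (hv : v ≤ -1) : bvpW0 v ≤ bvpW R v :=
  bvp_W_ge_seq 0 v hv

include hRc hR4 in
lemma bvp_W_meas : Measurable (bvpW R) := by
  refine measurable_of_tendsto_metrizable
    (f := fun n v => bvpSeq R n (min v (-1)))
    (fun n => ((bvp_seq_cont hRc n).comp (continuous_id.min continuous_const)).measurable) ?_
  rw [tendsto_pi_nhds]
  intro v
  exact tendsto_atTop_ciSup
    (bvp_seq_mono hRc hR4 _ (min_le_right _ _)) (bvp_seq_bdd v)

-- ### Part 4: integrability, fixed point, continuity, positivity, derivative, lower bound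

include hRc hR4 in
lemma bvp_W_norm_le {a : ℝ} (ha : a ≤ -1) :
    ∀ z ∈ Icc a (-1:ℝ), ‖bvpW R z‖ ≤ -(4 * (a + 1) - 2) := by
  intro z hz
  have h0 := bvp_W_le_zero (R := R) z
  have h1 := bvp_W_ge_w0 (R := R) z hz.2
  have h2 : bvpW0 z = 4 * (z + 1) - 2 := rfl
  rw [Real.norm_eq_abs, abs_of_nonpos h0]
  have := hz.1
  rw [h2] at h1
  linarith

include hRc hR4 in
lemma bvp_W_integrableOn {a : ℝ} (ha : a ≤ -1) :
    IntegrableOn (bvpW R) (Icc a (-1:ℝ)) volume := by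
  apply Integrable.mono' (integrable_const (-(4 * (a + 1) - 2)))
    ((bvp_W_meas hRc hR4).aestronglyMeasurable.restrict)
  filter_upwards [ae_restrict_mem measurableSet_Icc] with z hz
  exact bvp_W_norm_le hRc hR4 ha z hz

include hRc hR4 in
lemma bvp_G_intervalIntegrable {a : ℝ} (ha : a ≤ -1) :
    IntervalIntegrable (fun z => -3 * bvpW R z - R z) volume a (-1) := by
  apply MeasureTheory.IntegrableOn.intervalIntegrable
  rw [uIcc_of_le ha]
  exact (((bvp_W_integrableOn hRc hR4 ha).const_mul (-3)).sub (hRc.integrableOn_Icc))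

include hRc hR4 in
lemma bvp_W_fixed (v : ℝ) (hv : v ≤ -1) :
    bvpW R v = -Real.sqrt (2 * ∫ z in v..(-1:ℝ), (-3 * bvpW R z - R z)) := by
  set μ := volume.restrict (Ioc v (-1:ℝ)) with hμ
  have hseq_int : ∀ n, Integrable (fun z => -3 * bvpSeq R n z - R z) μ := by
    intro n
    have : Continuous fun z => -3 * bvpSeq R n z - R z := by
      have := bvp_seq_cont hRc n; fun_prop
    exact this.integrableOn_Ioc
  have hF_int : Integrable (fun z => -3 * bvpW R z - R z) μ := by
    have h1 : IntegrableOn (fun z => -3 * bvpW R z - R z) (Icc v (-1:ℝ)) volume :=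
      ((bvp_W_integrableOn hRc hR4 hv).const_mul (-3)).sub (hRc.integrableOn_Icc)
    exact h1.mono_set Ioc_subset_Icc_self
  have hanti : ∀ᵐ z ∂μ, Antitone fun n => -3 * bvpSeq R n z - R z := by
    filter_upwards [ae_restrict_mem measurableSet_Ioc] with z hz
    intro m n hmn
    have := bvp_seq_mono hRc hR4 z hz.2 hmn
    simp only
    linarith
  have htend : ∀ᵐ z ∂μ, Tendsto (fun n => -3 * bvpSeq R n z - R z) atTop
      (𝓝 (-3 * bvpW R z - R z)) := by
    filter_upwards [ae_restrict_mem measurableSet_Ioc] with z hz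
    have h1 := bvp_W_tendsto hRc hR4 z
    rw [min_eq_left hz.2] at h1
    exact (h1.const_mul (-3)).sub tendsto_const_nhds
  have key := integral_tendsto_of_tendsto_of_antitone hseq_int hF_int hanti htend
  have hconv : ∀ (f : ℝ → ℝ), (∫ z in v..(-1:ℝ), f z) = ∫ z, f z ∂μ := by
    intro f
    rw [intervalIntegral.integral_of_le hv, hμ]
  have h2 : Tendsto (fun n => bvpSeq R (n + 1) v) atTop
      (𝓝 (-Real.sqrt (2 * ∫ z in v..(-1:ℝ), (-3 * bvpW R z - R z)))) := by
    have hcont : Continuous fun x : ℝ => -Real.sqrt (2 * x) :=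
      (Real.continuous_sqrt.comp (continuous_const.mul continuous_id)).neg
    have h3 : Tendsto (fun n => -Real.sqrt (2 * ∫ z, (-3 * bvpSeq R n z - R z) ∂μ)) atTop
        (𝓝 (-Real.sqrt (2 * ∫ z, (-3 * bvpW R z - R z) ∂μ))) :=
      (hcont.tendsto _).comp key
    rw [← hconv] at h3
    have h4 : ∀ n, bvpSeq R (n + 1) v = -Real.sqrt (2 * ∫ z, (-3 * bvpSeq R n z - R z) ∂μ) := by
      intro n
      show bvpPsi R (bvpSeq R n) v = _
      unfold bvpPsi
      rw [hconv]
    simpa [h4] using h3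
  have h3 : Tendsto (fun n => bvpSeq R (n + 1) v) atTop (𝓝 (bvpW R v)) := by
    have h1 := bvp_W_tendsto hRc hR4 v
    rw [min_eq_left hv] at h1
    exact h1.comp (tendsto_add_atTop_nat 1)
  exact tendsto_nhds_unique h3 h2

include hRc hR4 in
lemma bvp_W_contAt {v : ℝ} (hv : v < -1) : ContinuousAt (bvpW R) v := by
  have hvm : (v + -1) / 2 < -1 := by linarith
  have hint : IntervalIntegrable (fun z => -3 * bvpW R z - R z) volume (v - 1) (-1) :=
    bvp_G_intervalIntegrable hRc hR4 (by linarith)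
  have hprim : ContinuousAt (fun u => ∫ z in (-1:ℝ)..u, (-3 * bvpW R z - R z)) v := by
    apply ContinuousWithinAt.continuousAt
      (s := Icc (v - 1) ((v + -1) / 2))
    · apply continuousWithinAt_primitive (measure_singleton v)
      rw [min_eq_right (by linarith : v - 1 ≤ -1), max_eq_left (le_of_lt hvm)]
      exact hint
    · exact Icc_mem_nhds (by linarith) (by linarith)
  have hψ : ContinuousAt (fun u => -Real.sqrt (2 * ∫ z in u..(-1:ℝ), (-3 * bvpW R z - R z))) v := by
    have heq : (fun u => -Real.sqrt (2 * ∫ z in u..(-1:ℝ), (-3 * bvpW R z - R z))) =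
        fun u => -Real.sqrt (2 * -(∫ z in (-1:ℝ)..u, (-3 * bvpW R z - R z))) := by
      funext u; rw [intervalIntegral.integral_symm]
    rw [heq]
    exact ((Real.continuous_sqrt.continuousAt.comp
      ((hprim.neg).const_mul 2)).neg : ContinuousAt _ v)
  apply hψ.congr
  filter_upwards [Iio_mem_nhds hv] with z hz
  exact (bvp_W_fixed hRc hR4 z (le_of_lt hz)).symm

include hRc hRneg in
lemma bvp_intR_pos {v : ℝ} (hv : v < -1) : 0 < ∫ z in v..(-1:ℝ), (-R z) := by
  apply intervalIntegral_pos_of_pos_on (hRc.neg.intervalIntegrable _ _)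
  · intro x hx
    have := hRneg x hx.2
    simp only [Pi.neg_apply]
    linarith
  · exact hv

include hRc hR4 hRneg in
lemma bvp_A_pos {v : ℝ} (hv : v < -1) :
    0 < 2 * ∫ z in v..(-1:ℝ), (-3 * bvpW R z - R z) := by
  have hmono : (∫ z in v..(-1:ℝ), (-R z)) ≤ ∫ z in v..(-1:ℝ), (-3 * bvpW R z - R z) := by
    apply intervalIntegral.integral_mono_on (le_of_lt hv)
      (hRc.neg.intervalIntegrable _ _) (bvp_G_intervalIntegrable hRc hR4 (le_of_lt hv))
    intro x hx
    have := bvp_W_le_zero (R := R) x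
    simp only [Pi.neg_apply]
    linarith
  have := bvp_intR_pos hRc hRneg hv
  linarith

include hRc hR4 hRneg in
lemma bvp_W_neg {v : ℝ} (hv : v < -1) : bvpW R v < 0 := by
  rw [bvp_W_fixed hRc hR4 v (le_of_lt hv)]
  simp only [neg_lt, neg_zero]
  exact Real.sqrt_pos.mpr (bvp_A_pos hRc hR4 hRneg hv)

include hRc hR4 hRneg in
lemma bvp_W_hasDeriv {v : ℝ} (hv : v < -1) :
    HasDerivAt (bvpW R) (3 + R v / bvpW R v) v := by
  have hWcont := bvp_W_contAt hRc hR4 hv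
  have hFcont : ContinuousAt (fun z => -3 * bvpW R z - R z) v :=
    ((hWcont.const_mul (-3)).sub hRc.continuousAt)
  have hFint : IntervalIntegrable (fun z => -3 * bvpW R z - R z) volume v (-1) :=
    bvp_G_intervalIntegrable hRc hR4 (le_of_lt hv)
  have hFmeas : StronglyMeasurableAtFilter (fun z => -3 * bvpW R z - R z) (𝓝 v) := by
    refine ⟨Set.univ, Filter.univ_mem, ?_⟩
    have : Measurable fun z => -3 * bvpW R z - R z :=
      ((bvp_W_meas hRc hR4).const_mul (-3)).sub hRc.measurable
    exact this.aestronglyMeasurable.restrict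
  have hderiv0 : HasDerivAt (fun u => ∫ z in u..(-1:ℝ), (-3 * bvpW R z - R z))
      (-(-3 * bvpW R v - R v)) v :=
    intervalIntegral.integral_hasDerivAt_left hFint hFmeas hFcont
  have hA : HasDerivAt (fun u => 2 * ∫ z in u..(-1:ℝ), (-3 * bvpW R z - R z))
      (2 * -(-3 * bvpW R v - R v)) v := hderiv0.const_mul 2
  have hApos := bvp_A_pos hRc hR4 hRneg hv
  have hsq := (Real.hasDerivAt_sqrt (ne_of_gt hApos)).comp v hA
  have hW' := hsq.neg
  have heq : (fun u => -Real.sqrt (2 * ∫ z in u..(-1:ℝ), (-3 * bvpW R z - R z)))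
      =ᶠ[𝓝 v] bvpW R := by
    filter_upwards [Iio_mem_nhds hv] with z hz
    exact (bvp_W_fixed hRc hR4 z (le_of_lt hz)).symm
  have hWder := hW'.congr_of_eventuallyEq heq.symm
  have hsqrtW : Real.sqrt (2 * ∫ z in v..(-1:ℝ), (-3 * bvpW R z - R z)) = -bvpW R v := by
    have := bvp_W_fixed hRc hR4 v (le_of_lt hv)
    linarith
  have hWne : bvpW R v ≠ 0 := ne_of_lt (bvp_W_neg hRc hR4 hRneg hv)
  refine hWder.congr_deriv ?_
  rw [hsqrtW]
  field_simp
  ring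

include hRc hR4 in
lemma bvp_boot : ∀ n : ℕ, ∀ v : ℝ, -2 ≤ v → v ≤ -1 →
    -9 * (-(v + 1)) ^ ((1:ℝ) - (1/2) ^ n) ≤ bvpSeq R (n + 1) v := by
  intro n
  induction n with
  | zero =>
    intro v hv2 hv1
    simp only [pow_zero, sub_self, Real.rpow_zero, mul_one]
    -- bvpSeq R 1 v = bvpPsi R bvpW0 v ≥ -9
    have hI : (∫ z in v..(-1:ℝ), (-3 * bvpW0 z - R z)) ≤
        ∫ z in v..(-1:ℝ), ((-16) * z + (-10)) := by
      apply intervalIntegral.integral_mono_on hv1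
      · exact (by unfold bvpW0; fun_prop :
          Continuous fun z => -3 * bvpW0 z - R z).intervalIntegrable _ _
      · exact (by fun_prop : Continuous fun z : ℝ => (-16) * z + (-10)).intervalIntegrable _ _
      · intro x hx
        have := hR4 x hx.2
        have hb : bvpW0 x = 4 * (x + 1) - 2 := rfl
        rw [hb]; linarith
    rw [bvp_int_linear] at hI
    have hI2 : 2 * (∫ z in v..(-1:ℝ), (-3 * bvpW0 z - R z)) ≤ 81 := by nlinarith
    have h1 : Real.sqrt (2 * ∫ z in v..(-1:ℝ), (-3 * bvpW0 z - R z)) ≤ 9 := by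
      calc Real.sqrt (2 * ∫ z in v..(-1:ℝ), (-3 * bvpW0 z - R z))
          ≤ Real.sqrt 81 := Real.sqrt_le_sqrt hI2
        _ = 9 := by
            rw [show (81:ℝ) = 9 ^ 2 by norm_num, Real.sqrt_sq (by norm_num : (0:ℝ) ≤ 9)]
    show -9 ≤ bvpPsi R bvpW0 v
    unfold bvpPsi
    linarith
  | succ n ih =>
    intro v hv2 hv1
    rcases eq_or_lt_of_le hv1 with heq | hlt
    · -- v = -1 : both sides 0
      subst heq
      have h1 : bvpSeq R (n + 2) (-1:ℝ) = 0 := by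
        show bvpPsi R (bvpSeq R (n+1)) (-1:ℝ) = 0
        unfold bvpPsi
        rw [intervalIntegral.integral_same]
        simp
      rw [h1]
      have : (-((-1:ℝ) + 1)) = 0 := by norm_num
      rw [this, Real.zero_rpow]
      · norm_num
      · have : ((1:ℝ)/2) ^ (n+1) < 1 := by
          apply pow_lt_one₀ (by norm_num) (by norm_num)
          omega
        intro hcon
        rw [sub_eq_zero] at hcon
        rw [← hcon] at this
        exact lt_irrefl _ this
    · -- v < -1
      set t : ℝ := -(v + 1) with ht_def
      have ht : 0 < t := by simp only [ht_def]; linarith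
      have ht1 : t ≤ 1 := by simp only [ht_def]; linarith
      set α : ℝ := 1 - (1/2) ^ n with hα_def
      have hα0 : 0 ≤ α := by
        have : ((1:ℝ)/2) ^ n ≤ 1 := pow_le_one₀ (by norm_num) (by norm_num)
        simp only [hα_def]; linarith
      have hα1 : α ≤ 1 := by
        have : (0:ℝ) ≤ (1/2) ^ n := by positivity
        simp only [hα_def]; linarith
      -- integrand bound
      have hIb : ∀ x ∈ Icc v (-1:ℝ), -3 * bvpSeq R (n+1) x - R x ≤ 31 * t ^ α := by
        intro x hx
        have hxm2 : -2 ≤ x := le_trans hv2 hx.1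
        have hihx := ih x hxm2 hx.2
        have htx0 : 0 ≤ -(x + 1) := by linarith [hx.2]
        have htxt : -(x + 1) ≤ t := by simp only [ht_def]; linarith [hx.1]
        have h1 : (-(x+1)) ^ α ≤ t ^ α := Real.rpow_le_rpow htx0 htxt hα0
        have h2 : -3 * bvpSeq R (n+1) x ≤ 27 * t ^ α := by nlinarith
        have h3 : -R x ≤ 4 * t := by
          have := hR4 x hx.2
          simp only [ht_def]; linarith
        have h4 : t ≤ t ^ α := by
          have := Real.rpow_le_rpow_of_exponent_ge ht ht1 hα1
          rwa [Real.rpow_one] at this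
        linarith
      have hI : (∫ z in v..(-1:ℝ), (-3 * bvpSeq R (n+1) z - R z)) ≤
          ∫ z in v..(-1:ℝ), (31 * t ^ α : ℝ) := by
        apply intervalIntegral.integral_mono_on (le_of_lt hlt)
        · exact (by have := bvp_seq_cont hRc (n+1); fun_prop :
            Continuous fun z => -3 * bvpSeq R (n+1) z - R z).intervalIntegrable _ _
        · exact intervalIntegrable_const
        · exact hIb
      rw [intervalIntegral.integral_const, smul_eq_mul] at hI
      have hconst : ((-1:ℝ) - v) * (31 * t ^ α) = 31 * t ^ (α + 1) := by
        rw [Real.rpow_add_one (ne_of_gt ht)]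
        have : (-1:ℝ) - v = t := by simp only [ht_def]; ring
        rw [this]; ring
      rw [hconst] at hI
      set β : ℝ := 1 - (1/2) ^ (n+1) with hβ_def
      have hβ : α + 1 = 2 * β := by
        simp only [hα_def, hβ_def]; ring
      have hsq : (9 * t ^ β) ^ 2 = 81 * t ^ (α + 1) := by
        rw [hβ]
        rw [mul_pow]
        rw [← Real.rpow_natCast (t ^ β) 2, ← Real.rpow_mul (le_of_lt ht)]
        norm_num
        ring_nf
      have hI2 : 2 * (∫ z in v..(-1:ℝ), (-3 * bvpSeq R (n+1) z - R z)) ≤ (9 * t ^ β) ^ 2 := by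
        rw [hsq]
        have : (0:ℝ) ≤ t ^ (α+1) := Real.rpow_nonneg (le_of_lt ht) _
        nlinarith
      have h1 : Real.sqrt (2 * ∫ z in v..(-1:ℝ), (-3 * bvpSeq R (n+1) z - R z)) ≤ 9 * t ^ β := by
        calc Real.sqrt (2 * ∫ z in v..(-1:ℝ), (-3 * bvpSeq R (n+1) z - R z))
            ≤ Real.sqrt ((9 * t ^ β) ^ 2) := Real.sqrt_le_sqrt hI2
          _ = 9 * t ^ β := Real.sqrt_sq (by positivity)
      show -9 * t ^ β ≤ bvpPsi R (bvpSeq R (n+1)) v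
      unfold bvpPsi
      linarith

include hRc hR4 in
lemma bvp_W_lb : ∀ v : ℝ, v ≤ -1 → 9 * (v + 1) ≤ bvpW R v := by
  intro v hv
  rcases eq_or_lt_of_le hv with heq | hlt
  · subst heq
    have h1 : bvpSeq R 1 (-1:ℝ) = 0 := by
      show bvpPsi R bvpW0 (-1:ℝ) = 0
      unfold bvpPsi
      rw [intervalIntegral.integral_same]
      simp
    have := bvp_W_ge_seq (R := R) 1 (-1) le_rfl
    rw [h1] at this
    linarith
  · rcases le_or_gt v (-7/5 : ℝ) with hcase | hcase
    · have h1 := bvp_W_ge_w0 (R := R) v hv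
      have h2 : bvpW0 v = 4 * (v + 1) - 2 := rfl
      rw [h2] at h1
      linarith
    · -- -7/5 < v < -1 : use bootstrap and limit
      set t : ℝ := -(v + 1) with ht_def
      have ht : 0 < t := by simp only [ht_def]; linarith
      have hv2 : -2 ≤ v := by linarith
      have hbd : ∀ n : ℕ, -9 * t ^ ((1:ℝ) - (1/2) ^ n) ≤ bvpW R v := fun n =>
        le_trans (bvp_boot hRc hR4 n v hv2 hv) (bvp_W_ge_seq (R := R) (n+1) v hv)
      have hlim : Tendsto (fun n : ℕ => -9 * t ^ ((1:ℝ) - (1/2) ^ n)) atTop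
          (𝓝 (-9 * t)) := by
        have h1 : Tendsto (fun n : ℕ => ((1:ℝ)/2) ^ n) atTop (𝓝 0) := by
          apply tendsto_pow_atTop_nhds_zero_of_lt_one (by norm_num) (by norm_num)
        have h2 : Tendsto (fun n : ℕ => (1:ℝ) - (1/2) ^ n) atTop (𝓝 1) := by
          have := h1.const_sub 1
          simpa using this
        have h3 : Tendsto (fun n : ℕ => t ^ ((1:ℝ) - (1/2) ^ n)) atTop (𝓝 (t ^ (1:ℝ))) := by
          have hc : ContinuousAt (fun y : ℝ => t ^ y) 1 := by
            apply Real.continuousAt_const_rpow (ne_of_gt ht)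
          exact hc.tendsto.comp h2
        rw [Real.rpow_one] at h3
        exact h3.const_mul (-9)
      have := le_of_tendsto' hlim hbd
      simp only [ht_def] at this
      linarith

end W

noncomputable def bvpS (R : ℝ → ℝ) : ℝ → ℝ := fun v => ∫ z in (-2:ℝ)..v, (bvpW R z)⁻¹

lemma bvp_inv_le {x y : ℝ} (hxy : x ≤ y) (hy : y < 0) : y⁻¹ ≤ x⁻¹ := by
  have hx : x < 0 := lt_of_le_of_lt hxy hy
  have h1 : (-x)⁻¹ ≤ (-y)⁻¹ := by
    rw [← one_div, ← one_div]
    exact one_div_le_one_div_of_le (by linarith) (by linarith)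
  rw [inv_neg, inv_neg] at h1
  linarith

lemma bvp_log_deriv {z : ℝ} (hz : z < -1) :
    HasDerivAt (fun z : ℝ => (9:ℝ)⁻¹ * Real.log (-(z + 1))) ((9 * (z + 1))⁻¹) z := by
  have hinner : HasDerivAt (fun z : ℝ => -(z + 1)) (-1) z := by
    exact ((hasDerivAt_id z).add_const 1).neg
  have hlog := (Real.hasDerivAt_log (by linarith : -(z + 1) ≠ 0)).comp z hinner
  have := hlog.const_mul ((9:ℝ)⁻¹)
  refine this.congr_deriv ?_
  rw [mul_inv, inv_neg]
  ring

section S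
variable {R : ℝ → ℝ} (hRc : Continuous R)
  (hR0 : ∀ v : ℝ, v ≤ -1 → R v ≤ 0)
  (hR2 : ∀ v : ℝ, v ≤ -1 → -2 ≤ R v)
  (hR4 : ∀ v : ℝ, v ≤ -1 → 4 * (v + 1) ≤ R v)
  (hRneg : ∀ v : ℝ, v < -1 → R v < 0)

include hRc hR4 hRneg

lemma bvp_Winv_contAt {z : ℝ} (hz : z < -1) : ContinuousAt (fun z => (bvpW R z)⁻¹) z :=
  (bvp_W_contAt hRc hR4 hz).inv₀ (ne_of_lt (bvp_W_neg hRc hR4 hRneg hz))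

lemma bvp_Winv_intInt {a b : ℝ} (ha : a < -1) (hb : b < -1) :
    IntervalIntegrable (fun z => (bvpW R z)⁻¹) volume a b := by
  apply ContinuousOn.intervalIntegrable
  intro x hx
  have hx1 : x < -1 := lt_of_le_of_lt hx.2 (max_lt ha hb)
  exact (bvp_Winv_contAt hRc hR4 hRneg hx1).continuousWithinAt

lemma bvp_S_deriv {v : ℝ} (hv : v < -1) : HasDerivAt (bvpS R) (bvpW R v)⁻¹ v := by
  apply intervalIntegral.integral_hasDerivAt_right
    (bvp_Winv_intInt hRc hR4 hRneg (by norm_num) hv)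
  · refine ⟨Iio (-1), Iio_mem_nhds hv, ?_⟩
    apply ContinuousOn.aestronglyMeasurable _ measurableSet_Iio
    intro x hx
    exact (bvp_Winv_contAt hRc hR4 hRneg hx).continuousWithinAt
  · exact bvp_Winv_contAt hRc hR4 hRneg hv

lemma bvp_S_anti : StrictAntiOn (bvpS R) (Iio (-1:ℝ)) := by
  apply strictAntiOn_of_deriv_neg (convex_Iio _)
  · intro x hx
    exact (bvp_S_deriv hRc hR4 hRneg hx).continuousAt.continuousWithinAt
  · intro x hx
    rw [interior_Iio] at hx
    rw [(bvp_S_deriv hRc hR4 hRneg hx).deriv]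
    exact inv_lt_zero.mpr (bvp_W_neg hRc hR4 hRneg hx)

lemma bvp_S_le_log {v : ℝ} (hv2 : -2 ≤ v) (hv : v < -1) :
    bvpS R v ≤ (9:ℝ)⁻¹ * Real.log (-(v + 1)) := by
  have hmono : bvpS R v ≤ ∫ z in (-2:ℝ)..v, (9 * (z + 1))⁻¹ := by
    apply intervalIntegral.integral_mono_on hv2
      (bvp_Winv_intInt hRc hR4 hRneg (by norm_num) hv)
    · apply ContinuousOn.intervalIntegrable
      intro x hx
      have hx1 : x < -1 := lt_of_le_of_lt hx.2 (by rw [max_eq_right hv2]; exact hv)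
      have h9 : (9:ℝ) * (x + 1) ≠ 0 := by intro h; nlinarith
      exact ((continuous_const.mul (continuous_id.add continuous_const)).continuousAt.inv₀
        h9).continuousWithinAt
    · intro x hx
      have hx1 : x < -1 := lt_of_le_of_lt hx.2 hv
      exact bvp_inv_le (bvp_W_lb hRc hR4 x (le_of_lt hx1))
        (bvp_W_neg hRc hR4 hRneg hx1)
  have heval : (∫ z in (-2:ℝ)..v, (9 * (z + 1))⁻¹) = (9:ℝ)⁻¹ * Real.log (-(v + 1)) := by
    rw [intervalIntegral.integral_eq_sub_of_hasDerivAt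
      (f := fun z : ℝ => (9:ℝ)⁻¹ * Real.log (-(z + 1)))]
    · norm_num
    · intro x hx
      have hx1 : x < -1 := lt_of_le_of_lt hx.2 (by rw [max_eq_right hv2]; exact hv)
      exact bvp_log_deriv hx1
    · apply ContinuousOn.intervalIntegrable
      intro x hx
      have hx1 : x < -1 := lt_of_le_of_lt hx.2 (by rw [max_eq_right hv2]; exact hv)
      have h9 : (9:ℝ) * (x + 1) ≠ 0 := by intro h; nlinarith
      exact ((continuous_const.mul (continuous_id.add continuous_const)).continuousAt.inv₀
        h9).continuousWithinAt
  linarith [heval ▸ hmono]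

lemma bvp_S_ge_log {v : ℝ} (hv : v ≤ -2) :
    (9:ℝ)⁻¹ * Real.log (-(v + 1)) ≤ bvpS R v := by
  have hv1 : v < -1 := by linarith
  have hsym : bvpS R v = -∫ z in v..(-2:ℝ), (bvpW R z)⁻¹ := by
    unfold bvpS
    rw [intervalIntegral.integral_symm]
  have hmono : (∫ z in v..(-2:ℝ), (bvpW R z)⁻¹) ≤ ∫ z in v..(-2:ℝ), (9 * (z + 1))⁻¹ := by
    apply intervalIntegral.integral_mono_on hv
      (bvp_Winv_intInt hRc hR4 hRneg hv1 (by norm_num))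
    · apply ContinuousOn.intervalIntegrable
      intro x hx
      have hx1 : x < -1 := lt_of_le_of_lt hx.2 (by rw [max_eq_right hv]; norm_num)
      have h9 : (9:ℝ) * (x + 1) ≠ 0 := by intro h; nlinarith
      exact ((continuous_const.mul (continuous_id.add continuous_const)).continuousAt.inv₀
        h9).continuousWithinAt
    · intro x hx
      have hx1 : x < -1 := by
        rcases hx with ⟨_, hx2⟩; linarith
      exact bvp_inv_le (bvp_W_lb hRc hR4 x (le_of_lt hx1))
        (bvp_W_neg hRc hR4 hRneg hx1)
  have heval : (∫ z in v..(-2:ℝ), (9 * (z + 1))⁻¹) = -((9:ℝ)⁻¹ * Real.log (-(v + 1))) := by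
    rw [intervalIntegral.integral_eq_sub_of_hasDerivAt
      (f := fun z : ℝ => (9:ℝ)⁻¹ * Real.log (-(z + 1)))]
    · norm_num
    · intro x hx
      have hx1 : x < -1 := by
        have := hx.2
        rw [max_eq_right hv] at this
        linarith
      exact bvp_log_deriv hx1
    · apply ContinuousOn.intervalIntegrable
      intro x hx
      have hx1 : x < -1 := by
        have := hx.2
        rw [max_eq_right hv] at this
        linarith
      have h9 : (9:ℝ) * (x + 1) ≠ 0 := by intro h; nlinarith
      exact ((continuous_const.mul (continuous_id.add continuous_const)).continuousAt.inv₀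
        h9).continuousWithinAt
  rw [hsym]
  rw [heval] at hmono
  linarith

lemma bvp_S_surj : ∀ t : ℝ, ∃ v : ℝ, v < -1 ∧ bvpS R v = t := by
  intro t
  set m : ℝ := min (1/2) (Real.exp (9 * t)) with hm_def
  have hm0 : 0 < m := lt_min (by norm_num) (Real.exp_pos _)
  have hm1 : m ≤ 1/2 := min_le_left _ _
  set v₁ : ℝ := -1 - m with hv₁_def
  have hv₁lt : v₁ < -1 := by simp only [hv₁_def]; linarith
  have hv₁ge : -2 ≤ v₁ := by simp only [hv₁_def]; linarith
  set M : ℝ := max 1 (Real.exp (9 * t)) with hM_def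
  have hM1 : 1 ≤ M := le_max_left _ _
  set v₂ : ℝ := -1 - M with hv₂_def
  have hv₂le : v₂ ≤ -2 := by simp only [hv₂_def]; linarith
  have hv₂lt : v₂ < -1 := by linarith
  have hord : v₂ ≤ v₁ := by
    simp only [hv₁_def, hv₂_def]
    have : m ≤ M := le_trans hm1 (by linarith)
    linarith
  have hS1 : bvpS R v₁ ≤ t := by
    have h1 := bvp_S_le_log hRc hR4 hRneg hv₁ge hv₁lt
    have h2 : -(v₁ + 1) = m := by simp only [hv₁_def]; ring
    rw [h2] at h1
    have h3 : Real.log m ≤ 9 * t := by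
      calc Real.log m ≤ Real.log (Real.exp (9 * t)) :=
        Real.log_le_log hm0 (min_le_right _ _)
        _ = 9 * t := Real.log_exp _
    calc bvpS R v₁ ≤ (9:ℝ)⁻¹ * Real.log m := h1
      _ ≤ (9:ℝ)⁻¹ * (9 * t) := by
          apply mul_le_mul_of_nonneg_left h3 (by norm_num)
      _ = t := by ring
  have hS2 : t ≤ bvpS R v₂ := by
    have h1 := bvp_S_ge_log hRc hR4 hRneg hv₂le
    have h2 : -(v₂ + 1) = M := by simp only [hv₂_def]; ring
    rw [h2] at h1
    have h3 : 9 * t ≤ Real.log M := by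
      calc (9:ℝ) * t = Real.log (Real.exp (9 * t)) := (Real.log_exp _).symm
        _ ≤ Real.log M := Real.log_le_log (Real.exp_pos _) (le_max_right _ _)
    calc t = (9:ℝ)⁻¹ * (9 * t) := by ring
      _ ≤ (9:ℝ)⁻¹ * Real.log M := by
          apply mul_le_mul_of_nonneg_left h3 (by norm_num)
      _ ≤ bvpS R v₂ := h1
  have hcont : ContinuousOn (bvpS R) (Icc v₂ v₁) := by
    intro x hx
    have hx1 : x < -1 := lt_of_le_of_lt hx.2 hv₁lt
    exact (bvp_S_deriv hRc hR4 hRneg hx1).continuousAt.continuousWithinAt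
  have hIVT := intermediate_value_Icc' hord hcont
  have htmem : t ∈ Icc (bvpS R v₁) (bvpS R v₂) := ⟨hS1, hS2⟩
  obtain ⟨v, hvmem, hveq⟩ := hIVT htmem
  exact ⟨v, lt_of_le_of_lt hvmem.2 hv₁lt, hveq⟩

end S

section Main
variable {R : ℝ → ℝ} (hRc : Continuous R)
  (hR0 : ∀ v : ℝ, v ≤ -1 → R v ≤ 0)
  (hR2 : ∀ v : ℝ, v ≤ -1 → -2 ≤ R v)
  (hR4 : ∀ v : ℝ, v ≤ -1 → 4 * (v + 1) ≤ R v)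
  (hRneg : ∀ v : ℝ, v < -1 → R v < 0)

include hRc hR4 hRneg in
lemma bvp_main :
    ∃ V : ℝ → ℝ,
      (∀ s : ℝ, DifferentiableAt ℝ V s ∧ DifferentiableAt ℝ (deriv V) s) ∧
      (∀ s : ℝ, deriv (deriv V) s - 3 * deriv V s = R (V s)) ∧
      (∀ s : ℝ, V s < -1 ∧ deriv V s < 0) ∧
      Tendsto V atBot (nhds (-1)) ∧
      Tendsto V atTop atBot := by
  choose Vf hVlt hVeq using bvp_S_surj hRc hR4 hRneg
  have hanti := bvp_S_anti hRc hR4 hRneg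
  have hcomp1 : ∀ t v', v' < -1 → t < bvpS R v' → v' < Vf t := by
    intro t v' hv' hlt
    by_contra hcon
    push_neg at hcon
    rcases eq_or_lt_of_le hcon with he | hl
    · rw [← he, hVeq t] at hlt
      exact lt_irrefl _ hlt
    · have := hanti (mem_Iio.mpr (hVlt t)) (mem_Iio.mpr hv') hl
      rw [hVeq t] at this
      linarith
  have hcomp2 : ∀ t v', v' < -1 → bvpS R v' < t → Vf t < v' := by
    intro t v' hv' hlt
    by_contra hcon
    push_neg at hcon
    rcases eq_or_lt_of_le hcon with he | hl
    · rw [he, hVeq t] at hlt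
      exact lt_irrefl _ hlt
    · have := hanti (mem_Iio.mpr hv') (mem_Iio.mpr (hVlt t)) hl
      rw [hVeq t] at this
      linarith
  have hVcont : ∀ t, ContinuousAt Vf t := by
    intro t
    rw [Metric.continuousAt_iff]
    intro ε hε
    set v : ℝ := Vf t with hv_def
    have hv : v < -1 := hVlt t
    set ε' : ℝ := min ε ((-1 - v) / 2) with hε'_def
    have hε' : 0 < ε' := lt_min hε (by linarith)
    have hvp : v + ε' < -1 := by
      have h1 : ε' ≤ (-1 - v) / 2 := min_le_right _ _
      linarith
    have hvm : v - ε' < -1 := by linarith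
    have hd1 : t < bvpS R (v - ε') := by
      have := hanti (mem_Iio.mpr hvm) (mem_Iio.mpr hv) (by linarith)
      rw [hVeq t] at this
      linarith
    have hd2 : bvpS R (v + ε') < t := by
      have := hanti (mem_Iio.mpr hv) (mem_Iio.mpr hvp) (by linarith)
      rw [hVeq t] at this
      linarith
    refine ⟨min (bvpS R (v - ε') - t) (t - bvpS R (v + ε')),
      lt_min (by linarith) (by linarith), ?_⟩
    intro t' ht'
    rw [Real.dist_eq] at ht' ⊢
    have h1 : |t' - t| < bvpS R (v - ε') - t := lt_of_lt_of_le ht' (min_le_left _ _)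
    have h2 : |t' - t| < t - bvpS R (v + ε') := lt_of_lt_of_le ht' (min_le_right _ _)
    rw [abs_lt] at h1 h2
    have hlo : v - ε' < Vf t' := hcomp1 t' (v - ε') hvm (by linarith)
    have hhi : Vf t' < v + ε' := hcomp2 t' (v + ε') hvp (by linarith)
    rw [abs_lt]
    constructor
    · have : ε' ≤ ε := min_le_left _ _
      linarith
    · have : ε' ≤ ε := min_le_left _ _
      linarith
  have hVderiv : ∀ t, HasDerivAt Vf (bvpW R (Vf t)) t := by
    intro t
    have h1 := bvp_S_deriv hRc hR4 hRneg (hVlt t)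
    have hWne : bvpW R (Vf t) ≠ 0 := ne_of_lt (bvp_W_neg hRc hR4 hRneg (hVlt t))
    have h2 : (bvpW R (Vf t))⁻¹ ≠ 0 := inv_ne_zero hWne
    have h3 := HasDerivAt.of_local_left_inverse (hVcont t) h1 h2
      (Eventually.of_forall hVeq)
    simpa [inv_inv] using h3
  have hderivV : deriv Vf = fun t => bvpW R (Vf t) := funext fun t => (hVderiv t).deriv
  have hVderiv2 : ∀ t, HasDerivAt (deriv Vf)
      ((3 + R (Vf t) / bvpW R (Vf t)) * bvpW R (Vf t)) t := by
    intro t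
    rw [hderivV]
    exact (bvp_W_hasDeriv hRc hR4 hRneg (hVlt t)).comp t (hVderiv t)
  refine ⟨Vf, ?_, ?_, ?_, ?_, ?_⟩
  · exact fun t => ⟨(hVderiv t).differentiableAt, (hVderiv2 t).differentiableAt⟩
  · intro t
    have hWne : bvpW R (Vf t) ≠ 0 := ne_of_lt (bvp_W_neg hRc hR4 hRneg (hVlt t))
    rw [(hVderiv2 t).deriv, hderivV]
    simp only
    field_simp
    ring
  · intro t
    refine ⟨hVlt t, ?_⟩
    rw [hderivV]
    exact bvp_W_neg hRc hR4 hRneg (hVlt t)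
  · rw [Metric.tendsto_nhds]
    intro ε hε
    set ε' : ℝ := min (ε / 2) (1 / 2) with hε'_def
    have hε' : 0 < ε' := lt_min (by linarith) (by norm_num)
    have h1 : -1 - ε' < -1 := by linarith
    rw [eventually_atBot]
    refine ⟨bvpS R (-1 - ε') - 1, fun t ht => ?_⟩
    have hlt : t < bvpS R (-1 - ε') := by linarith
    have h2 : -1 - ε' < Vf t := hcomp1 t (-1 - ε') h1 hlt
    have h3 : Vf t < -1 := hVlt t
    rw [Real.dist_eq, abs_lt]
    have h4 : ε' ≤ ε / 2 := min_le_left _ _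
    constructor <;> linarith
  · rw [tendsto_atBot]
    intro b
    set b' : ℝ := min b (-2) with hb'_def
    have hb' : b' < -1 := lt_of_le_of_lt (min_le_right _ _) (by norm_num)
    rw [eventually_atTop]
    refine ⟨bvpS R b' + 1, fun t ht => ?_⟩
    have hlt : bvpS R b' < t := by linarith
    have := hcomp2 t b' hb' hlt
    exact le_of_lt (lt_of_lt_of_le this (min_le_left _ _))

end Main

/-- Existence of a solution of the two-point boundary value problem
`V'' - 3V' = R(V)` on `ℝ` with `V(-∞) = -1`, `V(+∞) = -∞`: there is a twice
differentiable `V : ℝ → ℝ` with `V(s) < -1` and `V'(s) < 0` for all `s`,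
`V(s) → -1` as `s → -∞` and `V(s) → -∞` as `s → +∞`. -/
theorem existence_solution_bvp
    (Q R : ℝ → ℝ)
    (hQ : ∀ v : ℝ, v < -1 → Q v < 0 ∧ Q v - Real.exp (Q v) = v)
    (hR : ∀ v : ℝ, R v = if v < -1 then -2 * (1 - Real.exp (Q v)) ^ 2 else 4 * (v + 1)) :
    ∃ V : ℝ → ℝ,
      (∀ s : ℝ, DifferentiableAt ℝ V s ∧ DifferentiableAt ℝ (deriv V) s) ∧
      (∀ s : ℝ, deriv (deriv V) s - 3 * deriv V s = R (V s)) ∧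
      (∀ s : ℝ, V s < -1 ∧ deriv V s < 0) ∧
      Tendsto V atBot (nhds (-1)) ∧
      Tendsto V atTop atBot := by
  exact bvp_main (bvp_R_cont hQ hR) (fun v hv => bvp_R_ge_lin hQ hR v hv)
    (fun v hv => bvp_R_neg hQ hR v hv)
end

section
/- Let V₁ and V₂ be twice differentiable functions on ℝ, each solving V'' - 3V' = R(V) on ℝ with V(s) → -1 as s → -∞ and V(s) → -∞ as s → +∞, and each strictly decreasing with values < -1. Then there exists s₀ ∈ ℝ such that V₁(s) = V₂(s + s₀) for all s ∈ ℝ; that is, the boundary value problem V'' - 3V' = R(V), V(-∞) = -1, V(+∞) = -∞ has a unique solution up to translations s ↦ s + s₀. -/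
open Real Filter Set


open scoped Classical in
noncomputable def vinvAux (V : ℝ → ℝ) (v : ℝ) : ℝ :=
  if h : ∃ s, V s = v then h.choose else 0

lemma vinvAux_spec {V : ℝ → ℝ} {v : ℝ} (h : ∃ s, V s = v) : V (vinvAux V v) = v := by
  rw [vinvAux, dif_pos h]; exact h.choose_spec


lemma aux_deriv_nonpos (V : ℝ → ℝ) (hanti : StrictAnti V)
    (hdiff : ∀ s : ℝ, DifferentiableAt ℝ V s) :
    ∀ s : ℝ, deriv V s ≤ 0 := by
  intro s
  have h := (hdiff s).hasDerivAt
  rw [hasDerivAt_iff_tendsto_slope] at h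
  refine le_of_tendsto h ?_
  filter_upwards [self_mem_nhdsWithin] with t ht
  rw [slope_def_field]
  rcases lt_or_gt_of_ne (Ne.symm ht) with h' | h'
  · exact div_nonpos_of_nonpos_of_nonneg (by nlinarith [hanti h']) (by linarith)
  · exact div_nonpos_of_nonneg_of_nonpos (by nlinarith [hanti h']) (by linarith)

lemma aux_deriv_neg (R V : ℝ → ℝ)
    (hRneg : ∀ v : ℝ, v < -1 → R v < 0)
    (hdiff : ∀ s : ℝ, DifferentiableAt ℝ V s ∧ DifferentiableAt ℝ (deriv V) s)
    (hode : ∀ s : ℝ, deriv (deriv V) s - 3 * deriv V s = R (V s))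
    (hanti : StrictAnti V) (hlt : ∀ s : ℝ, V s < -1) :
    ∀ s : ℝ, deriv V s < 0 := by
  have hnp := aux_deriv_nonpos V hanti (fun s => (hdiff s).1)
  intro s
  rcases lt_or_eq_of_le (hnp s) with h | h
  · exact h
  exfalso
  -- deriv (deriv V) s < 0
  have h2 : deriv (deriv V) s < 0 := by
    have := hode s
    have := hRneg (V s) (hlt s)
    linarith [hode s, hRneg (V s) (hlt s), h.ge]
  have hd := (hdiff s).2.hasDerivAt
  rw [hasDerivAt_iff_tendsto_slope] at hd
  have hev : ∀ᶠ t in nhdsWithin s {s}ᶜ, slope (deriv V) s t < 0 :=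
    hd.eventually (gt_mem_nhds h2)
  have hev' : ∀ᶠ t in nhdsWithin s (Iio s), slope (deriv V) s t < 0 :=
    hev.filter_mono (nhdsWithin_mono s (fun y hy => ne_of_lt hy))
  obtain ⟨t, hlt', hts⟩ := (hev'.and self_mem_nhdsWithin).exists
  rw [slope_def_field, h] at hlt'
  have hts' : t - s < 0 := by exact sub_neg.mpr hts
  have : deriv V t > 0 := by
    have := div_neg_iff.mp hlt'
    rcases this with ⟨hnum, hden⟩ | ⟨hnum, hden⟩
    · linarith
    · linarith
  exact absurd this (not_lt.mpr (hnp t))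


lemma aux_deriv_tendsto_zero (R V : ℝ → ℝ)
    (hRneg : ∀ v : ℝ, v < -1 → R v < 0)
    (hdiff : ∀ s : ℝ, DifferentiableAt ℝ V s ∧ DifferentiableAt ℝ (deriv V) s)
    (hode : ∀ s : ℝ, deriv (deriv V) s - 3 * deriv V s = R (V s))
    (hanti : StrictAnti V) (hlt : ∀ s : ℝ, V s < -1)
    (hderivneg : ∀ s : ℝ, deriv V s < 0) :
    Tendsto (deriv V) atBot (nhds 0) := by
  have hanti' : Antitone (deriv V) := by
    refine (strictAnti_of_deriv_neg ?_).antitone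
    intro x
    have := hode x
    have := hRneg (V x) (hlt x)
    have := hderivneg x
    linarith
  have hbdd : BddAbove (range (deriv V)) :=
    ⟨0, by rintro _ ⟨s, rfl⟩; exact (hderivneg s).le⟩
  have htends := tendsto_atBot_ciSup hanti' hbdd
  set L := ⨆ s, deriv V s with hL
  have hL0 : L ≤ 0 := ciSup_le fun s => (hderivneg s).le
  rcases lt_or_eq_of_le hL0 with hLneg | hLeq
  · exfalso
    have hle : ∀ s : ℝ, deriv V s ≤ L := fun s => le_ciSup hbdd s
    have hLne : L ≠ 0 := ne_of_lt hLneg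
    obtain ⟨s, hs⟩ : ∃ s : ℝ, s = (-1 - V 0) / L - 1 := ⟨_, rfl⟩
    have hsneg : s < 0 := by
      have h1 : -1 - V 0 > 0 := by linarith [hlt 0]
      have : (-1 - V 0) / L < 0 := div_neg_of_pos_of_neg h1 hLneg
      linarith
    obtain ⟨c, hc, hslope⟩ := exists_hasDerivAt_eq_slope V (deriv V) hsneg
      (fun t _ => ((hdiff t).1.continuousAt).continuousWithinAt)
      (fun t _ => (hdiff t).1.hasDerivAt)
    -- deriv V c = (V 0 - V s) / (0 - s) ≤ L
    have h2 : (V 0 - V s) / (0 - s) ≤ L := hslope ▸ hle c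
    have h3 : V 0 - V s ≤ L * (0 - s) := by
      rw [div_le_iff₀ (by linarith)] at h2
      linarith [h2]
    have h4 : V s ≥ V 0 + L * s := by linarith
    have h5 : L * s = (-1 - V 0) - L := by
      rw [hs]; field_simp
    have := hlt s
    rw [h5] at h4
    linarith
  · rwa [hLeq] at htends

lemma aux_surj (V : ℝ → ℝ)
    (hcont : Continuous V)
    (hanti : StrictAnti V)
    (hbot : Tendsto V atBot (nhds (-1))) (htop : Tendsto V atTop atBot) :
    ∀ v : ℝ, v < -1 → ∃ s, V s = v := by
  intro v hv
  obtain ⟨a, ha⟩ := (hbot.eventually (eventually_gt_nhds hv)).exists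
  obtain ⟨b, hb⟩ := (htop.eventually (eventually_lt_atBot v)).exists
  have hab : a ≤ b := by
    by_contra hab
    push_neg at hab
    exact absurd (hanti hab) (by linarith)
  have := intermediate_value_Icc' hab (hcont.continuousOn)
  obtain ⟨s, _, hs⟩ := this ⟨hb.le, ha.le⟩
  exact ⟨s, hs⟩

lemma aux_vinv_eq {V : ℝ → ℝ} (hanti : StrictAnti V) (s : ℝ) :
    vinvAux V (V s) = s :=
  hanti.injective (vinvAux_spec ⟨s, rfl⟩)

lemma aux_vinv_cont (V : ℝ → ℝ)
    (hanti : StrictAnti V) (hlt : ∀ s : ℝ, V s < -1)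
    (hsurj : ∀ v : ℝ, v < -1 → ∃ s, V s = v)
    {v : ℝ} (hv : v < -1) :
    ContinuousAt (vinvAux V) v := by
  rw [Metric.continuousAt_iff]
  intro ε hε
  set s₀ := vinvAux V v with hs₀
  have hVs₀ : V s₀ = v := vinvAux_spec (hsurj v hv)
  have h₁ : V (s₀ + ε) < v := by rw [← hVs₀]; exact hanti (by linarith)
  have h₂ : v < V (s₀ - ε) := by rw [← hVs₀]; exact hanti (by linarith)
  refine ⟨min (v - V (s₀ + ε)) (V (s₀ - ε) - v), lt_min (by linarith) (by linarith), ?_⟩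
  intro y hy
  rw [Real.dist_eq] at hy
  have habs := abs_lt.mp hy
  have hm₁ := min_le_left (v - V (s₀ + ε)) (V (s₀ - ε) - v)
  have hm₂ := min_le_right (v - V (s₀ + ε)) (V (s₀ - ε) - v)
  have hy₁ : V (s₀ + ε) < y := by linarith
  have hy₂ : y < V (s₀ - ε) := by linarith
  have hylt : y < -1 := lt_trans hy₂ (hlt _)
  have hVy : V (vinvAux V y) = y := vinvAux_spec (hsurj y hylt)
  have hlow : s₀ - ε < vinvAux V y := by
    have : V (vinvAux V y) < V (s₀ - ε) := by rw [hVy]; exact hy₂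
    exact hanti.lt_iff_gt.mp this
  have hhigh : vinvAux V y < s₀ + ε := by
    have : V (s₀ + ε) < V (vinvAux V y) := by rw [hVy]; exact hy₁
    exact hanti.lt_iff_gt.mp this
  rw [Real.dist_eq, abs_lt]
  obtain ⟨ha1, ha2⟩ := habs
  constructor <;> linarith


lemma aux_vinv_hasDeriv (V : ℝ → ℝ)
    (hdiff : ∀ s : ℝ, DifferentiableAt ℝ V s ∧ DifferentiableAt ℝ (deriv V) s)
    (hanti : StrictAnti V) (hlt : ∀ s : ℝ, V s < -1)
    (hsurj : ∀ v : ℝ, v < -1 → ∃ s, V s = v)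
    (hderivneg : ∀ s : ℝ, deriv V s < 0)
    {v : ℝ} (hv : v < -1) :
    HasDerivAt (vinvAux V) (deriv V (vinvAux V v))⁻¹ v := by
  refine HasDerivAt.of_local_left_inverse (aux_vinv_cont V hanti hlt hsurj hv)
    ((hdiff _).1.hasDerivAt) (ne_of_lt (hderivneg _)) ?_
  filter_upwards [Iio_mem_nhds hv] with y hy
  exact vinvAux_spec (hsurj y hy)

lemma aux_W_hasDeriv (R V : ℝ → ℝ)
    (hdiff : ∀ s : ℝ, DifferentiableAt ℝ V s ∧ DifferentiableAt ℝ (deriv V) s)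
    (hode : ∀ s : ℝ, deriv (deriv V) s - 3 * deriv V s = R (V s))
    (hanti : StrictAnti V) (hlt : ∀ s : ℝ, V s < -1)
    (hsurj : ∀ v : ℝ, v < -1 → ∃ s, V s = v)
    (hderivneg : ∀ s : ℝ, deriv V s < 0)
    {v : ℝ} (hv : v < -1) :
    HasDerivAt (fun w => deriv V (vinvAux V w))
      (3 + R v / deriv V (vinvAux V v)) v := by
  have hinv := aux_vinv_hasDeriv V hdiff hanti hlt hsurj hderivneg hv
  have hdd : HasDerivAt (deriv V) (deriv (deriv V) (vinvAux V v)) (vinvAux V v) :=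
    (hdiff _).2.hasDerivAt
  have hcomp := hdd.comp v hinv
  have hW : deriv V (vinvAux V v) ≠ 0 := ne_of_lt (hderivneg _)
  have hval : deriv (deriv V) (vinvAux V v) = 3 * deriv V (vinvAux V v) + R v := by
    have h := hode (vinvAux V v)
    rw [vinvAux_spec (hsurj v hv)] at h
    linarith
  refine hcomp.congr_deriv ?_
  rw [hval]
  field_simp

lemma aux_W_tendsto (V : ℝ → ℝ)
    (hanti : StrictAnti V) (hlt : ∀ s : ℝ, V s < -1)
    (hsurj : ∀ v : ℝ, v < -1 → ∃ s, V s = v)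
    (hd0 : Tendsto (deriv V) atBot (nhds 0)) :
    Tendsto (fun v => deriv V (vinvAux V v)) (nhdsWithin (-1) (Iio (-1))) (nhds 0) := by
  refine hd0.comp ?_
  rw [tendsto_atBot]
  intro M
  have hmem : Ioo (V M) (-1) ∈ nhdsWithin (-1 : ℝ) (Iio (-1)) :=
    Ioo_mem_nhdsLT_of_mem ⟨hlt M, le_refl _⟩
  filter_upwards [hmem] with y hy
  have hylt : y < -1 := hy.2
  have hVy : V (vinvAux V y) = y := vinvAux_spec (hsurj y hylt)
  have : V M < V (vinvAux V y) := by rw [hVy]; exact hy.1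
  exact (hanti.lt_iff_gt.mp this).le


lemma aux_key (R W₁ W₂ : ℝ → ℝ)
    (hRneg : ∀ v : ℝ, v < -1 → R v < 0)
    (h₁ : ∀ v : ℝ, v < -1 → W₁ v < 0 ∧ HasDerivAt W₁ (3 + R v / W₁ v) v)
    (h₂ : ∀ v : ℝ, v < -1 → W₂ v < 0 ∧ HasDerivAt W₂ (3 + R v / W₂ v) v)
    (hlim : Tendsto (fun v => W₁ v - W₂ v) (nhdsWithin (-1) (Iio (-1))) (nhds 0)) :
    ∀ v : ℝ, v < -1 → W₁ v ≤ W₂ v := by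
  set D : ℝ → ℝ := fun v => W₁ v - W₂ v with hD
  -- derivative of D
  have hDderiv : ∀ v : ℝ, v < -1 →
      HasDerivAt D ((-R v / (W₁ v * W₂ v)) * D v) v := by
    intro v hv
    have hW₁ := (h₁ v hv).1
    have hW₂ := (h₂ v hv).1
    have h := ((h₁ v hv).2).sub ((h₂ v hv).2)
    refine h.congr_deriv ?_
    have hne₁ : W₁ v ≠ 0 := ne_of_lt hW₁
    have hne₂ : W₂ v ≠ 0 := ne_of_lt hW₂
    field_simp [hD]
    ring
  have hDpos : ∀ v : ℝ, v < -1 → 0 < D v → 0 < (-R v / (W₁ v * W₂ v)) * D v := by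
    intro v hv hDv
    have hW₁ := (h₁ v hv).1
    have hW₂ := (h₂ v hv).1
    have : 0 < -R v := by linarith [hRneg v hv]
    have : 0 < W₁ v * W₂ v := mul_pos_of_neg_of_neg hW₁ hW₂
    positivity
  -- main claim
  intro v₀ hv₀
  by_contra hcon
  push_neg at hcon
  have hD₀ : 0 < D v₀ := by simp [hD]; linarith
  -- pick v₁ ∈ (v₀, -1) with D v₁ < D v₀
  have hmem : Ioo v₀ (-1 : ℝ) ∈ nhdsWithin (-1 : ℝ) (Iio (-1)) :=
    Ioo_mem_nhdsLT_of_mem ⟨hv₀, le_refl _⟩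
  have hev : ∀ᶠ v in nhdsWithin (-1 : ℝ) (Iio (-1)), D v < D v₀ :=
    hlim.eventually (gt_mem_nhds hD₀)
  obtain ⟨v₁, hv₁D, hv₁mem⟩ := (hev.and (eventually_of_mem hmem (fun x hx => hx))).exists
  obtain ⟨hv₀v₁, hv₁⟩ := hv₁mem
  -- the bad set
  set B : Set ℝ := {v | v ∈ Icc v₀ v₁ ∧ D v < D v₀} with hB
  have hv₁B : v₁ ∈ B := ⟨⟨hv₀v₁.le, le_refl _⟩, hv₁D⟩
  have hBne : B.Nonempty := ⟨v₁, hv₁B⟩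
  have hBbdd : BddBelow B := ⟨v₀, fun b hb => hb.1.1⟩
  set c := sInf B with hc
  have hcv₀ : v₀ ≤ c := le_csInf hBne (fun b hb => hb.1.1)
  have hcv₁ : c ≤ v₁ := csInf_le hBbdd hv₁B
  have hclt : c < -1 := lt_of_le_of_lt hcv₁ hv₁
  -- D continuous at each point < -1
  have hDcont : ∀ v : ℝ, v < -1 → ContinuousAt D v :=
    fun v hv => (hDderiv v hv).continuousAt
  -- step 1: D v₀ ≤ D v on [v₀, c)
  have hstep1 : ∀ v, v ∈ Ico v₀ c → D v₀ ≤ D v := by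
    intro v hv
    by_contra hlt'
    push_neg at hlt'
    have hvB : v ∈ B := ⟨⟨hv.1, hv.2.le.trans hcv₁⟩, hlt'⟩
    exact absurd (csInf_le hBbdd hvB) (not_le.mpr hv.2)
  -- step 2: D v₀ ≤ D c
  have hstep2 : D v₀ ≤ D c := by
    rcases eq_or_lt_of_le hcv₀ with heq | hlt'
    · rw [← heq]
    · have htend : Tendsto D (nhdsWithin c (Iio c)) (nhds (D c)) :=
        ((hDcont c hclt).tendsto).mono_left nhdsWithin_le_nhds
      refine ge_of_tendsto htend ?_
      filter_upwards [Ioo_mem_nhdsLT_of_mem (⟨hlt', le_refl _⟩ : c ∈ Ioc v₀ c)] with y hy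
      exact hstep1 y ⟨hy.1.le, hy.2⟩
  have hDc : 0 < D c := lt_of_lt_of_le hD₀ hstep2
  -- step 3: find ε with c + ε < -1 and D > 0 on Icc c (c+ε)
  have hevc : ∀ᶠ y in nhds c, 0 < D y := (hDcont c hclt).eventually (eventually_gt_nhds hDc)
  obtain ⟨δ, hδpos, hδ⟩ := Metric.eventually_nhds_iff.mp hevc
  set ε := min (δ / 2) ((-1 - c) / 2) with hε
  have hεpos : 0 < ε := lt_min (by linarith) (by linarith)
  have hcε : c + ε < -1 := by
    have := min_le_right (δ / 2) ((-1 - c) / 2)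
    have : ε ≤ (-1 - c)/2 := this
    linarith
  have hDposIcc : ∀ v, v ∈ Icc c (c + ε) → 0 < D v := by
    intro v hv
    apply hδ
    rw [Real.dist_eq, abs_lt]
    have := min_le_left (δ / 2) ((-1 - c) / 2)
    constructor <;> [linarith [hv.1]; skip]
    have : v - c ≤ ε := by linarith [hv.2]
    linarith
  -- step 4: D > 0 on Icc v₀ (c+ε)
  have hDpos4 : ∀ v, v ∈ Icc v₀ (c + ε) → 0 < D v := by
    intro v hv
    rcases lt_or_ge v c with h | h
    · exact lt_of_lt_of_le hD₀ (hstep1 v ⟨hv.1, h⟩)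
    · exact hDposIcc v ⟨h, hv.2⟩
  -- step 5: strict mono on Icc v₀ (c+ε)
  have hmono : StrictMonoOn D (Icc v₀ (c + ε)) := by
    apply strictMonoOn_of_deriv_pos (convex_Icc _ _)
    · intro x hx
      have hx1 : x < -1 := lt_of_le_of_lt hx.2 hcε
      exact (hDcont x hx1).continuousWithinAt
    · intro x hx
      rw [interior_Icc] at hx
      have hx1 : x < -1 := lt_of_lt_of_le hx.2 (by linarith)
      rw [(hDderiv x hx1).deriv]
      exact hDpos x hx1 (hDpos4 x ⟨hx.1.le, hx.2.le⟩)
  -- step 6: get b ∈ B with b < c + ε, derive contradiction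
  obtain ⟨b, hbB, hbc⟩ := exists_lt_of_csInf_lt hBne (show sInf B < c + ε by rw [← hc]; linarith)
  have hcb : c ≤ b := csInf_le hBbdd hbB
  rcases eq_or_lt_of_le hcb with heq | hlt'
  · rw [← heq] at hbB
    exact absurd hbB.2 (not_lt.mpr hstep2)
  · have hbmem : b ∈ Icc v₀ (c + ε) := ⟨hbB.1.1, hbc.le⟩
    have hcmem : c ∈ Icc v₀ (c + ε) := ⟨hcv₀, by linarith⟩
    have := hmono hcmem hbmem hlt'
    linarith [hbB.2, hstep2]

lemma aux_lip (R V : ℝ → ℝ)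
    (hRbd : ∀ v : ℝ, v < -1 → -2 ≤ R v ∧ R v < 0)
    (hdiff : ∀ s : ℝ, DifferentiableAt ℝ V s ∧ DifferentiableAt ℝ (deriv V) s)
    (hode : ∀ s : ℝ, deriv (deriv V) s - 3 * deriv V s = R (V s))
    (hanti : StrictAnti V) (hlt : ∀ s : ℝ, V s < -1)
    (hsurj : ∀ v : ℝ, v < -1 → ∃ s, V s = v)
    (hderivneg : ∀ s : ℝ, deriv V s < 0)
    {m M : ℝ} (hm : m ≤ M) (hM : M < -1) :
    ∃ C : NNReal, LipschitzOnWith C (fun v => deriv V (vinvAux V v)) (Icc m M) := by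
  set W : ℝ → ℝ := fun v => deriv V (vinvAux V v) with hW
  have hmlt : m < -1 := lt_of_le_of_lt hm hM
  set α := vinvAux V M with hα
  set β := vinvAux V m with hβ
  have hVα : V α = M := vinvAux_spec (hsurj M hM)
  have hVβ : V β = m := vinvAux_spec (hsurj m hmlt)
  have hαβ : α ≤ β := by
    have : V β ≤ V α := by rw [hVα, hVβ]; exact hm
    exact hanti.le_iff_ge.mp this
  have hdV : Differentiable ℝ (deriv V) := fun s => (hdiff s).2
  have hdc : Continuous (deriv V) := hdV.continuous
  obtain ⟨x₀, hx₀mem, hx₀max⟩ :=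
    isCompact_Icc.exists_isMaxOn (nonempty_Icc.mpr hαβ) hdc.continuousOn
  set μ := deriv V x₀ with hμ
  have hμneg : μ < 0 := hderivneg x₀
  have hmem : ∀ v, v ∈ Icc m M → vinvAux V v ∈ Icc α β := by
    intro v hv
    have hvlt : v < -1 := lt_of_le_of_lt hv.2 hM
    have hVv : V (vinvAux V v) = v := vinvAux_spec (hsurj v hvlt)
    constructor
    · refine hanti.le_iff_ge.mp ?_
      rw [hVv, hVα]; exact hv.2
    · refine hanti.le_iff_ge.mp ?_
      rw [hVv, hVβ]; exact hv.1
  have hWle : ∀ v, v ∈ Icc m M → W v ≤ μ := fun v hv => hx₀max (hmem v hv)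
  set C : ℝ := 3 + 2 / (-μ) with hC
  have hμpos : 0 < -μ := by linarith
  have hCpos : 0 ≤ C := by
    have : 0 ≤ 2 / -μ := by positivity
    rw [hC]; linarith
  have hbound : ∀ v ∈ Icc m M, ‖deriv W v‖ ≤ C := by
    intro v hv
    have hvlt : v < -1 := lt_of_le_of_lt hv.2 hM
    have hd := aux_W_hasDeriv R V hdiff hode hanti hlt hsurj hderivneg hvlt
    rw [hd.deriv]
    have hWv : W v < 0 := hderivneg _
    have hWvle : W v ≤ μ := hWle v hv
    have hRv := hRbd v hvlt
    rw [Real.norm_eq_abs]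
    have h1 : |R v / W v| ≤ 2 / (-μ) := by
      rw [abs_div]
      apply div_le_div₀ (by norm_num)
      · rw [abs_le]; constructor <;> linarith [hRv.1, hRv.2]
      · linarith
      · rw [abs_of_neg hWv]; linarith
    calc |3 + R v / W v| ≤ 3 + |R v / W v| := by
          calc |3 + R v / W v| ≤ |(3:ℝ)| + |R v / W v| := abs_add_le _ _
          _ = 3 + |R v / W v| := by norm_num
    _ ≤ C := by rw [hC]; linarith
  refine ⟨C.toNNReal, LipschitzOnWith.of_dist_le_mul ?_⟩
  intro x hx y hy
  have hdiffW : ∀ z ∈ Icc m M, DifferentiableAt ℝ W z := by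
    intro z hz
    exact (aux_W_hasDeriv R V hdiff hode hanti hlt hsurj hderivneg
      (lt_of_le_of_lt hz.2 hM)).differentiableAt
  have := Convex.norm_image_sub_le_of_norm_deriv_le hdiffW hbound (convex_Icc m M) hy hx
  rw [Real.dist_eq, Real.dist_eq]
  rw [Real.norm_eq_abs, Real.norm_eq_abs] at this
  rw [Real.coe_toNNReal _ hCpos]
  exact this


/-- Uniqueness up to translations: if `V₁` and `V₂` are twice differentiable
strictly decreasing solutions of `V'' - 3V' = R(V)` on `ℝ`, with values `< -1`,
`V(-∞) = -1` and `V(+∞) = -∞`, then `V₁(s) = V₂(s + s₀)` for some `s₀ ∈ ℝ`. -/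
theorem uniqueness_up_to_translation
    (Q R : ℝ → ℝ)
    (hQ : ∀ v : ℝ, v < -1 → Q v < 0 ∧ Q v - Real.exp (Q v) = v)
    (hR : ∀ v : ℝ, R v = if v < -1 then -2 * (1 - Real.exp (Q v)) ^ 2 else 4 * (v + 1))
    (V₁ V₂ : ℝ → ℝ)
    (hdiff₁ : ∀ s : ℝ, DifferentiableAt ℝ V₁ s ∧ DifferentiableAt ℝ (deriv V₁) s)
    (hdiff₂ : ∀ s : ℝ, DifferentiableAt ℝ V₂ s ∧ DifferentiableAt ℝ (deriv V₂) s)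
    (hode₁ : ∀ s : ℝ, deriv (deriv V₁) s - 3 * deriv V₁ s = R (V₁ s))
    (hode₂ : ∀ s : ℝ, deriv (deriv V₂) s - 3 * deriv V₂ s = R (V₂ s))
    (hanti₁ : StrictAnti V₁) (hanti₂ : StrictAnti V₂)
    (hlt₁ : ∀ s : ℝ, V₁ s < -1) (hlt₂ : ∀ s : ℝ, V₂ s < -1)
    (hbot₁ : Tendsto V₁ atBot (nhds (-1))) (hbot₂ : Tendsto V₂ atBot (nhds (-1)))
    (htop₁ : Tendsto V₁ atTop atBot) (htop₂ : Tendsto V₂ atTop atBot) :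
    ∃ s₀ : ℝ, ∀ s : ℝ, V₁ s = V₂ (s + s₀) := by
  have hRbd : ∀ v : ℝ, v < -1 → -2 ≤ R v ∧ R v < 0 := by
    intro v hv
    obtain ⟨hq, hqe⟩ := hQ v hv
    rw [hR v, if_pos hv]
    have h1 : Real.exp (Q v) < 1 := by rw [Real.exp_lt_one_iff]; exact hq
    have h0 : 0 < Real.exp (Q v) := Real.exp_pos _
    constructor <;> nlinarith
  have hRneg : ∀ v : ℝ, v < -1 → R v < 0 := fun v hv => (hRbd v hv).2
  -- facts about V₁
  have hdV₁ : Differentiable ℝ V₁ := fun s => (hdiff₁ s).1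
  have hd1 := aux_deriv_neg R V₁ hRneg hdiff₁ hode₁ hanti₁ hlt₁
  have hsurj1 := aux_surj V₁ hdV₁.continuous hanti₁ hbot₁ htop₁
  have ht01 := aux_deriv_tendsto_zero R V₁ hRneg hdiff₁ hode₁ hanti₁ hlt₁ hd1
  -- facts about V₂
  have hdV₂ : Differentiable ℝ V₂ := fun s => (hdiff₂ s).1
  have hd2 := aux_deriv_neg R V₂ hRneg hdiff₂ hode₂ hanti₂ hlt₂
  have hsurj2 := aux_surj V₂ hdV₂.continuous hanti₂ hbot₂ htop₂
  have ht02 := aux_deriv_tendsto_zero R V₂ hRneg hdiff₂ hode₂ hanti₂ hlt₂ hd2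
  -- the phase plane functions
  set Wf₁ : ℝ → ℝ := fun v => deriv V₁ (vinvAux V₁ v) with hWf₁
  set Wf₂ : ℝ → ℝ := fun v => deriv V₂ (vinvAux V₂ v) with hWf₂
  have hW₁ : ∀ v : ℝ, v < -1 → Wf₁ v < 0 ∧ HasDerivAt Wf₁ (3 + R v / Wf₁ v) v :=
    fun v hv => ⟨hd1 _, aux_W_hasDeriv R V₁ hdiff₁ hode₁ hanti₁ hlt₁ hsurj1 hd1 hv⟩
  have hW₂ : ∀ v : ℝ, v < -1 → Wf₂ v < 0 ∧ HasDerivAt Wf₂ (3 + R v / Wf₂ v) v :=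
    fun v hv => ⟨hd2 _, aux_W_hasDeriv R V₂ hdiff₂ hode₂ hanti₂ hlt₂ hsurj2 hd2 hv⟩
  have hWt₁ := aux_W_tendsto V₁ hanti₁ hlt₁ hsurj1 ht01
  have hWt₂ := aux_W_tendsto V₂ hanti₂ hlt₂ hsurj2 ht02
  have hlim12 : Tendsto (fun v => Wf₁ v - Wf₂ v) (nhdsWithin (-1) (Iio (-1))) (nhds 0) := by
    have := hWt₁.sub hWt₂; simpa using this
  have hlim21 : Tendsto (fun v => Wf₂ v - Wf₁ v) (nhdsWithin (-1) (Iio (-1))) (nhds 0) := by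
    have := hWt₂.sub hWt₁; simpa using this
  have hWeq : ∀ v : ℝ, v < -1 → Wf₁ v = Wf₂ v := fun v hv =>
    le_antisymm (aux_key R Wf₁ Wf₂ hRneg hW₁ hW₂ hlim12 v hv)
      (aux_key R Wf₂ Wf₁ hRneg hW₂ hW₁ hlim21 v hv)
  -- key identities
  have hid₁ : ∀ t : ℝ, deriv V₁ t = Wf₁ (V₁ t) := by
    intro t
    rw [hWf₁]
    simp only
    rw [aux_vinv_eq hanti₁ t]
  have hid₂ : ∀ t : ℝ, deriv V₂ t = Wf₂ (V₂ t) := by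
    intro t
    rw [hWf₂]
    simp only
    rw [aux_vinv_eq hanti₂ t]
  -- choose the translation
  obtain ⟨s₀, hs₀⟩ := hsurj2 (V₁ 0) (hlt₁ 0)
  refine ⟨s₀, fun s => ?_⟩
  set g : ℝ → ℝ := fun t => V₂ (t + s₀) with hg
  have hf' : ∀ t : ℝ, HasDerivAt V₁ (Wf₁ (V₁ t)) t := fun t => by
    rw [← hid₁ t]; exact (hdiff₁ t).1.hasDerivAt
  have hg' : ∀ t : ℝ, HasDerivAt g (Wf₁ (g t)) t := by
    intro t
    have h1 : HasDerivAt g (deriv V₂ (t + s₀) * 1) t :=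
      ((hdiff₂ (t + s₀)).1.hasDerivAt).comp t ((hasDerivAt_id t).add_const s₀)
    have h2 : deriv V₂ (t + s₀) = Wf₁ (g t) := by
      rw [hid₂ (t + s₀)]
      exact (hWeq _ (hlt₂ _)).symm
    rw [h2, mul_one] at h1
    exact h1
  have heq0 : V₁ 0 = g 0 := by rw [hg]; simp only; rw [zero_add, hs₀]
  -- interval setup
  set T : ℝ := |s| + 1 with hT
  have hT0 : 0 < T := by positivity
  set m : ℝ := min (V₁ T) (g T) with hm
  set M : ℝ := max (V₁ (-T)) (g (-T)) with hM
  have hmM : m ≤ M :=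
    le_trans (min_le_left _ _)
      (le_trans (hanti₁.antitone (by linarith)) (le_max_left _ _))
  have hMlt : M < -1 := max_lt (hlt₁ _) (hlt₂ _)
  obtain ⟨C, hC⟩ := aux_lip R V₁ hRbd hdiff₁ hode₁ hanti₁ hlt₁ hsurj1 hd1 hmM hMlt
  have hmemf : ∀ t ∈ Ioo (-T) T, V₁ t ∈ Icc m M := fun t ht =>
    ⟨le_trans (min_le_left _ _) (hanti₁.antitone ht.2.le),
     le_trans (hanti₁.antitone ht.1.le) (le_max_left _ _)⟩
  have hmemg : ∀ t ∈ Ioo (-T) T, g t ∈ Icc m M := by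
    intro t ht
    constructor
    · exact le_trans (min_le_right _ _) (hanti₂.antitone (by linarith [ht.2]))
    · exact le_trans (hanti₂.antitone (by linarith [ht.1])) (le_max_right _ _)
  have hcontf : ContinuousOn V₁ (Icc (-T) T) := hdV₁.continuous.continuousOn
  have hcontg : ContinuousOn g (Icc (-T) T) := by
    apply Continuous.continuousOn
    exact hdV₂.continuous.comp (continuous_id.add continuous_const)
  have hkey := ODE_solution_unique_of_mem_Icc
    (v := fun _ (x : ℝ) => Wf₁ x) (s := fun _ => Icc m M) (K := C)
    (fun _ _ => hC) (t₀ := 0) (a := -T) (b := T)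
    ⟨by linarith, by linarith⟩
    hcontf (fun t _ => hf' t) hmemf
    hcontg (fun t _ => hg' t) hmemg heq0
  exact hkey ⟨by linarith [neg_abs_le s], by linarith [le_abs_self s]⟩
end

section
/- Let V : ℝ → ℝ be a solution of V'' - 3V' = R(V) on ℝ with V < -1 everywhere, V(-∞) = -1 and V(+∞) = -∞, normalized so that V(0) = m and V'(0) = -n with n > 0. Then for all s ≥ 0 one has V'(s) = -(n + σ(s))·e^{3s}, where σ(s) = 2·∫₀^s (1 - e^{Q(V(s₁))})²·e^{-3s₁} ds₁ is a bounded increasing function on [0, ∞) with σ(0) = 0; in particular there exist constants 0 < c₁ ≤ c₂ and s₀ ≥ 0 with c₁·e^{3s} ≤ -V(s) ≤ c₂·e^{3s} for all s ≥ s₀, i.e. V(s) blows up to -∞ exactly as fast as -e^{3s}. -/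
open Real Filter Set

/-- Blow-up rate at `s = +∞`: if `V` solves `V'' - 3V' = R(V)` on `ℝ` with
`V < -1` everywhere, `V(-∞) = -1`, `V(+∞) = -∞`, normalized by `V(0) = m`,
`V'(0) = -n` with `n > 0`, then `V'(s) = -(n + σ(s)) e^{3s}` for all `s ≥ 0`,
where `σ(s) = 2 ∫₀^s (1 - e^{Q(V(s₁))})² e^{-3s₁} ds₁` is a bounded increasing
function on `[0, ∞)` with `σ(0) = 0`; in particular `V(s)` blows up to `-∞`
exactly as fast as `-e^{3s}`. -/
theorem blow_up_rate_at_infinity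
    (Q R : ℝ → ℝ)
    (hQ : ∀ v : ℝ, v < -1 → Q v < 0 ∧ Q v - Real.exp (Q v) = v)
    (hR : ∀ v : ℝ, R v = if v < -1 then -2 * (1 - Real.exp (Q v)) ^ 2 else 4 * (v + 1))
    (V : ℝ → ℝ) (m n : ℝ) (hn : 0 < n)
    (hdiff : ∀ s : ℝ, DifferentiableAt ℝ V s ∧ DifferentiableAt ℝ (deriv V) s)
    (hode : ∀ s : ℝ, deriv (deriv V) s - 3 * deriv V s = R (V s))
    (hlt : ∀ s : ℝ, V s < -1)
    (hbot : Tendsto V atBot (nhds (-1)))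
    (htop : Tendsto V atTop atBot)
    (hic : V 0 = m ∧ deriv V 0 = -n)
    (σ : ℝ → ℝ)
    (hσ : ∀ s : ℝ, σ s = 2 * ∫ s₁ in (0 : ℝ)..s,
      (1 - Real.exp (Q (V s₁))) ^ 2 * Real.exp (-3 * s₁)) :
    (∀ s : ℝ, 0 ≤ s → deriv V s = -(n + σ s) * Real.exp (3 * s)) ∧
    MonotoneOn σ (Set.Ici 0) ∧
    (∃ M : ℝ, ∀ s : ℝ, 0 ≤ s → σ s ≤ M) ∧
    σ 0 = 0 ∧
    (∃ c₁ c₂ s₀ : ℝ, 0 < c₁ ∧ c₁ ≤ c₂ ∧ 0 ≤ s₀ ∧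
      ∀ s : ℝ, s₀ ≤ s →
        c₁ * Real.exp (3 * s) ≤ -V s ∧ -V s ≤ c₂ * Real.exp (3 * s)) := by
  obtain ⟨hV0, hV'0⟩ := hic
  set f : ℝ → ℝ := fun t => (1 - Real.exp (Q (V t))) ^ 2 * Real.exp (-3 * t) with hf
  set W : ℝ → ℝ := fun t => deriv V t * Real.exp (-3 * t) with hWdef
  have hg0 : ∀ t : ℝ, 0 ≤ (1 - Real.exp (Q (V t))) ^ 2 := fun t => sq_nonneg _
  have hg1 : ∀ t : ℝ, (1 - Real.exp (Q (V t))) ^ 2 ≤ 1 := by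
    intro t
    have h1 : 0 < Real.exp (Q (V t)) := Real.exp_pos _
    have h2 : Real.exp (Q (V t)) < 1 := by
      have := (hQ (V t) (hlt t)).1
      calc Real.exp (Q (V t)) < Real.exp 0 := Real.exp_lt_exp.mpr this
        _ = 1 := Real.exp_zero
    nlinarith
  -- derivative of W
  have hW : ∀ t : ℝ, HasDerivAt W (-2 * f t) t := by
    intro t
    have h : HasDerivAt (fun u : ℝ => -3 * u) (-3) t := by
      simpa using (hasDerivAt_id t).const_mul (-3)
    have hE : HasDerivAt (fun u : ℝ => Real.exp (-3 * u)) (Real.exp (-3 * t) * -3) t := h.exp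
    have hD : HasDerivAt (deriv V) (deriv (deriv V) t) t := (hdiff t).2.hasDerivAt
    have hmul := hD.mul hE
    refine hmul.congr_deriv ?_
    have h2 : R (V t) = -2 * (1 - Real.exp (Q (V t))) ^ 2 := by
      rw [hR]; simp [hlt t]
    have h3 : deriv (deriv V) t = 3 * deriv V t + R (V t) := by linarith [hode t]
    rw [hf]
    simp only
    rw [h3, h2]
    ring
  have hderivW : ∀ t : ℝ, deriv W t = -2 * f t := fun t => (hW t).deriv
  -- measurability and integrability of f
  have hmeas : Measurable f := by
    have hEq : f = fun t => -(1/2 : ℝ) * deriv W t := by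
      funext t; rw [hderivW t]; ring
    rw [hEq]
    exact (measurable_deriv W).const_mul _
  have hcexp : Continuous fun t : ℝ => Real.exp (-3 * t) :=
    Real.continuous_exp.comp (continuous_const.mul continuous_id)
  have hmaj : ∀ a b : ℝ, IntervalIntegrable (fun t => Real.exp (-3 * t)) MeasureTheory.volume a b :=
    fun a b => hcexp.intervalIntegrable a b
  have hfint : ∀ a b : ℝ, IntervalIntegrable f MeasureTheory.volume a b := by
    intro a b
    refine (hmaj a b).mono_fun hmeas.aestronglyMeasurable ?_
    refine Filter.Eventually.of_forall fun t => ?_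
    have h1 : 0 ≤ f t := mul_nonneg (hg0 t) (Real.exp_pos _).le
    have h2 : f t ≤ Real.exp (-3 * t) := by
      simp only [hf]
      have := Real.exp_pos (-3 * t)
      nlinarith [hg1 t]
    simp only [Real.norm_eq_abs]
    rw [abs_of_nonneg h1, abs_of_nonneg (Real.exp_pos _).le]
    exact h2
  -- FTC for W
  have hFTC : ∀ a b : ℝ, ∫ t in a..b, -2 * f t = W b - W a := fun a b =>
    intervalIntegral.integral_eq_sub_of_hasDerivAt (fun t _ => hW t) ((hfint a b).const_mul (-2))
  have hσW : ∀ s : ℝ, σ s = W 0 - W s := by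
    intro s
    have h := hFTC 0 s
    rw [intervalIntegral.integral_const_mul] at h
    rw [hσ s]
    have : (∫ s₁ in (0:ℝ)..s, (1 - Real.exp (Q (V s₁))) ^ 2 * Real.exp (-3 * s₁))
        = ∫ t in (0:ℝ)..s, f t := rfl
    rw [this]
    linarith
  have hW0 : W 0 = -n := by
    simp [hWdef, hV'0]
  -- part 1
  have part1 : ∀ s : ℝ, deriv V s = -(n + σ s) * Real.exp (3 * s) := by
    intro s
    have h3 : Real.exp (-3 * s) * Real.exp (3 * s) = 1 := by
      rw [← Real.exp_add]; norm_num
    have h4 : deriv V s = W s * Real.exp (3 * s) := by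
      rw [hWdef]; simp only; rw [mul_assoc, h3, mul_one]
    have h5 : W s = -n - σ s := by
      have := hσW s; rw [hW0] at this; linarith
    rw [h4, h5]; ring
  -- monotonicity
  have hmono : MonotoneOn σ (Set.Ici 0) := by
    intro a _ b _ hab
    have h1 := hσW a
    have h2 := hσW b
    have h3 : W b - W a = ∫ t in a..b, -2 * f t := (hFTC a b).symm
    have h4 : (∫ t in a..b, -2 * f t) ≤ 0 := by
      rw [intervalIntegral.integral_const_mul]
      have h5 : 0 ≤ ∫ t in a..b, f t :=
        intervalIntegral.integral_nonneg hab
          (fun t _ => mul_nonneg (hg0 t) (Real.exp_pos _).le)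
      nlinarith
    linarith
  -- σ 0 = 0
  have hσ0 : σ 0 = 0 := by
    rw [hσ 0, intervalIntegral.integral_same, mul_zero]
  have hσnn : ∀ s : ℝ, 0 ≤ s → 0 ≤ σ s := by
    intro s hs
    have := hmono (Set.self_mem_Ici) (Set.mem_Ici.mpr hs) hs
    rw [hσ0] at this; exact this
  -- bound
  have hbound : ∀ s : ℝ, 0 ≤ s → σ s ≤ 2 / 3 := by
    intro s hs
    have hcmp : (∫ t in (0:ℝ)..s, f t) ≤ ∫ t in (0:ℝ)..s, Real.exp (-3 * t) := by
      apply intervalIntegral.integral_mono_on hs (hfint 0 s) (hmaj 0 s)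
      intro t _
      simp only [hf]
      have := Real.exp_pos (-3 * t)
      nlinarith [hg1 t]
    have hval : (∫ t in (0:ℝ)..s, Real.exp (-3 * t)) = 1/3 - Real.exp (-3 * s) / 3 := by
      have hder : ∀ t ∈ Set.uIcc (0:ℝ) s,
          HasDerivAt (fun u : ℝ => -(Real.exp (-3 * u) / 3)) (Real.exp (-3 * t)) t := by
        intro t _
        have h : HasDerivAt (fun u : ℝ => -3 * u) (-3) t := by
          simpa using (hasDerivAt_id t).const_mul (-3)
        have := ((h.exp).div_const 3).neg
        refine this.congr_deriv ?_
        ring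
      rw [intervalIntegral.integral_eq_sub_of_hasDerivAt hder (hmaj 0 s)]
      norm_num
      ring
    have hs2 : σ s = 2 * ∫ t in (0:ℝ)..s, f t := hσ s
    have := Real.exp_pos (-3 * s)
    rw [hs2]
    nlinarith
  -- FTC for V and bounds
  have hVc : Continuous (deriv V) :=
    continuous_iff_continuousAt.mpr fun s => (hdiff s).2.continuousAt
  have hVFTC : ∀ s : ℝ, (∫ t in (0:ℝ)..s, deriv V t) = V s - V 0 := fun s =>
    intervalIntegral.integral_deriv_eq_sub (fun t _ => (hdiff t).1) (hVc.intervalIntegrable 0 s)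
  have hcexp3 : Continuous fun t : ℝ => Real.exp (3 * t) :=
    Real.continuous_exp.comp (continuous_const.mul continuous_id)
  have hexpval : ∀ s : ℝ, (∫ t in (0:ℝ)..s, Real.exp (3 * t)) = Real.exp (3 * s) / 3 - 1/3 := by
    intro s
    have hder : ∀ t ∈ Set.uIcc (0:ℝ) s,
        HasDerivAt (fun u : ℝ => Real.exp (3 * u) / 3) (Real.exp (3 * t)) t := by
      intro t _
      have h : HasDerivAt (fun u : ℝ => 3 * u) (3) t := by
        simpa using (hasDerivAt_id t).const_mul (3:ℝ)
      have := (h.exp).div_const 3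
      refine this.congr_deriv ?_
      ring
    rw [intervalIntegral.integral_eq_sub_of_hasDerivAt hder (hcexp3.intervalIntegrable 0 s)]
    norm_num
  -- bounds on V on [0, ∞)
  have hVup : ∀ s : ℝ, 0 ≤ s → -V s ≤ -m + (n + 2/3) * (Real.exp (3 * s) / 3 - 1/3) := by
    intro s hs
    have hIc : (∫ t in (0:ℝ)..s, deriv V t) ≥ ∫ t in (0:ℝ)..s, -(n + 2/3) * Real.exp (3 * t) := by
      apply intervalIntegral.integral_mono_on hs
        ((continuous_const.mul hcexp3).intervalIntegrable 0 s) (hVc.intervalIntegrable 0 s)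
      intro t ht
      rw [part1 t]
      have h1 := hσnn t ht.1
      have h2 := hbound t ht.1
      have := Real.exp_pos (3 * t)
      simp only [Pi.mul_apply]
      nlinarith
    rw [intervalIntegral.integral_const_mul, hexpval s] at hIc
    have h := hVFTC s
    rw [hV0] at h
    nlinarith
  have hVlo : ∀ s : ℝ, 0 ≤ s → -m + n * (Real.exp (3 * s) / 3 - 1/3) ≤ -V s := by
    intro s hs
    have hIc : (∫ t in (0:ℝ)..s, deriv V t) ≤ ∫ t in (0:ℝ)..s, -n * Real.exp (3 * t) := by
      apply intervalIntegral.integral_mono_on hs (hVc.intervalIntegrable 0 s)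
        ((continuous_const.mul hcexp3).intervalIntegrable 0 s)
      intro t ht
      rw [part1 t]
      have h1 := hσnn t ht.1
      have := Real.exp_pos (3 * t)
      simp only [Pi.mul_apply]
      nlinarith
    rw [intervalIntegral.integral_const_mul, hexpval s] at hIc
    have h := hVFTC s
    rw [hV0] at h
    nlinarith
  refine ⟨fun s _ => part1 s, hmono, ⟨2/3, hbound⟩, hσ0, ?_⟩
  -- blow-up constants
  set A : ℝ := max 1 (6 * (m + n/3) / n) with hA
  have hA1 : (1:ℝ) ≤ A := le_max_left _ _
  have hApos : (0:ℝ) < A := lt_of_lt_of_le one_pos hA1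
  refine ⟨n/6, |m| + (n + 2/3)/3, Real.log A / 3, by positivity, ?_, ?_, ?_⟩
  · have : (0:ℝ) ≤ |m| := abs_nonneg m
    linarith
  · have := Real.log_nonneg hA1
    linarith
  · intro s hs
    have hs0 : 0 ≤ s := le_trans (by have := Real.log_nonneg hA1; linarith) hs
    have he1 : (1:ℝ) ≤ Real.exp (3 * s) := by
      rw [← Real.exp_zero]
      exact Real.exp_le_exp.mpr (by linarith)
    have heA : A ≤ Real.exp (3 * s) := by
      have h1 : Real.exp (3 * (Real.log A / 3)) = A := by
        rw [show 3 * (Real.log A / 3) = Real.log A by ring, Real.exp_log hApos]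
      calc A = Real.exp (3 * (Real.log A / 3)) := h1.symm
        _ ≤ Real.exp (3 * s) := Real.exp_le_exp.mpr (by linarith)
    constructor
    · have h1 : 6 * (m + n/3) / n ≤ Real.exp (3 * s) := le_trans (le_max_right _ _) heA
      have h2 : 6 * (m + n/3) ≤ Real.exp (3 * s) * n := (div_le_iff₀ hn).mp h1
      have h3 := hVlo s hs0
      nlinarith
    · have h3 := hVup s hs0
      have h4 : -m ≤ |m| := neg_le_abs m
      have h5 : (0:ℝ) ≤ |m| := abs_nonneg m
      nlinarith
end

section
/- Let V : ℝ → ℝ be a solution of V'' - 3V' = R(V) on ℝ with V < -1 everywhere, strictly decreasing, V(-∞) = -1 and V(+∞) = -∞. Then for every ε ∈ (0, 1) there exists a constant C(ε) > 0 such that |V'(s)| ≤ C(ε)·e^{4(1-ε)s} for all s ≤ 0, i.e. V'(s) = O(e^{4(1-ε)s}) as s → -∞. -/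
open Real Filter Set Topology


/-- exp q ≤ 1 + q + q²/2 for q ≤ 0 -/
lemma aux_exp_le_quad {q : ℝ} (hq : q ≤ 0) : Real.exp q ≤ 1 + q + q^2/2 := by
  have key : AntitoneOn (fun x : ℝ => 1 + x + x^2/2 - Real.exp x) (Set.Iic 0) := by
    apply antitoneOn_of_deriv_nonpos (convex_Iic 0)
    · fun_prop
    · fun_prop
    · intro x hx
      rw [interior_Iic] at hx
      have : deriv (fun x : ℝ => 1 + x + x^2/2 - Real.exp x) x = 1 + x - Real.exp x := by
        have h1 : HasDerivAt (fun x : ℝ => 1 + x + x^2/2 - Real.exp x)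
            (0 + 1 + (2 * x^1 * 1)/2 - Real.exp x) x := by
          exact (((hasDerivAt_const x (1:ℝ)).add (hasDerivAt_id x)).add
            ((((hasDerivAt_id x).pow 2)).div_const 2)).sub (Real.hasDerivAt_exp x)
        rw [h1.deriv]; ring
      rw [this]
      nlinarith [Real.add_one_le_exp x]
  have := key (Set.mem_Iic.2 hq) (Set.mem_Iic.2 le_rfl) hq
  simp at this
  nlinarith

lemma aux_sq_le {q : ℝ} (h1 : -(2/3) ≤ q) (h2 : q ≤ 0) : q^2/3 ≤ Real.exp q - q - 1 := by
  have key : AntitoneOn (fun x : ℝ => Real.exp x - x - 1 - x^2/3) (Set.Icc (-(2/3)) 0) := by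
    apply antitoneOn_of_deriv_nonpos (convex_Icc _ _)
    · fun_prop
    · fun_prop
    · intro x hx
      rw [interior_Icc] at hx
      have h1 : HasDerivAt (fun x : ℝ => Real.exp x - x - 1 - x^2/3)
          (Real.exp x - 1 - 0 - (2 * x^1 * 1)/3) x :=
        (((Real.hasDerivAt_exp x).sub (hasDerivAt_id x)).sub (hasDerivAt_const x 1)).sub
          (((hasDerivAt_id x).pow 2).div_const 3)
      rw [h1.deriv]
      have := aux_exp_le_quad (le_of_lt hx.2)
      nlinarith [hx.1, hx.2]
  have := key (Set.mem_Icc.2 ⟨h1, h2⟩) (Set.mem_Icc.2 ⟨by norm_num, le_rfl⟩) h2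
  simp at this
  nlinarith

/-- 0 ≤ f(q) := -2(1-e^q)² - 4(q+1-e^q) for q ≤ 0 -/
lemma aux_f_nonneg {q : ℝ} (hq : q ≤ 0) :
    0 ≤ -2 * (1 - Real.exp q)^2 - 4 * (q + 1 - Real.exp q) := by
  have key : AntitoneOn (fun x : ℝ => -2 * (1 - Real.exp x)^2 - 4 * (x + 1 - Real.exp x))
      (Set.Iic 0) := by
    apply antitoneOn_of_deriv_nonpos (convex_Iic 0)
    · fun_prop
    · fun_prop
    · intro x hx
      rw [interior_Iic] at hx
      have h1 : HasDerivAt (fun x : ℝ => -2 * (1 - Real.exp x)^2 - 4 * (x + 1 - Real.exp x))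
          (-2 * (2 * (1 - Real.exp x)^1 * (0 - Real.exp x)) - 4 * (1 + 0 - Real.exp x)) x := by
        exact ((((hasDerivAt_const x (1:ℝ)).sub (Real.hasDerivAt_exp x)).pow 2).const_mul
          (-2)).sub ((((hasDerivAt_id x).add (hasDerivAt_const x 1)).sub
          (Real.hasDerivAt_exp x)).const_mul 4)
      rw [h1.deriv]
      nlinarith [sq_nonneg (1 - Real.exp x)]
  have := key (Set.mem_Iic.2 hq) (Set.mem_Iic.2 le_rfl) hq
  simpa using this

/-- f(q) ≤ (4/3)(-q)³ for q ≤ 0 -/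
lemma aux_f_le {q : ℝ} (hq : q ≤ 0) :
    -2 * (1 - Real.exp q)^2 - 4 * (q + 1 - Real.exp q) ≤ (4/3) * (-q)^3 := by
  have key : AntitoneOn (fun x : ℝ =>
      (4/3) * (-x)^3 - (-2 * (1 - Real.exp x)^2 - 4 * (x + 1 - Real.exp x))) (Set.Iic 0) := by
    apply antitoneOn_of_deriv_nonpos (convex_Iic 0)
    · fun_prop
    · fun_prop
    · intro x hx
      rw [interior_Iic] at hx
      have h1 : HasDerivAt (fun x : ℝ =>
          (4/3) * (-x)^3 - (-2 * (1 - Real.exp x)^2 - 4 * (x + 1 - Real.exp x)))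
          ((4/3) * (3 * (-x)^2 * (-1)) -
            (-2 * (2 * (1 - Real.exp x)^1 * (0 - Real.exp x)) - 4 * (1 + 0 - Real.exp x))) x := by
        exact ((((hasDerivAt_id x).neg.pow 3).const_mul (4/3)).sub
          (((((hasDerivAt_const x (1:ℝ)).sub (Real.hasDerivAt_exp x)).pow 2).const_mul (-2)).sub
          ((((hasDerivAt_id x).add (hasDerivAt_const x 1)).sub
          (Real.hasDerivAt_exp x)).const_mul 4)))
      rw [h1.deriv]
      have hle : 1 - Real.exp x ≤ -x := by nlinarith [Real.add_one_le_exp x]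
      have hge : 0 ≤ 1 - Real.exp x := by
        have := Real.exp_le_one_iff.2 (le_of_lt hx); linarith
      nlinarith
  have := key (Set.mem_Iic.2 hq) (Set.mem_Iic.2 le_rfl) hq
  simp only [Set.mem_Iic] at this
  simp at this
  nlinarith [this]

/-- monotone of q ↦ q - e^q on (-∞,0] -/
lemma aux_g_mono {a b : ℝ} (hab : a ≤ b) (hb : b ≤ 0) : a - Real.exp a ≤ b - Real.exp b := by
  have key : MonotoneOn (fun x : ℝ => x - Real.exp x) (Set.Iic 0) := by
    apply monotoneOn_of_deriv_nonneg (convex_Iic 0)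
    · fun_prop
    · fun_prop
    · intro x hx
      rw [interior_Iic] at hx
      have h1 : HasDerivAt (fun x : ℝ => x - Real.exp x) (1 - Real.exp x) x :=
        (hasDerivAt_id x).sub (Real.hasDerivAt_exp x)
      rw [h1.deriv]
      have := Real.exp_le_one_iff.2 (le_of_lt hx); linarith
  exact key (Set.mem_Iic.2 (hab.trans hb)) (Set.mem_Iic.2 hb) hab


lemma aux_deriv_nonpos_s15 {x : ℝ} {f : ℝ → ℝ} (hf : DifferentiableAt ℝ f x) (h : StrictAnti f) :
    deriv f x ≤ 0 := by
  have hd := hf.hasDerivAt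
  rw [hasDerivAt_iff_tendsto_slope] at hd
  refine le_of_tendsto hd ?_
  filter_upwards [self_mem_nhdsWithin] with t ht
  rw [slope_def_field]
  rcases lt_or_gt_of_ne (Set.mem_compl_singleton_iff.1 ht) with h1 | h1
  · exact div_nonpos_of_nonneg_of_nonpos (by have := h h1; linarith) (by linarith)
  · exact div_nonpos_of_nonpos_of_nonneg (by have := h h1; linarith) (by linarith)

lemma aux_right_gt {f : ℝ → ℝ} {x d : ℝ} (hf : HasDerivAt f d x) (hd : 0 < d)
    {b : ℝ} (hb : x < b) : ∃ t, x < t ∧ t ≤ b ∧ f x < f t := by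
  rw [hasDerivAt_iff_tendsto_slope] at hf
  have h1 : ∀ᶠ t in 𝓝[≠] x, 0 < slope f x t := hf.eventually (eventually_gt_nhds hd)
  have h2 : ∀ᶠ t in 𝓝[>] x, 0 < slope f x t :=
    h1.filter_mono (nhdsWithin_mono x fun t ht => ne_of_gt ht)
  have h3 : ∀ᶠ t in 𝓝[>] x, t ≤ b := by
    filter_upwards [Ioo_mem_nhdsGT_of_mem (Set.left_mem_Ico.2 hb)] with t ht
    exact le_of_lt ht.2
  obtain ⟨t, ⟨hts, htb⟩, htx⟩ := ((h2.and h3).and self_mem_nhdsWithin).exists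
  have hgt : x < t := htx
  refine ⟨t, hgt, htb, ?_⟩
  rw [slope_def_field] at hts
  have hden : 0 < t - x := by linarith
  nlinarith [mul_pos hts hden, div_mul_cancel₀ (f t - f x) (ne_of_gt hden)]

lemma aux_left_lt {f : ℝ → ℝ} {x d : ℝ} (hf : HasDerivAt f d x) (hd : 0 < d) :
    ∃ t, t < x ∧ f t < f x := by
  rw [hasDerivAt_iff_tendsto_slope] at hf
  have h1 : ∀ᶠ t in 𝓝[≠] x, 0 < slope f x t := hf.eventually (eventually_gt_nhds hd)
  have h2 : ∀ᶠ t in 𝓝[<] x, 0 < slope f x t :=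
    h1.filter_mono (nhdsWithin_mono x fun t ht => ne_of_lt ht)
  obtain ⟨t, ht1, ht2⟩ := (h2.and self_mem_nhdsWithin).exists
  have hlt : t < x := ht2
  refine ⟨t, hlt, ?_⟩
  rw [slope_def_field] at ht1
  have hden : t - x < 0 := by linarith
  nlinarith [mul_neg_of_pos_of_neg ht1 hden, div_mul_cancel₀ (f t - f x) (ne_of_lt hden)]

lemma decay_key1 (V W ρ : ℝ → ℝ) (R : ℝ → ℝ)
    (hW' : ∀ s, HasDerivAt W (3 * W s + R (V s)) s)
    (hu' : ∀ s, HasDerivAt (fun t => V t + 1) (W s) s)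
    (hρdef : ∀ s, ρ s = R (V s) - 4 * (V s + 1))
    (hρ0 : ∀ s, 0 ≤ ρ s)
    (hWle : ∀ s, W s ≤ 0)
    (hWanti : Antitone W)
    (hu : ∀ s, V s + 1 < 0) :
    ∀ s, 4 * (V s + 1) ≤ W s := by
  set z : ℝ → ℝ := fun s => W s - 4 * (V s + 1) with hzdef
  have hz' : ∀ s, HasDerivAt z (-(z s) + ρ s) s := by
    intro s
    have h := (hW' s).sub ((hu' s).const_mul 4)
    refine h.congr_deriv ?_
    rw [hzdef, hρdef]; ring
  set Z : ℝ → ℝ := fun s => Real.exp s * z s with hZdef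
  have hZ' : ∀ s, HasDerivAt Z (Real.exp s * ρ s) s := by
    intro s
    have h := (Real.hasDerivAt_exp s).mul (hz' s)
    refine h.congr_deriv ?_
    ring
  have hZmono : Monotone Z :=
    monotone_of_hasDerivAt_nonneg hZ' fun s => mul_nonneg (Real.exp_pos s).le (hρ0 s)
  have hZnonneg : ∀ s, 0 ≤ Z s := by
    intro s
    have hlow : ∀ t ≤ min s 0, Real.exp t * W 0 ≤ Z s := by
      intro t ht
      have h1 : Z t ≤ Z s := hZmono (ht.trans (min_le_left s 0))
      have h2 : W 0 ≤ z t := by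
        have h3 : W 0 ≤ W t := hWanti (ht.trans (min_le_right s 0))
        have h4 : 0 < -(4 * (V t + 1)) := by linarith [hu t]
        rw [hzdef]; dsimp only; linarith
      calc Real.exp t * W 0 ≤ Real.exp t * z t :=
            mul_le_mul_of_nonneg_left h2 (Real.exp_pos t).le
        _ = Z t := rfl
        _ ≤ Z s := h1
    have hlim : Tendsto (fun t => Real.exp t * W 0) atBot (nhds 0) := by
      have := Real.tendsto_exp_atBot.mul_const (W 0)
      simpa using this
    refine le_of_tendsto hlim ?_
    rw [eventually_atBot]
    exact ⟨min s 0, hlow⟩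
  intro s
  have := hZnonneg s
  have hz0 : 0 ≤ z s := nonneg_of_mul_nonneg_right ?_ (Real.exp_pos s)
  · rw [hzdef] at hz0; dsimp only at hz0; linarith
  · exact this

lemma decay_region (V : ℝ → ℝ) (Q : ℝ → ℝ) (c : ℝ) (hc0 : 0 < c)
    (hbot : Tendsto V atBot (nhds (-1)))
    (hq : ∀ s, Q (V s) < 0)
    (hqe : ∀ s, Q (V s) - Real.exp (Q (V s)) = V s) :
    ∃ s₁ : ℝ, s₁ ≤ 0 ∧ ∀ s ≤ s₁, -c ≤ Q (V s) := by
  have hv0 : -c - Real.exp (-c) < -1 := by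
    have := Real.add_one_lt_exp (x := -c) (by linarith)
    linarith
  have hev : ∀ᶠ s in atBot, -c - Real.exp (-c) < V s :=
    hbot.eventually (eventually_gt_nhds hv0)
  obtain ⟨a, ha⟩ := eventually_atBot.1 hev
  refine ⟨min a 0, min_le_right a 0, ?_⟩
  intro s hs
  by_contra hcon
  push_neg at hcon
  have h1 : Q (V s) - Real.exp (Q (V s)) ≤ -c - Real.exp (-c) :=
    aux_g_mono (le_of_lt hcon) (by linarith)
  have h2 := ha s (hs.trans (min_le_left a 0))
  rw [hqe s] at h1
  linarith

lemma decay_rho_eps (V ρ : ℝ → ℝ) (Q : ℝ → ℝ) (ε s₁ : ℝ) (hε0 : 0 < ε)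
    (hq : ∀ s, Q (V s) < 0)
    (hueq : ∀ s, V s + 1 = Q (V s) + 1 - Real.exp (Q (V s)))
    (hρle : ∀ s, ρ s ≤ (4/3) * (-(Q (V s)))^3)
    (hs₁ : ∀ s ≤ s₁, -(min (ε/4) (2/3)) ≤ Q (V s)) :
    ∀ s ≤ s₁, ρ s ≤ ε * (-(V s + 1)) := by
  intro s hs
  set q := Q (V s) with hqdef
  have h1 : -(min (ε/4) (2/3)) ≤ q := hs₁ s hs
  have h2 : q ≤ 0 := le_of_lt (hq s)
  have h3 : -(2/3) ≤ q := by
    have := min_le_right (ε/4) (2/3); linarith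
  have h4 : -q ≤ ε/4 := by
    have := min_le_left (ε/4) (2/3); linarith
  have h5 : q^2/3 ≤ Real.exp q - q - 1 := aux_sq_le h3 h2
  have h6 : -(V s + 1) = Real.exp q - q - 1 := by rw [hueq s]; ring
  have h7 : ρ s ≤ (4/3) * (-q)^3 := hρle s
  rw [h6]
  have h8 : (4/3) * (-q)^3 ≤ ε * (q^2/3) := by nlinarith [sq_nonneg q]
  nlinarith

lemma decay_Dpos (V W ρ : ℝ → ℝ) (R : ℝ → ℝ) (ε lam s₁ : ℝ) (hε0 : 0 < ε) (hε1 : ε < 1)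
    (hlam : lam = 4 * (1 - ε))
    (hρdef : ∀ s, ρ s = R (V s) - 4 * (V s + 1))
    (hρ0 : ∀ s, 0 ≤ ρ s)
    (hρε : ∀ s ≤ s₁, ρ s ≤ ε * (-(V s + 1)))
    (hWle : ∀ s, W s ≤ 0)
    (hu : ∀ s, V s + 1 < 0)
    (hr0 : ∀ s, 0 ≤ W s / (V s + 1)) :
    ∀ s ≤ s₁, W s / (V s + 1) ≤ lam →
      3 * ε ≤ ((3 * W s + R (V s)) * (V s + 1) - W s * W s) / (V s + 1)^2 := by
  intro s hs hrlam
  set u := V s + 1 with hudef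
  set rr := W s / u with hrrdef
  have hu0 : u < 0 := hu s
  have hune : u ≠ 0 := ne_of_lt hu0
  have hWeq : W s = rr * u := by rw [hrrdef]; field_simp
  have hReq : R (V s) = 4 * u + ρ s := by rw [hρdef]; ring
  have hsq : (0:ℝ) < u^2 := by positivity
  rw [le_div_iff₀ hsq]
  have h1 : 4 * ε ≤ (4 - rr) * (1 + rr) := by
    have h2 : 4 - rr ≥ 4 * ε := by rw [hlam] at hrlam; linarith
    have h3 : 1 + rr ≥ 1 := by have := hr0 s; rw [← hrrdef] at this; linarith
    nlinarith
  have h4 : ρ s ≤ -(ε * u) := by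
    calc ρ s ≤ ε * (-(V s + 1)) := hρε s hs
      _ = -(ε * u) := by rw [hudef]; ring
  have h5 : 0 ≤ u * (ρ s + ε * u) := by
    have := mul_nonneg (neg_nonneg.2 (le_of_lt hu0))
      (neg_nonneg.2 (show ρ s + ε * u ≤ 0 by linarith))
    nlinarith
  have hid : (3 * W s + R (V s)) * u - W s * W s
      = u^2 * ((4 - rr) * (1 + rr) - 4*ε) + u * (ρ s + ε * u) + 3 * ε * u^2 := by
    rw [hReq, hWeq]; ring
  nlinarith [mul_nonneg (le_of_lt hsq) (by linarith : (0:ℝ) ≤ (4 - rr) * (1 + rr) - 4*ε)]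

lemma decay_main (r D : ℝ → ℝ) (ε lam s₁ : ℝ) (hε0 : 0 < ε) (hlam0 : 0 < lam)
    (hr' : ∀ s, HasDerivAt r (D s) s)
    (hrcont : Continuous r)
    (hr0 : ∀ s, 0 ≤ r s)
    (hDpos : ∀ s ≤ s₁, r s ≤ lam → 3 * ε ≤ D s) :
    ∀ s ≤ s₁, lam < r s := by
  by_contra hcon
  push_neg at hcon
  obtain ⟨sstar, hsstar, hrstar⟩ := hcon
  -- Step A: find s₂ ≤ s₁ with r s₂ < lam
  obtain ⟨s₂, hs₂, hrs₂⟩ : ∃ s₂ ≤ s₁, r s₂ < lam := by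
    rcases lt_or_eq_of_le hrstar with h | h
    · exact ⟨sstar, hsstar, h⟩
    · have hd : 0 < D sstar := lt_of_lt_of_le (by linarith) (hDpos sstar hsstar (le_of_eq h))
      obtain ⟨t, ht1, ht2⟩ := aux_left_lt (hr' sstar) hd
      exact ⟨t, le_of_lt (ht1.trans_le hsstar), by rw [← h]; exact ht2⟩
  -- Step B: r < lam on all of Iic s₂
  have hB : ∀ t ≤ s₂, r t < lam := by
    intro t ht
    by_contra hcon2
    push_neg at hcon2
    have hts₂ : t < s₂ := by
      rcases lt_or_eq_of_le ht with h | h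
      · exact h
      · exfalso; rw [h] at hcon2; linarith
    set A : Set ℝ := Icc t s₂ ∩ {x | lam ≤ r x} with hA
    have hAcomp : IsCompact A :=
      isCompact_Icc.inter_right (isClosed_le continuous_const hrcont)
    have hAne : A.Nonempty := ⟨t, ⟨le_rfl, le_of_lt hts₂⟩, hcon2⟩
    set t₀ := sSup A with ht₀def
    have ht₀A : t₀ ∈ A := hAcomp.sSup_mem hAne
    have ht₀s₂ : t₀ < s₂ := by
      rcases lt_or_eq_of_le ht₀A.1.2 with h | h
      · exact h
      · exfalso; have := ht₀A.2; rw [h] at this; exact absurd this (not_le.2 hrs₂)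
    have hright : ∀ x ∈ Ioc t₀ s₂, r x < lam := by
      intro x hx
      by_contra hcon3
      push_neg at hcon3
      have hxA : x ∈ A := ⟨⟨ht₀A.1.1.trans (le_of_lt hx.1), hx.2⟩, hcon3⟩
      have : x ≤ t₀ := le_csSup hAcomp.bddAbove hxA
      exact absurd hx.1 (not_lt.2 this)
    have hrt₀ : r t₀ = lam := by
      refine le_antisymm ?_ ht₀A.2
      have htend : Tendsto r (𝓝[>] t₀) (nhds (r t₀)) :=
        (hrcont.tendsto t₀).mono_left nhdsWithin_le_nhds
      refine le_of_tendsto htend ?_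
      filter_upwards [Ioc_mem_nhdsGT_of_mem (Set.left_mem_Ico.2 ht₀s₂)] with x hx
      exact le_of_lt (hright x hx)
    have hd : 0 < D t₀ := by
      have := hDpos t₀ (ht₀A.1.2.trans hs₂) (le_of_eq hrt₀)
      linarith
    obtain ⟨x, hx1, hx2, hx3⟩ := aux_right_gt (hr' t₀) hd ht₀s₂
    rw [hrt₀] at hx3
    exact absurd hx3 (not_lt.2 (le_of_lt (hright x ⟨hx1, hx2⟩)))
  -- Step C: backward blow-up
  set φ : ℝ → ℝ := fun x => r x - 3 * ε * x with hφdef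
  have hφ' : ∀ x, HasDerivAt φ (D x - 3 * ε) x := by
    intro x
    have h := (hr' x).sub ((hasDerivAt_id x).const_mul (3 * ε))
    exact h.congr_deriv (by ring)
  have hφmono : MonotoneOn φ (Set.Iic s₂) := by
    apply monotoneOn_of_deriv_nonneg (convex_Iic s₂)
    · exact (Continuous.sub hrcont (by continuity)).continuousOn
    · intro x _
      exact (hφ' x).differentiableAt.differentiableWithinAt
    · intro x hx
      rw [interior_Iic] at hx
      rw [(hφ' x).deriv]
      have h1 := hDpos x (le_of_lt (hx.trans_le hs₂)) (le_of_lt (hB x (le_of_lt hx)))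
      linarith
  set t := s₂ - (lam + 1) / (3 * ε) with htdef
  have htle : t ≤ s₂ := by
    have : 0 < (lam + 1) / (3 * ε) := by positivity
    rw [htdef]; linarith
  have h1 : φ t ≤ φ s₂ := hφmono (Set.mem_Iic.2 htle) (Set.mem_Iic.2 le_rfl) htle
  have h2 : 3 * ε * (s₂ - t) = lam + 1 := by
    rw [htdef]; field_simp; ring
  have h3 : r t ≤ r s₂ - (lam + 1) := by
    rw [hφdef] at h1; dsimp only at h1; nlinarith
  have := hr0 t
  have := hrs₂
  linarith

lemma decay_conclusion (V W : ℝ → ℝ) (lam s₁ : ℝ) (hlam0 : 0 < lam) (hs₁0 : s₁ ≤ 0)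
    (hu : ∀ s, V s + 1 < 0)
    (hu' : ∀ s, HasDerivAt (fun t => V t + 1) (W s) s)
    (hWcont : Continuous W)
    (hVcont : Continuous V)
    (huanti : ∀ a b : ℝ, a ≤ b → V b + 1 ≤ V a + 1)
    (hWle : ∀ s, W s ≤ 0)
    (key1 : ∀ s, 4 * (V s + 1) ≤ W s)
    (hmain : ∀ s ≤ s₁, lam < W s / (V s + 1)) :
    ∃ C : ℝ, 0 < C ∧ ∀ s : ℝ, s ≤ 0 → |W s| ≤ C * Real.exp (lam * s) := by
  have hWlt : ∀ s ≤ s₁, W s < lam * (V s + 1) := by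
    intro s hs
    have h := hmain s hs
    rwa [lt_div_iff_of_neg (hu s)] at h
  set U : ℝ → ℝ := fun s => Real.exp (-lam * s) * (V s + 1) with hUdef
  have hU' : ∀ s, HasDerivAt U
      (Real.exp (-lam * s) * (-lam) * (V s + 1) + Real.exp (-lam * s) * W s) s := by
    intro s
    have hexp : HasDerivAt (fun x : ℝ => Real.exp (-lam * x)) (Real.exp (-lam * s) * (-lam)) s := by
      have := (((hasDerivAt_id s).const_mul (-lam)).exp)
      simpa using this
    have := hexp.mul (hu' s)
    exact this
  have hUanti : AntitoneOn U (Set.Iic s₁) := by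
    apply antitoneOn_of_deriv_nonpos (convex_Iic s₁)
    · exact ((Real.continuous_exp.comp (continuous_const.mul continuous_id)).mul
        (hVcont.add continuous_const)).continuousOn
    · intro x _
      exact (hU' x).differentiableAt.differentiableWithinAt
    · intro x hx
      rw [interior_Iic] at hx
      rw [(hU' x).deriv]
      have h1 := hWlt x (le_of_lt hx)
      have h2 := Real.exp_pos (-lam * x)
      nlinarith
  refine ⟨4 * (-(V 0 + 1)) * Real.exp (-lam * s₁), ?_, ?_⟩
  · have h0 := hu 0
    have he := Real.exp_pos (-lam * s₁)
    nlinarith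
  intro s hs0
  have habs : |W s| = -W s := abs_of_nonpos (hWle s)
  rw [habs]
  have hu0le : -(V s + 1) ≤ -(V 0 + 1) := by
    have := huanti s 0 hs0; linarith
  rcases le_or_gt s s₁ with hcase | hcase
  · -- far region
    have h1 : U s₁ ≤ U s := hUanti (Set.mem_Iic.2 hcase) (Set.mem_Iic.2 le_rfl) hcase
    rw [hUdef] at h1; dsimp only at h1
    have h2 : -(V s + 1) ≤ Real.exp (lam * s) * (Real.exp (-lam * s₁) * (-(V s₁ + 1))) := by
      have h3 := mul_le_mul_of_nonneg_left h1 (Real.exp_pos (lam * s)).le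
      have h4 : Real.exp (lam * s) * (Real.exp (-lam * s) * (V s + 1)) = V s + 1 := by
        rw [← mul_assoc, ← Real.exp_add]
        simp
      rw [h4] at h3
      nlinarith [Real.exp_pos (lam * s), Real.exp_pos (-lam * s₁)]
    have h5 : -(V s₁ + 1) ≤ -(V 0 + 1) := by
      have := huanti s₁ 0 hs₁0; linarith
    have h6 : -W s ≤ 4 * (-(V s + 1)) := by have := key1 s; linarith
    calc -W s ≤ 4 * (-(V s + 1)) := h6
      _ ≤ 4 * (Real.exp (lam * s) * (Real.exp (-lam * s₁) * (-(V s₁ + 1)))) := by linarith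
      _ ≤ 4 * (Real.exp (lam * s) * (Real.exp (-lam * s₁) * (-(V 0 + 1)))) := by
          gcongr
      _ = 4 * (-(V 0 + 1)) * Real.exp (-lam * s₁) * Real.exp (lam * s) := by ring
  · -- compact region
    have h6 : -W s ≤ 4 * (-(V s + 1)) := by have := key1 s; linarith
    have h7 : Real.exp (-lam * s₁) * Real.exp (lam * s) = Real.exp (lam * (s - s₁)) := by
      rw [← Real.exp_add]; ring_nf
    have h8 : (1:ℝ) ≤ Real.exp (-lam * s₁) * Real.exp (lam * s) := by
      rw [h7]
      apply Real.one_le_exp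
      nlinarith
    calc -W s ≤ 4 * (-(V s + 1)) := h6
      _ ≤ 4 * (-(V 0 + 1)) := by linarith
      _ ≤ 4 * (-(V 0 + 1)) * (Real.exp (-lam * s₁) * Real.exp (lam * s)) := by
          nlinarith [hu 0, h8]
      _ = 4 * (-(V 0 + 1)) * Real.exp (-lam * s₁) * Real.exp (lam * s) := by ring

/-- Decay rate of `V'` at `s = -∞`: if `V` solves `V'' - 3V' = R(V)` on `ℝ`,
with `V < -1` everywhere, strictly decreasing, `V(-∞) = -1`, `V(+∞) = -∞`,
then for every `ε ∈ (0,1)` there is `C(ε) > 0` with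
`|V'(s)| ≤ C(ε) e^{4(1-ε)s}` for all `s ≤ 0`. -/
theorem derivative_decay_at_minus_infinity
    (Q R : ℝ → ℝ)
    (hQ : ∀ v : ℝ, v < -1 → Q v < 0 ∧ Q v - Real.exp (Q v) = v)
    (hR : ∀ v : ℝ, R v = if v < -1 then -2 * (1 - Real.exp (Q v)) ^ 2 else 4 * (v + 1))
    (V : ℝ → ℝ)
    (hdiff : ∀ s : ℝ, DifferentiableAt ℝ V s ∧ DifferentiableAt ℝ (deriv V) s)
    (hode : ∀ s : ℝ, deriv (deriv V) s - 3 * deriv V s = R (V s))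
    (hlt : ∀ s : ℝ, V s < -1)
    (hanti : StrictAnti V)
    (hbot : Tendsto V atBot (nhds (-1)))
    (htop : Tendsto V atTop atBot) :
    ∀ ε : ℝ, 0 < ε → ε < 1 → ∃ C : ℝ, 0 < C ∧
      ∀ s : ℝ, s ≤ 0 → |deriv V s| ≤ C * Real.exp (4 * (1 - ε) * s) := by
  intro ε hε0 hε1
  have hlam0 : 0 < 4 * (1 - ε) := by nlinarith
  have hdV : ∀ s, DifferentiableAt ℝ V s := fun s => (hdiff s).1
  have hdW : ∀ s, DifferentiableAt ℝ (deriv V) s := fun s => (hdiff s).2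
  have hu : ∀ s, V s + 1 < 0 := fun s => by linarith [hlt s]
  have hq : ∀ s, Q (V s) < 0 := fun s => (hQ (V s) (hlt s)).1
  have hqe : ∀ s, Q (V s) - Real.exp (Q (V s)) = V s := fun s => (hQ (V s) (hlt s)).2
  have hRs : ∀ s, R (V s) = -2 * (1 - Real.exp (Q (V s)))^2 := fun s => by
    rw [hR]; exact if_pos (hlt s)
  have hRneg : ∀ s, R (V s) < 0 := by
    intro s
    have h1 : Real.exp (Q (V s)) < 1 := Real.exp_lt_one_iff.2 (hq s)
    rw [hRs s]; nlinarith
  have hW' : ∀ s, HasDerivAt (deriv V) (3 * deriv V s + R (V s)) s := by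
    intro s
    have h := hode s
    have h2 : deriv (deriv V) s = 3 * deriv V s + R (V s) := by linarith
    exact h2 ▸ (hdW s).hasDerivAt
  have hWle : ∀ s, deriv V s ≤ 0 := fun s => aux_deriv_nonpos_s15 (hdV s) hanti
  have hWanti : Antitone (deriv V) := by
    apply antitone_of_deriv_nonpos (fun s => hdW s)
    intro s
    rw [(hW' s).deriv]
    have := hRneg s; have := hWle s; linarith
  have hu' : ∀ s, HasDerivAt (fun t => V t + 1) (deriv V s) s := fun s =>
    (hdV s).hasDerivAt.add_const 1
  have huanti : ∀ a b : ℝ, a ≤ b → V b + 1 ≤ V a + 1 := fun a b h => by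
    have := hanti.antitone h; linarith
  -- rho
  set ρ : ℝ → ℝ := fun s => R (V s) - 4 * (V s + 1) with hρdef
  have hueq : ∀ s, V s + 1 = Q (V s) + 1 - Real.exp (Q (V s)) := fun s => by
    have := hqe s; linarith
  have hρeq : ∀ s, ρ s = -2 * (1 - Real.exp (Q (V s)))^2
      - 4 * (Q (V s) + 1 - Real.exp (Q (V s))) := by
    intro s; rw [hρdef]; dsimp only; rw [hRs s, hueq s]
  have hρ0 : ∀ s, 0 ≤ ρ s := fun s => by
    rw [hρeq s]; exact aux_f_nonneg (le_of_lt (hq s))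
  have hρle : ∀ s, ρ s ≤ (4/3) * (-(Q (V s)))^3 := fun s => by
    rw [hρeq s]; exact aux_f_le (le_of_lt (hq s))
  have key1 : ∀ s, 4 * (V s + 1) ≤ deriv V s :=
    decay_key1 V (deriv V) ρ R hW' hu' (fun _ => rfl) hρ0 hWle hWanti hu
  -- the region
  have hc0 : 0 < min (ε/4) (2/3) := by
    apply lt_min; linarith; norm_num
  obtain ⟨s₁, hs₁0, hs₁⟩ := decay_region V Q (min (ε/4) (2/3)) hc0 hbot hq hqe
  have hρε : ∀ s ≤ s₁, ρ s ≤ ε * (-(V s + 1)) :=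
    decay_rho_eps V ρ Q ε s₁ hε0 hq hueq hρle hs₁
  -- Riccati ratio
  have hr0 : ∀ s, 0 ≤ deriv V s / (V s + 1) := by
    intro s
    rw [div_nonneg_iff]
    right
    exact ⟨hWle s, le_of_lt (hu s)⟩
  have hr' : ∀ s, HasDerivAt (fun t => deriv V t / (V t + 1))
      ((fun s => ((3 * deriv V s + R (V s)) * (V s + 1) - deriv V s * deriv V s)
        / (V s + 1)^2) s) s := fun s =>
    (hW' s).div (hu' s) (ne_of_lt (hu s))
  have hrcont : Continuous (fun t => deriv V t / (V t + 1)) := by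
    apply Continuous.div
    · exact continuous_iff_continuousAt.2 fun s => (hdW s).continuousAt
    · exact continuous_iff_continuousAt.2 fun s => ((hdV s).continuousAt.add continuousAt_const)
    · exact fun s => ne_of_lt (hu s)
  have hDpos : ∀ s ≤ s₁, (fun t => deriv V t / (V t + 1)) s ≤ 4 * (1 - ε) →
      3 * ε ≤ (fun s => ((3 * deriv V s + R (V s)) * (V s + 1) - deriv V s * deriv V s)
        / (V s + 1)^2) s :=
    decay_Dpos V (deriv V) ρ R ε (4 * (1 - ε)) s₁ hε0 hε1 rfl (fun _ => rfl) hρ0 hρε hWle hu hr0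
  have hmain : ∀ s ≤ s₁, 4 * (1 - ε) < (fun t => deriv V t / (V t + 1)) s :=
    decay_main _ _ ε (4 * (1 - ε)) s₁ hε0 hlam0 hr' hrcont hr0 hDpos
  -- conclusion
  have hVcont : Continuous V := continuous_iff_continuousAt.2 fun s => (hdV s).continuousAt
  have hWcont : Continuous (deriv V) := continuous_iff_continuousAt.2 fun s => (hdW s).continuousAt
  obtain ⟨C, hC0, hC⟩ := decay_conclusion V (deriv V) (4 * (1 - ε)) s₁ hlam0 hs₁0 hu hu'
    hWcont hVcont huanti hWle key1 hmain
  exact ⟨C, hC0, hC⟩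
end

section
/- Let V : ℝ → ℝ be a solution of V'' - 3V' = R(V) on ℝ with V < -1 everywhere, V(-∞) = -1 and V(+∞) = -∞, and set G(s) = Q(V(s)) < 0. Then for every ε ∈ (0, 1) there exists a constant C(ε) > 0 such that -C(ε)·e^{2(1-ε)s} < G(s) < 0 for all s ≤ 0, and moreover |G'(s)| ≤ C(ε)·e^{2(1-ε)s} for all s ≤ 0. -/
open Real Filter Set

/- ## Helper lemmas -/

private lemma hexpneg (x : ℝ) : HasDerivAt (fun y : ℝ => exp (-y)) (-exp (-x)) x := by
  exact ((Real.hasDerivAt_exp (-x)).comp x ((hasDerivAt_id x).neg)).congr_deriv (by simp)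

private lemma mono_global {f f' : ℝ → ℝ} (hd : ∀ x, HasDerivAt f (f' x) x)
    (h : ∀ x, 0 ≤ f' x) : Monotone f :=
  monotone_of_deriv_nonneg (fun x => (hd x).differentiableAt)
    (fun x => by rw [(hd x).deriv]; exact h x)

private lemma monoOn_Iic {f f' : ℝ → ℝ} {a : ℝ} (hd : ∀ x, HasDerivAt f (f' x) x)
    (h : ∀ x < a, 0 ≤ f' x) : MonotoneOn f (Iic a) := by
  apply monotoneOn_of_deriv_nonneg (convex_Iic a)
    (fun x _ => (hd x).continuousAt.continuousWithinAt)
    (fun x _ => (hd x).differentiableAt.differentiableWithinAt)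
  intro x hx
  rw [interior_Iic] at hx
  rw [(hd x).deriv]
  exact h x hx

private lemma antiOn_Iic {f f' : ℝ → ℝ} {a : ℝ} (hd : ∀ x, HasDerivAt f (f' x) x)
    (h : ∀ x < a, f' x ≤ 0) : AntitoneOn f (Iic a) := by
  apply antitoneOn_of_deriv_nonpos (convex_Iic a)
    (fun x _ => (hd x).continuousAt.continuousWithinAt)
    (fun x _ => (hd x).differentiableAt.differentiableWithinAt)
  intro x hx
  rw [interior_Iic] at hx
  rw [(hd x).deriv]
  exact h x hx

private lemma nonneg_of_mono_tendsto {f : ℝ → ℝ} {a : ℝ} (hm : MonotoneOn f (Iic a))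
    (hl : Tendsto f atBot (nhds 0)) : ∀ s ≤ a, 0 ≤ f s := by
  intro s hs
  refine le_of_tendsto hl ?_
  filter_upwards [eventually_le_atBot s] with t ht
  exact hm (le_trans ht hs) hs ht

private lemma nonpos_of_anti_tendsto {f : ℝ → ℝ} {a : ℝ} (hm : AntitoneOn f (Iic a))
    (hl : Tendsto f atBot (nhds 0)) : ∀ s ≤ a, f s ≤ 0 := by
  intro s hs
  refine ge_of_tendsto hl ?_
  filter_upwards [eventually_le_atBot s] with t ht
  exact hm (le_trans ht hs) hs ht

private lemma nonneg_of_deriv {f f' : ℝ → ℝ} (hd : ∀ x, HasDerivAt f (f' x) x)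
    (h0 : f 0 = 0) (h : ∀ x, 0 ≤ x → 0 ≤ f' x) : ∀ x, 0 ≤ x → 0 ≤ f x := by
  intro x hx
  have hm : MonotoneOn f (Ici 0) := by
    apply monotoneOn_of_deriv_nonneg (convex_Ici 0)
      (fun y _ => (hd y).continuousAt.continuousWithinAt)
      (fun y _ => (hd y).differentiableAt.differentiableWithinAt)
    intro y hy
    rw [interior_Ici] at hy
    rw [(hd y).deriv]
    exact h y hy.le
  have := hm (self_mem_Ici) (by exact hx) hx
  rwa [h0] at this

private lemma tendsto_exp_mul_bounded {k K : ℝ} (hk : 0 < k) {Y : ℝ → ℝ}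
    (hY : ∀ᶠ s in atBot, |Y s| ≤ K) :
    Tendsto (fun s => exp (k*s) * Y s) atBot (nhds 0) := by
  have hexp : Tendsto (fun s : ℝ => exp (k*s)) atBot (nhds 0) :=
    Real.tendsto_exp_atBot.comp (tendsto_id.const_mul_atBot hk)
  have hupper : Tendsto (fun s : ℝ => K * exp (k*s)) atBot (nhds 0) := by
    simpa using hexp.const_mul K
  have hlower : Tendsto (fun s : ℝ => -(K * exp (k*s))) atBot (nhds 0) := by
    simpa using hupper.neg
  apply tendsto_of_tendsto_of_tendsto_of_le_of_le' hlower hupper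
  · filter_upwards [hY] with s hs
    have h1 : -K ≤ Y s := by have := abs_le.1 hs; linarith [this.1]
    have := mul_le_mul_of_nonneg_left h1 (exp_pos (k*s)).le
    nlinarith [exp_pos (k*s)]
  · filter_upwards [hY] with s hs
    have h1 : Y s ≤ K := (abs_le.1 hs).2
    nlinarith [exp_pos (k*s)]

/- ## Elementary inequalities -/

private lemma lemD {x : ℝ} (hx : 0 ≤ x) : x - x^2/2 ≤ 1 - exp (-x) := by
  have key := nonneg_of_deriv (f := fun y => (1 - exp (-y)) - (y - y^2/2))
    (f' := fun y => exp (-y) - 1 + y)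
    (fun y => by
      have h1 := ((hasDerivAt_const y (1:ℝ)).sub (hexpneg y)).sub
        ((hasDerivAt_id y).sub (((hasDerivAt_id y).pow 2).div_const 2))
      refine h1.congr_deriv ?_; simp only [id_eq]; ring)
    (by simp)
    (fun y hy => by
      have := Real.add_one_le_exp (-y)
      show (0:ℝ) ≤ exp (-y) - 1 + y
      linarith)
    x hx
  have key' : (0:ℝ) ≤ (1 - exp (-x)) - (x - x^2/2) := key
  linarith

private lemma lemA {x : ℝ} (hx : 0 ≤ x) : exp (-x) - 1 + x ≤ x^2/2 := by
  have key := nonneg_of_deriv (f := fun y => y^2/2 - (exp (-y) - 1 + y))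
    (f' := fun y => y - (1 - exp (-y)))
    (fun y => by
      have h1 := (((hasDerivAt_id y).pow 2).div_const 2).sub
        (((hexpneg y).sub_const 1).add (hasDerivAt_id y))
      refine h1.congr_deriv ?_; simp only [id_eq]; ring)
    (by simp)
    (fun y hy => by
      have := Real.add_one_le_exp (-y)
      show (0:ℝ) ≤ y - (1 - exp (-y))
      linarith)
    x hx
  have key' : (0:ℝ) ≤ x^2/2 - (exp (-x) - 1 + x) := key
  linarith

private lemma lemB {x : ℝ} (hx : 0 ≤ x) (hx1 : x ≤ 1) : x^2/3 ≤ exp (-x) - 1 + x := by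
  have key := nonneg_of_deriv (f := fun y => (exp (-y) - 1 + y) - (y^2/2 - y^3/6))
    (f' := fun y => (1 - exp (-y)) - (y - y^2/2))
    (fun y => by
      have h1 := (((hexpneg y).sub_const 1).add (hasDerivAt_id y)).sub
        ((((hasDerivAt_id y).pow 2).div_const 2).sub (((hasDerivAt_id y).pow 3).div_const 6))
      refine h1.congr_deriv ?_; simp only [id_eq]; ring)
    (by simp)
    (fun y hy => by
      have := lemD hy
      show (0:ℝ) ≤ (1 - exp (-y)) - (y - y^2/2)
      linarith)
    x hx
  have key' : (0:ℝ) ≤ (exp (-x) - 1 + x) - (x^2/2 - x^3/6) := key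
  nlinarith [sq_nonneg x]

private lemma lemC {x : ℝ} (hx : 0 ≤ x) : (1 - exp (-x))^2 ≤ 2*(exp (-x) - 1 + x) := by
  have key := nonneg_of_deriv (f := fun y => 2*(exp (-y) - 1 + y) - (1 - exp (-y))^2)
    (f' := fun y => 2*(1 - exp (-y)) - 2*(1 - exp (-y))*(exp (-y)))
    (fun y => by
      have h1 := ((((hexpneg y).sub_const 1).add (hasDerivAt_id y)).const_mul 2).sub
        (((hasDerivAt_const y (1:ℝ)).sub (hexpneg y)).pow 2)
      refine h1.congr_deriv ?_; simp only [Pi.sub_apply]; ring)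
    (by simp)
    (fun y hy => by
      have h1 : exp (-y) ≤ 1 := by rw [Real.exp_le_one_iff]; linarith
      have h2 : 0 < exp (-y) := Real.exp_pos _
      show (0:ℝ) ≤ 2*(1 - exp (-y)) - 2*(1 - exp (-y))*(exp (-y))
      nlinarith)
    x hx
  have key' : (0:ℝ) ≤ 2*(exp (-x) - 1 + x) - (1 - exp (-x))^2 := key
  linarith

private lemma lemPos {x : ℝ} (hx : 0 < x) : 0 < exp (-x) - 1 + x := by
  have := Real.add_one_lt_exp (x := -x) (by linarith)
  linarith

private lemma lemE {e x : ℝ} (he : 0 < e) (he8 : e ≤ 1/8) (hx : 0 ≤ x) (hxd : x ≤ 2*e) :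
    (4-2*e)*(1-2*e) * (exp (-x) - 1 + x) ≤ 2*(1 - exp (-x))^2 := by
  have hD := lemD hx
  have hA := lemA hx
  have hx2 : x ≤ 1/4 := by linarith
  have hv0 : 0 ≤ x - x^2/2 := by nlinarith
  have hu : 0 ≤ 1 - exp (-x) := by linarith
  have hsq : (x - x^2/2)^2 ≤ (1 - exp (-x))^2 := by nlinarith
  have hμ : 0 ≤ (4-2*e)*(1-2*e) := by nlinarith
  have step1 : (4-2*e)*(1-2*e) * (exp (-x) - 1 + x) ≤ (4-2*e)*(1-2*e) * (x^2/2) :=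
    mul_le_mul_of_nonneg_left hA hμ
  have step2 : (4-2*e)*(1-2*e) * (x^2/2) ≤ 2*(x - x^2/2)^2 := by
    nlinarith [mul_nonneg (mul_nonneg hx hx) (sub_nonneg.2 hxd),
      mul_nonneg (mul_nonneg hx hx) (mul_nonneg he.le (by linarith : (0:ℝ) ≤ 1 - 2*e)),
      sq_nonneg x, mul_nonneg hx hx, sq_nonneg (x*x)]
  nlinarith

private lemma φmono : MonotoneOn (fun x : ℝ => exp (-x) - 1 + x) (Ici 0) := by
  have hφd : ∀ x : ℝ, HasDerivAt (fun y : ℝ => exp (-y) - 1 + y) (1 - exp (-x)) x := by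
    intro x
    have h := ((hexpneg x).sub_const 1).add (hasDerivAt_id x)
    refine h.congr_deriv ?_
    ring
  apply monotoneOn_of_deriv_nonneg (convex_Ici 0)
    (fun y _ => (hφd y).continuousAt.continuousWithinAt)
    (fun y _ => (hφd y).differentiableAt.differentiableWithinAt)
  intro y hy
  rw [interior_Ici] at hy
  rw [(hφd y).deriv]
  have : exp (-y) ≤ 1 := by rw [Real.exp_le_one_iff]; linarith [(mem_Ioi.1 hy).le]
  linarith

/- ## Inverse function Q -/

section
variable {Q : ℝ → ℝ} (hQ : ∀ v : ℝ, v < -1 → Q v < 0 ∧ Q v - Real.exp (Q v) = v)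

private lemma hEd (x : ℝ) : HasDerivAt (fun y : ℝ => y - exp y) (1 - exp x) x :=
  (hasDerivAt_id x).sub (Real.hasDerivAt_exp x)

private lemma Emono : StrictMonoOn (fun y : ℝ => y - exp y) (Iic 0) := by
  apply strictMonoOn_of_deriv_pos (convex_Iic 0)
    (fun y _ => (hEd y).continuousAt.continuousWithinAt)
  intro y hy
  rw [interior_Iic] at hy
  rw [(hEd y).deriv]
  have : exp y < 1 := by rw [Real.exp_lt_one_iff]; exact hy
  linarith

private lemma Elt {y : ℝ} (hy : y < 0) : y - exp y < -1 := by
  have := Real.add_one_lt_exp (ne_of_lt hy)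
  linarith

include hQ in
private lemma contQ {v : ℝ} (hv : v < -1) : ContinuousAt Q v := by
  obtain ⟨hq, hEq⟩ := hQ v hv
  rw [Metric.continuousAt_iff]
  intro ε hε
  set ε' := min ε (-Q v / 2) with hε'def
  have hε' : 0 < ε' := lt_min hε (by linarith)
  have hε'le : ε' ≤ -Q v / 2 := min_le_right _ _
  have h1 : Q v - ε' < 0 := by linarith
  have h2 : Q v + ε' < 0 := by linarith
  have ha : (Q v - ε') - exp (Q v - ε') < v := by
    have := Emono (mem_Iic.2 h1.le) (mem_Iic.2 hq.le) (by linarith)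
    simpa [hEq] using this
  have hb : v < (Q v + ε') - exp (Q v + ε') := by
    have := Emono (mem_Iic.2 hq.le) (mem_Iic.2 h2.le) (by linarith)
    simpa [hEq] using this
  refine ⟨min (v - ((Q v - ε') - exp (Q v - ε'))) (((Q v + ε') - exp (Q v + ε')) - v),
    lt_min (by linarith) (by linarith), ?_⟩
  intro y hy
  rw [Real.dist_eq] at hy
  have hy1 : (Q v - ε') - exp (Q v - ε') < y := by
    have := min_le_left (v - ((Q v - ε') - exp (Q v - ε'))) (((Q v + ε') - exp (Q v + ε')) - v)
    linarith [(abs_lt.1 hy).1]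
  have hy2 : y < (Q v + ε') - exp (Q v + ε') := by
    have := min_le_right (v - ((Q v - ε') - exp (Q v - ε'))) (((Q v + ε') - exp (Q v + ε')) - v)
    linarith [(abs_lt.1 hy).2]
  have hylt : y < -1 := lt_trans hy2 (Elt h2)
  obtain ⟨hqy, hEqy⟩ := hQ y hylt
  have hk1 : Q v - ε' < Q y := by
    by_contra h
    push_neg at h
    have h2' : Q y - exp (Q y) ≤ (Q v - ε') - exp (Q v - ε') := by
      rcases eq_or_lt_of_le h with h | h
      · rw [h]
      · exact le_of_lt (Emono (mem_Iic.2 hqy.le) (mem_Iic.2 h1.le) h)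
    rw [hEqy] at h2'
    linarith
  have hk2 : Q y < Q v + ε' := by
    by_contra h
    push_neg at h
    have h2' : (Q v + ε') - exp (Q v + ε') ≤ Q y - exp (Q y) := by
      rcases eq_or_lt_of_le h with h | h
      · rw [h]
      · exact le_of_lt (Emono (mem_Iic.2 h2.le) (mem_Iic.2 hqy.le) h)
    rw [hEqy] at h2'
    linarith
  rw [Real.dist_eq, abs_lt]
  have : ε' ≤ ε := min_le_left _ _
  constructor <;> linarith

include hQ in
private lemma diffQ {v : ℝ} (hv : v < -1) : HasDerivAt Q (1 - exp (Q v))⁻¹ v := by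
  obtain ⟨hq, hEq⟩ := hQ v hv
  have h1 : exp (Q v) < 1 := by rw [Real.exp_lt_one_iff]; exact hq
  refine HasDerivAt.of_local_left_inverse (contQ hQ hv) (f := fun y : ℝ => y - exp y)
    (hEd (Q v)) (by linarith) ?_
  filter_upwards [Iio_mem_nhds hv] with y hy
  exact (hQ y hy).2
end

/- ## Main theorem -/

set_option maxHeartbeats 2000000 in
/-- Asymptotics of `G = Q ∘ V` at `s = -∞`: if `V` solves `V'' - 3V' = R(V)`
on `ℝ` with `V < -1` everywhere, `V(-∞) = -1`, `V(+∞) = -∞`, and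
`G(s) = Q(V(s)) < 0`, then for every `ε ∈ (0,1)` there is `C(ε) > 0` with
`-C(ε) e^{2(1-ε)s} < G(s) < 0` and `|G'(s)| ≤ C(ε) e^{2(1-ε)s}` for all `s ≤ 0`. -/
theorem G_asymptotics_at_minus_infinity
    (Q R : ℝ → ℝ)
    (hQ : ∀ v : ℝ, v < -1 → Q v < 0 ∧ Q v - Real.exp (Q v) = v)
    (hR : ∀ v : ℝ, R v = if v < -1 then -2 * (1 - Real.exp (Q v)) ^ 2 else 4 * (v + 1))
    (V : ℝ → ℝ)
    (hdiff : ∀ s : ℝ, DifferentiableAt ℝ V s ∧ DifferentiableAt ℝ (deriv V) s)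
    (hode : ∀ s : ℝ, deriv (deriv V) s - 3 * deriv V s = R (V s))
    (hlt : ∀ s : ℝ, V s < -1)
    (hbot : Tendsto V atBot (nhds (-1)))
    (htop : Tendsto V atTop atBot)
    (G : ℝ → ℝ) (hG : ∀ s : ℝ, G s = Q (V s)) :
    ∀ ε : ℝ, 0 < ε → ε < 1 → ∃ C : ℝ, 0 < C ∧
      ∀ s : ℝ, s ≤ 0 →
        (-C * Real.exp (2 * (1 - ε) * s) < G s ∧ G s < 0) ∧
        |deriv G s| ≤ C * Real.exp (2 * (1 - ε) * s) := by
  intro ε hε0 hε1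
  -- basic facts
  have hg : ∀ s, G s < 0 := fun s => by rw [hG]; exact (hQ _ (hlt s)).1
  have hEG : ∀ s, G s - exp (G s) = V s := fun s => by rw [hG]; exact (hQ _ (hlt s)).2
  have hW : ∀ s, V s + 1 < 0 := fun s => by linarith [hlt s]
  have hexpG : ∀ s, exp (G s) < 1 := fun s => by rw [Real.exp_lt_one_iff]; exact hg s
  have hGpos : ∀ s, 0 < 1 - exp (G s) := fun s => by linarith [hexpG s]
  have hdV : ∀ s, HasDerivAt V (deriv V s) s := fun s => (hdiff s).1.hasDerivAt
  have hdVV : ∀ s, HasDerivAt (deriv V) (deriv (deriv V) s) s := fun s => (hdiff s).2.hasDerivAt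
  obtain ⟨F, hFdef⟩ : ∃ F : ℝ → ℝ, F = fun s => -2*(1 - exp (G s))^2 := ⟨_, rfl⟩
  have hV'' : ∀ s, deriv (deriv V) s = 3 * deriv V s + F s := by
    intro s
    have h1 := hode s
    rw [hR (V s), if_pos (hlt s), ← hG s] at h1
    simp only [hFdef]
    linarith
  have hFrange : ∀ s, -2 ≤ F s ∧ F s ≤ 0 := by
    intro s
    have h1 : 0 < 1 - exp (G s) := hGpos s
    have h2 : 1 - exp (G s) ≤ 1 := by linarith [Real.exp_pos (G s)]
    constructor
    · simp only [hFdef]; nlinarith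
    · simp only [hFdef]; nlinarith
  -- derivative of G
  have hGd : ∀ s, HasDerivAt G ((1 - exp (G s))⁻¹ * deriv V s) s := by
    intro s
    have h1 : HasDerivAt Q (1 - exp (Q (V s)))⁻¹ (V s) := diffQ hQ (hlt s)
    have h2 := h1.comp s (hdV s)
    have h3 : Q ∘ V = G := by funext t; simp [Function.comp, hG t]
    rw [← hG s] at h2
    rw [h3] at h2
    exact h2
  have hderivG : ∀ s, deriv G s = (1 - exp (G s))⁻¹ * deriv V s := fun s => (hGd s).deriv
  -- x := -G s substitution facts
  have hsub : ∀ s, exp (-(-G s)) - 1 + (-G s) = -(V s + 1) := by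
    intro s
    rw [neg_neg]
    linarith [hEG s]
  -- ## Step 3 : crude bound on deriv V on Iic 0
  have crude : ∀ s ≤ 0, |deriv V s| ≤ |deriv V 0| + 2/3 := by
    have hPd : ∀ s, HasDerivAt (fun t => exp (-(3*t)) * deriv V t) (exp (-(3*s)) * F s) s := by
      intro s
      have hexp3 : HasDerivAt (fun t : ℝ => exp (-(3*t))) (-3 * exp (-(3*s))) s := by
        have h := (Real.hasDerivAt_exp (-(3*s))).comp s
          (((hasDerivAt_id s).const_mul 3).neg)
        refine h.congr_deriv ?_
        ring
      have h := hexp3.mul (hdVV s)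
      rw [hV'' s] at h
      refine h.congr_deriv ?_
      ring
    have hm1 : Monotone (fun t => -(2/3)*exp (-(3*t)) + exp (-(3*t)) * deriv V t) := by
      apply mono_global (f' := fun s => 2*exp (-(3*s)) + exp (-(3*s)) * F s)
      · intro s
        have hexp3 : HasDerivAt (fun t : ℝ => -(2/3)*exp (-(3*t))) (2 * exp (-(3*s))) s := by
          have h := ((Real.hasDerivAt_exp (-(3*s))).comp s
            (((hasDerivAt_id s).const_mul 3).neg)).const_mul (-(2/3))
          refine h.congr_deriv ?_
          ring
        exact hexp3.add (hPd s)
      · intro s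
        have := (hFrange s).1
        nlinarith [exp_pos (-(3*s))]
    have hm2 : Monotone (fun t => -(2/3)*exp (-(3*t)) - exp (-(3*t)) * deriv V t) := by
      apply mono_global (f' := fun s => 2*exp (-(3*s)) - exp (-(3*s)) * F s)
      · intro s
        have hexp3 : HasDerivAt (fun t : ℝ => -(2/3)*exp (-(3*t))) (2 * exp (-(3*s))) s := by
          have h := ((Real.hasDerivAt_exp (-(3*s))).comp s
            (((hasDerivAt_id s).const_mul 3).neg)).const_mul (-(2/3))
          refine h.congr_deriv ?_
          ring
        exact hexp3.sub (hPd s)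
      · intro s
        have := (hFrange s).2
        nlinarith [exp_pos (-(3*s))]
    intro s hs
    have h1 := hm1 hs
    have h2 := hm2 hs
    simp only at h1 h2
    have e0 : exp (-(3*(0:ℝ))) = 1 := by norm_num
    rw [e0] at h1 h2
    have hprod : exp (3*s) * exp (-(3*s)) = 1 := by
      rw [← Real.exp_add]; norm_num
    have hle1 : exp (3*s) ≤ 1 := by
      rw [Real.exp_le_one_iff]; linarith
    have hpos : 0 < exp (3*s) := exp_pos _
    -- from h1 : -(2/3)*exp(-(3s)) + exp(-(3s))*V' s ≤ -(2/3) + V' 0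
    have k1 : exp (3*s) * (exp (-(3*s)) * deriv V s) ≤ exp (3*s) * ((2/3)*exp (-(3*s)) - 2/3 + deriv V 0) := by
      apply mul_le_mul_of_nonneg_left _ hpos.le
      linarith
    have k2 : exp (3*s) * (-(exp (-(3*s)) * deriv V s)) ≤ exp (3*s) * ((2/3)*exp (-(3*s)) - 2/3 - deriv V 0) := by
      apply mul_le_mul_of_nonneg_left _ hpos.le
      linarith
    have lhs_eq : exp (3*s) * (exp (-(3*s)) * deriv V s) = deriv V s := by
      rw [← mul_assoc, hprod, one_mul]
    have hint1 := mul_nonneg hpos.le (sub_nonneg.2 (le_abs_self (deriv V 0)))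
    have hint2 := mul_nonneg hpos.le (sub_nonneg.2 (neg_abs_le (deriv V 0)))
    have hint3 := mul_nonneg (sub_nonneg.2 hle1) (abs_nonneg (deriv V 0))
    rw [abs_le]
    constructor
    · nlinarith [k2, hprod, lhs_eq]
    · nlinarith [k1, hprod, lhs_eq]
  -- V + 1 tends to 0 at -infty
  have hWlim : Tendsto (fun s => V s + 1) atBot (nhds 0) := by
    have h := hbot.add_const 1
    simpa using h
  have hWsmall : ∀ η : ℝ, 0 < η → ∀ᶠ s in atBot, |V s + 1| < η := by
    intro η hη
    have h := Metric.tendsto_nhds.1 hWlim η hη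
    simpa [Real.dist_eq] using h
  -- ## Step 4 : exponential upper bound V + 1 ≤ (V 0 + 1) e^{4s}
  have hFW : ∀ s, 4*(V s + 1) ≤ F s := by
    intro s
    have h := lemC (x := -G s) (by linarith [hg s])
    rw [neg_neg] at h
    simp only [hFdef]
    nlinarith [hEG s]
  have hY4d : ∀ s, HasDerivAt (fun t => exp t * (deriv V t - 4*(V t + 1)))
      (exp s * (F s - 4*(V s + 1))) s := by
    intro s
    have h := (Real.hasDerivAt_exp s).mul ((hdVV s).sub (((hdV s).add_const 1).const_mul 4))
    rw [hV'' s] at h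
    refine h.congr_deriv ?_
    simp only [Pi.sub_apply]
    ring
  have hZ4mono : Monotone (fun t => exp t * (deriv V t - 4*(V t + 1))) :=
    mono_global hY4d (fun s => mul_nonneg (exp_pos s).le (by linarith [hFW s]))
  have hZ4lim : Tendsto (fun t => exp t * (deriv V t - 4*(V t + 1))) atBot (nhds 0) := by
    have hbd : ∀ᶠ t in atBot, |deriv V t - 4*(V t + 1)| ≤ |deriv V 0| + 2/3 + 4 := by
      filter_upwards [hWsmall 1 one_pos, eventually_le_atBot 0] with t h1 h2
      have h3 := crude t h2
      rw [abs_le] at h3 ⊢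
      have h4 := abs_lt.1 h1
      constructor <;> [linarith [h3.1, h4.2]; linarith [h3.2, h4.1]]
    have h := tendsto_exp_mul_bounded (k := 1) one_pos hbd
    simpa using h
  have hY4 : ∀ s, 4*(V s + 1) ≤ deriv V s := by
    intro s
    have h := nonneg_of_mono_tendsto (hZ4mono.monotoneOn _) hZ4lim s le_rfl
    nlinarith [exp_pos s]
  have hZ5d : ∀ s, HasDerivAt (fun t => exp (-(4*t)) * (V t + 1))
      (exp (-(4*s)) * (deriv V s - 4*(V s + 1))) s := by
    intro s
    have hexp4 : HasDerivAt (fun t : ℝ => exp (-(4*t))) (-4 * exp (-(4*s))) s := by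
      have h := (Real.hasDerivAt_exp (-(4*s))).comp s (((hasDerivAt_id s).const_mul 4).neg)
      refine h.congr_deriv ?_
      ring
    have h := hexp4.mul ((hdV s).add_const 1)
    refine h.congr_deriv ?_
    ring
  have hZ5mono : Monotone (fun t => exp (-(4*t)) * (V t + 1)) :=
    mono_global hZ5d (fun s => mul_nonneg (exp_pos _).le (by linarith [hY4 s]))
  have hWub : ∀ s ≤ 0, V s + 1 ≤ (V 0 + 1) * exp (4*s) := by
    intro s hs
    have h := hZ5mono hs
    simp only at h
    have e0 : exp (-(4*(0:ℝ))) = 1 := by norm_num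
    rw [e0, one_mul] at h
    have hprod : exp (4*s) * exp (-(4*s)) = 1 := by rw [← Real.exp_add]; norm_num
    have h2 := mul_le_mul_of_nonneg_left h (exp_pos (4*s)).le
    rw [← mul_assoc, hprod, one_mul] at h2
    rw [mul_comm]
    exact h2
  -- ## Step 5 : smallness region
  obtain ⟨e, hedef⟩ : ∃ e : ℝ, e = min ε (1/8) := ⟨_, rfl⟩
  have he0 : 0 < e := hedef ▸ lt_min hε0 (by norm_num)
  have he8 : e ≤ 1/8 := hedef ▸ min_le_right _ _
  have heε : e ≤ ε := hedef ▸ min_le_left _ _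
  have hφδ : 0 < exp (-(2*e)) - 1 + 2*e := lemPos (by linarith)
  obtain ⟨s₁', hs₁'⟩ := eventually_atBot.1 (hWsmall (exp (-(2*e)) - 1 + 2*e) hφδ)
  obtain ⟨s₁, hs₁def⟩ : ∃ s₁ : ℝ, s₁ = min s₁' 0 := ⟨_, rfl⟩
  have hs₁0 : s₁ ≤ 0 := hs₁def ▸ min_le_right _ _
  have hsmall : ∀ s ≤ s₁, -G s ≤ 2*e := by
    intro s hs
    by_contra hcon
    push_neg at hcon
    have h1 := hs₁' s (le_trans hs (hs₁def ▸ min_le_left s₁' 0))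
    have h2 : exp (-(2*e)) - 1 + 2*e ≤ exp (-(-G s)) - 1 + (-G s) :=
      φmono (mem_Ici.2 (by linarith)) (mem_Ici.2 (by linarith [hg s])) hcon.le
    rw [hsub s] at h2
    have h3 : |V s + 1| = -(V s + 1) := abs_of_neg (hW s)
    linarith [h1, h2, h3.symm.le]
  -- ## Step 6 : refined lower bound  V + 1 ≥ -(A₁) e^{lam s} on Iic s₁
  obtain ⟨lam, hlamdef⟩ : ∃ l : ℝ, l = 4 - 2*e := ⟨_, rfl⟩
  have hlam3 : lam - 3 = 1 - 2*e := by rw [hlamdef]; ring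
  have hlampos : 0 < lam - 3 := by rw [hlam3]; linarith
  have hFmuW : ∀ s ≤ s₁, F s ≤ (4-2*e)*(1-2*e) * (V s + 1) := by
    intro s hs
    have h := lemE he0 he8 (x := -G s) (by linarith [hg s]) (hsmall s hs)
    rw [neg_neg] at h
    have h2 : exp (G s) - 1 + -G s = -(V s + 1) := by linarith [hEG s]
    rw [h2] at h
    simp only [hFdef]
    linarith
  -- Zb = e^{(lam-3)s} (V' - lam (V+1)) is antitone on Iic s₁ with limit 0
  have hZbd : ∀ s, HasDerivAt (fun t => exp ((lam-3)*t) * (deriv V t - lam*(V t + 1)))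
      (exp ((lam-3)*s) * (F s - (4-2*e)*(1-2*e)*(V s + 1))) s := by
    intro s
    have hexpk : HasDerivAt (fun t : ℝ => exp ((lam-3)*t)) ((lam-3) * exp ((lam-3)*s)) s := by
      have h := (Real.hasDerivAt_exp ((lam-3)*s)).comp s ((hasDerivAt_id s).const_mul (lam-3))
      refine h.congr_deriv ?_
      ring
    have h := hexpk.mul ((hdVV s).sub (((hdV s).add_const 1).const_mul lam))
    rw [hV'' s] at h
    refine h.congr_deriv ?_
    simp only [Pi.sub_apply]
    rw [hlamdef]
    ring
  have hZbanti : AntitoneOn (fun t => exp ((lam-3)*t) * (deriv V t - lam*(V t + 1))) (Iic s₁) :=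
    antiOn_Iic hZbd (fun x hx =>
      mul_nonpos_of_nonneg_of_nonpos (exp_pos _).le (by linarith [hFmuW x hx.le]))
  have hZblim : Tendsto (fun t => exp ((lam-3)*t) * (deriv V t - lam*(V t + 1))) atBot (nhds 0) := by
    apply tendsto_exp_mul_bounded (K := |deriv V 0| + 2/3 + 4) hlampos
    filter_upwards [hWsmall 1 one_pos, eventually_le_atBot 0] with t h1 h2
    have h3 := crude t h2
    have h4 := abs_lt.1 h1
    have hlam4 : lam ≤ 4 := by rw [hlamdef]; linarith
    have hlam0 : 0 < lam := by rw [hlamdef]; linarith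
    rw [abs_le] at h3 ⊢
    have hb1 : lam*(V t + 1) ≤ 4 := by nlinarith [h4.1, h4.2]
    have hb2 : -4 ≤ lam*(V t + 1) := by nlinarith [h4.1, h4.2]
    exact ⟨by linarith [h3.1, hb1], by linarith [h3.2, hb2]⟩
  have hYneg : ∀ s ≤ s₁, deriv V s ≤ lam*(V s + 1) := by
    intro s hs
    have h := nonpos_of_anti_tendsto hZbanti hZblim s hs
    nlinarith [exp_pos ((lam-3)*s)]
  -- Z6 antitone
  have hZ6d : ∀ s, HasDerivAt (fun t => exp (-(lam*t)) * (V t + 1))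
      (exp (-(lam*s)) * (deriv V s - lam*(V s + 1))) s := by
    intro s
    have hexpk : HasDerivAt (fun t : ℝ => exp (-(lam*t))) (-lam * exp (-(lam*s))) s := by
      have h := (Real.hasDerivAt_exp (-(lam*s))).comp s (((hasDerivAt_id s).const_mul lam).neg)
      refine h.congr_deriv ?_
      ring
    have h := hexpk.mul ((hdV s).add_const 1)
    refine h.congr_deriv ?_
    ring
  have hZ6anti : AntitoneOn (fun t => exp (-(lam*t)) * (V t + 1)) (Iic s₁) :=
    antiOn_Iic hZ6d (fun x hx =>
      mul_nonpos_of_nonneg_of_nonpos (exp_pos _).le (by linarith [hYneg x hx.le]))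
  obtain ⟨A₁, hA₁def⟩ : ∃ A : ℝ, A = -(V s₁ + 1) * exp (-(lam*s₁)) := ⟨_, rfl⟩
  have hA₁pos : 0 < A₁ := by
    rw [hA₁def]
    exact mul_pos (by linarith [hW s₁]) (exp_pos _)
  have hWlb : ∀ s ≤ s₁, -A₁ * exp (lam*s) ≤ V s + 1 := by
    intro s hs
    have h := hZ6anti (mem_Iic.2 hs) (mem_Iic.2 (le_refl s₁)) hs
    simp only at h
    have h2 := mul_le_mul_of_nonneg_left h (exp_pos (lam*s)).le
    have hprod : exp (lam*s) * exp (-(lam*s)) = 1 := by rw [← Real.exp_add]; norm_num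
    rw [← mul_assoc, ← mul_assoc, hprod, one_mul] at h2
    have heq : -A₁ * exp (lam*s) = exp (lam*s) * exp (-(lam*s₁)) * (V s₁ + 1) := by
      rw [hA₁def]
      ring
    linarith [h2, heq.le, heq.ge]
  have hlampos' : 0 < lam := by rw [hlamdef]; linarith
  have hV'bound : ∀ s ≤ s₁, |deriv V s| ≤ 4*A₁*exp (lam*s) := by
    intro s hs
    have h1 := hY4 s
    have h2 := hYneg s hs
    have h3 := hWlb s hs
    have hVs := hW s
    rw [abs_le]
    constructor
    · linarith
    · have k1 : lam*(V s + 1) ≤ 0 := mul_nonpos_of_nonneg_of_nonpos hlampos'.le (by linarith)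
      have k2 : 0 ≤ 4*A₁*exp (lam*s) := by positivity
      linarith
  -- ## Step 7 : bounds in terms of G on Iic s₁
  obtain ⟨r, hrdef⟩ : ∃ r : ℝ, r = lam - 2 := ⟨_, rfl⟩
  have hrpos : 0 < r := by rw [hrdef, hlamdef]; linarith
  have ha : ∀ s ≤ s₁, -G s ≤ Real.sqrt (3*A₁) * exp ((lam/2)*s) := by
    intro s hs
    have hx0 : 0 ≤ -G s := by linarith [hg s]
    have hx1 : -G s ≤ 1 := le_trans (hsmall s hs) (by linarith)
    have hB := lemB hx0 hx1
    rw [hsub s] at hB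
    have h3 := hWlb s hs
    have hsq : (-G s)^2 ≤ 3*A₁*exp (lam*s) := by linarith
    have hexph : exp (lam*s) = (exp ((lam/2)*s))^2 := by
      rw [sq, ← Real.exp_add]
      ring_nf
    have hsq2 : (-G s)^2 ≤ (Real.sqrt (3*A₁) * exp ((lam/2)*s))^2 := by
      rw [mul_pow, Real.sq_sqrt (by positivity : (0:ℝ) ≤ 3*A₁), ← hexph]
      exact hsq
    calc -G s = Real.sqrt ((-G s)^2) := (Real.sqrt_sq hx0).symm
      _ ≤ Real.sqrt ((Real.sqrt (3*A₁) * exp ((lam/2)*s))^2) := Real.sqrt_le_sqrt hsq2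
      _ = Real.sqrt (3*A₁) * exp ((lam/2)*s) := Real.sqrt_sq (by positivity)
  have hc0 : (0:ℝ) < -(V 0 + 1) := by linarith [hW 0]
  obtain ⟨Kc, hKcdef⟩ : ∃ K : ℝ, K = Real.sqrt (2*(-(V 0 + 1))) := ⟨_, rfl⟩
  have hKcpos : 0 < Kc := hKcdef ▸ Real.sqrt_pos.2 (by linarith)
  have hxlb : ∀ s ≤ s₁, Kc * exp (2*s) ≤ -G s := by
    intro s hs
    have hx0 : 0 ≤ -G s := by linarith [hg s]
    have hA' := lemA (x := -G s) hx0
    rw [hsub s] at hA'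
    have hub := hWub s (le_trans hs hs₁0)
    have hsq : (Kc * exp (2*s))^2 ≤ (-G s)^2 := by
      rw [hKcdef, mul_pow, Real.sq_sqrt (by linarith : (0:ℝ) ≤ 2*(-(V 0 + 1)))]
      have h4 : (exp (2*s))^2 = exp (4*s) := by
        rw [sq, ← Real.exp_add]
        ring_nf
      rw [h4]
      linarith
    calc Kc * exp (2*s)
        = Real.sqrt ((Kc * exp (2*s))^2) := (Real.sqrt_sq (by positivity)).symm
      _ ≤ Real.sqrt ((-G s)^2) := Real.sqrt_le_sqrt hsq
      _ = -G s := Real.sqrt_sq hx0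
  have hden : ∀ s ≤ s₁, (3/4) * (Kc * exp (2*s)) ≤ 1 - exp (G s) := by
    intro s hs
    have hx0 : 0 ≤ -G s := by linarith [hg s]
    have hx14 : -G s ≤ 1/4 := le_trans (hsmall s hs) (by linarith)
    have hD := lemD (x := -G s) hx0
    rw [neg_neg] at hD
    have step : (3/4)*(-G s) ≤ 1 - exp (G s) := by nlinarith [hx0, hx14, hD]
    have := hxlb s hs
    linarith
  have hdGbound : ∀ s ≤ s₁,
      |deriv G s| ≤ (16*A₁/(3*Kc)) * exp (r*s) := by
    intro s hs
    rw [hderivG s, abs_mul, abs_of_pos (inv_pos.2 (hGpos s))]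
    have h1 := hV'bound s hs
    have h2 : (1 - exp (G s))⁻¹ ≤ ((3/4) * (Kc * exp (2*s)))⁻¹ := by
      apply inv_anti₀ (by positivity) (hden s hs)
    have h3 : (1 - exp (G s))⁻¹ * |deriv V s| ≤
        ((3/4) * (Kc * exp (2*s)))⁻¹ * (4*A₁*exp (lam*s)) := by
      apply mul_le_mul h2 h1 (abs_nonneg _) (by positivity)
    refine le_trans h3 (le_of_eq ?_)
    have hexpr : exp (lam*s) = exp (r*s) * exp (2*s) := by
      rw [← Real.exp_add, hrdef]
      ring_nf
    rw [hexpr]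
    field_simp
    ring
  -- ## Step 8 : compact part and conclusion
  have hGcont : Continuous G := by
    have : Differentiable ℝ G := fun s => (hGd s).differentiableAt
    exact this.continuous
  have hV'cont : Continuous (deriv V) := by
    have : Differentiable ℝ (deriv V) := fun s => (hdiff s).2
    exact this.continuous
  have hdGcont : Continuous (deriv G) := by
    have heq : deriv G = fun s => (1 - exp (G s))⁻¹ * deriv V s := funext hderivG
    rw [heq]
    exact ((continuous_const.sub (Real.continuous_exp.comp hGcont)).inv₀
      (fun s => (hGpos s).ne')).mul hV'cont
  obtain ⟨MG, hMG⟩ := (isCompact_Icc (a := s₁) (b := 0)).exists_bound_of_continuousOn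
    hGcont.continuousOn
  obtain ⟨MG', hMG'⟩ := (isCompact_Icc (a := s₁) (b := 0)).exists_bound_of_continuousOn
    hdGcont.continuousOn
  have hMGnn : 0 ≤ MG := le_trans (norm_nonneg (G s₁)) (hMG s₁ (mem_Icc.2 ⟨le_refl _, hs₁0⟩))
  have hMG'nn : 0 ≤ MG' := le_trans (norm_nonneg (deriv G s₁))
    (hMG' s₁ (mem_Icc.2 ⟨le_refl _, hs₁0⟩))
  obtain ⟨Cb, hCbdef⟩ : ∃ C : ℝ, C = Real.sqrt (3*A₁) + 16*A₁/(3*Kc)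
      + (MG + MG') * exp (-(r*s₁)) := ⟨_, rfl⟩
  have hCb0 : 0 ≤ Cb := by
    rw [hCbdef]
    have h1 : 0 ≤ Real.sqrt (3*A₁) := Real.sqrt_nonneg _
    have h2 : 0 ≤ 16*A₁/(3*Kc) := by positivity
    have h3 : 0 ≤ (MG + MG') * exp (-(r*s₁)) := by positivity
    linarith
  -- uniform bounds on Iic 0 with rate r
  have hGbound0 : ∀ s ≤ 0, -G s ≤ Cb * exp (r*s) := by
    intro s hs
    have hexpnn : 0 < exp (r*s) := exp_pos _
    rcases le_or_gt s s₁ with hcase | hcase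
    · have h1 := ha s hcase
      have h2 : exp ((lam/2)*s) ≤ exp (r*s) := by
        apply Real.exp_le_exp.2
        have : lam/2 - r = e := by rw [hrdef, hlamdef]; ring
        nlinarith [this]
      have h3 : Real.sqrt (3*A₁) * exp ((lam/2)*s) ≤ Real.sqrt (3*A₁) * exp (r*s) :=
        mul_le_mul_of_nonneg_left h2 (Real.sqrt_nonneg _)
      have h4 : 0 ≤ 16*A₁/(3*Kc) * exp (r*s) := by positivity
      have h5 : 0 ≤ (MG + MG') * exp (-(r*s₁)) * exp (r*s) := by positivity
      rw [hCbdef]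
      nlinarith [h1, h3]
    · have h1 : |G s| ≤ MG := by
        have := hMG s (mem_Icc.2 ⟨hcase.le, hs⟩)
        rwa [Real.norm_eq_abs] at this
      have h2 : -G s ≤ MG := by
        have := abs_le.1 h1
        linarith [this.1]
      have h3 : (1:ℝ) ≤ exp (-(r*s₁)) * exp (r*s) := by
        rw [← Real.exp_add]
        rw [show -(r*s₁) + r*s = r*(s - s₁) by ring]
        rw [← Real.exp_zero]
        apply Real.exp_le_exp.2
        nlinarith [hrpos, hcase.le]
      have h4 : MG ≤ MG * (exp (-(r*s₁)) * exp (r*s)) := by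
        nlinarith [hMGnn]
      have h5 : 0 ≤ Real.sqrt (3*A₁) * exp (r*s) := by positivity
      have h6 : 0 ≤ 16*A₁/(3*Kc) * exp (r*s) := by positivity
      have h7 : 0 ≤ MG' * (exp (-(r*s₁)) * exp (r*s)) := by positivity
      rw [hCbdef]
      nlinarith [h2, h4]
  have hdGbound0 : ∀ s ≤ 0, |deriv G s| ≤ Cb * exp (r*s) := by
    intro s hs
    rcases le_or_gt s s₁ with hcase | hcase
    · have h1 := hdGbound s hcase
      have h4 : 0 ≤ Real.sqrt (3*A₁) * exp (r*s) := by positivity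
      have h5 : 0 ≤ (MG + MG') * exp (-(r*s₁)) * exp (r*s) := by positivity
      rw [hCbdef]
      nlinarith [h1]
    · have h1 : |deriv G s| ≤ MG' := by
        have := hMG' s (mem_Icc.2 ⟨hcase.le, hs⟩)
        rwa [Real.norm_eq_abs] at this
      have h3 : (1:ℝ) ≤ exp (-(r*s₁)) * exp (r*s) := by
        rw [← Real.exp_add]
        rw [show -(r*s₁) + r*s = r*(s - s₁) by ring]
        rw [← Real.exp_zero]
        apply Real.exp_le_exp.2
        nlinarith [hrpos, hcase.le]
      have h4 : MG' ≤ MG' * (exp (-(r*s₁)) * exp (r*s)) := by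
        nlinarith [hMG'nn]
      have h5 : 0 ≤ Real.sqrt (3*A₁) * exp (r*s) := by positivity
      have h6 : 0 ≤ 16*A₁/(3*Kc) * exp (r*s) := by positivity
      have h7 : 0 ≤ MG * (exp (-(r*s₁)) * exp (r*s)) := by positivity
      rw [hCbdef]
      nlinarith [h1, h4]
  -- ## Conclusion
  refine ⟨Cb + 1, by linarith, ?_⟩
  intro s hs
  have hrate : exp (r*s) ≤ exp (2*(1-ε)*s) := by
    apply Real.exp_le_exp.2
    have h1 : r - 2*(1-ε) = 2*ε - 2*e := by rw [hrdef, hlamdef]; ring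
    nlinarith [heε, hs, h1]
  have hexp2 : 0 < exp (2*(1-ε)*s) := exp_pos _
  have hG1 := hGbound0 s hs
  have hG2 := hdGbound0 s hs
  refine ⟨⟨?_, hg s⟩, ?_⟩
  · have : -G s ≤ Cb * exp (2*(1-ε)*s) := by nlinarith [hG1, hCb0]
    nlinarith [this, hexp2]
  · have : |deriv G s| ≤ Cb * exp (2*(1-ε)*s) := by nlinarith [hG2, hCb0]
    nlinarith [this, hexp2]
end

section
/- Fix m < -1, for each n ∈ ℝ let V(·; n) : [0, ∞) → ℝ be the unique solution of V'' + 3V' = R(V), V(0) = m, V'(0) = n, and define β⁻ = {n : there exists t > 0 with V'(t; n) < 0}, β⁰ = {n : V'(t; n) > 0 and V(t; n) ≤ -1 for all t > 0}, β⁺ = {n : V'(t; n) > 0 for all t ≥ 0 and V(t; n) > -1 for some t > 0}. Let n₀ be the unique element of β⁰. Then β⁻ and β⁺ are the open intervals β⁻ = (-∞, n₀) and β⁺ = (n₀, +∞). -/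
open Real Filter Set Topology

-- strict monotonicity of x ↦ x - e^x on (-∞,0]
lemma aux_sub_exp_strictMono {a b : ℝ} (hab : a < b) (hb : b ≤ 0) :
    a - Real.exp a < b - Real.exp b := by
  have h1 : (a - b) + 1 < Real.exp (a - b) := Real.add_one_lt_exp (by linarith)
  have h2 : Real.exp a = Real.exp b * Real.exp (a - b) := by
    rw [← Real.exp_add]; ring_nf
  have hb1 : Real.exp b ≤ 1 := Real.exp_le_one_iff.mpr hb
  nlinarith [Real.exp_pos b, Real.exp_pos (a - b),
    mul_lt_mul_of_pos_left h1 (Real.exp_pos b)]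

lemma aux_R_mono (Q R : ℝ → ℝ)
    (hQ : ∀ v : ℝ, v < -1 → Q v < 0 ∧ Q v - Real.exp (Q v) = v)
    (hR : ∀ v : ℝ, R v = if v < -1 then -2 * (1 - Real.exp (Q v)) ^ 2 else 4 * (v + 1)) :
    Monotone R := by
  intro a b hab
  rw [hR a, hR b]
  by_cases ha : a < -1
  · obtain ⟨hQa, hva⟩ := hQ a ha
    rw [if_pos ha]
    by_cases hb : b < -1
    · obtain ⟨hQb, hvb⟩ := hQ b hb
      rw [if_pos hb]
      have hQab : Q a ≤ Q b := by
        by_contra hc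
        push_neg at hc
        have := aux_sub_exp_strictMono hc hQa.le
        rw [hvb, hva] at this
        linarith
      have h1 : Real.exp (Q a) ≤ Real.exp (Q b) := Real.exp_le_exp.mpr hQab
      have h2 : Real.exp (Q b) < 1 := Real.exp_lt_one_iff.mpr hQb
      nlinarith [Real.exp_pos (Q a)]
    · rw [if_neg hb]
      push_neg at hb
      nlinarith [sq_nonneg (1 - Real.exp (Q a))]
  · push_neg at ha
    rw [if_neg (not_lt.mpr ha), if_neg (not_lt.mpr (le_trans ha hab))]
    linarith

lemma aux_R_neg (Q R : ℝ → ℝ)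
    (hQ : ∀ v : ℝ, v < -1 → Q v < 0 ∧ Q v - Real.exp (Q v) = v)
    (hR : ∀ v : ℝ, R v = if v < -1 then -2 * (1 - Real.exp (Q v)) ^ 2 else 4 * (v + 1))
    {v : ℝ} (hv : v < -1) : R v < 0 := by
  obtain ⟨hQv, -⟩ := hQ v hv
  rw [hR v, if_pos hv]
  have h2 : Real.exp (Q v) < 1 := Real.exp_lt_one_iff.mpr hQv
  nlinarith [Real.exp_pos (Q v)]


lemma aux_comparison
    (R : ℝ → ℝ) (hRmono : Monotone R)
    (m : ℝ)
    (V : ℝ → ℝ → ℝ)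
    (hdiff : ∀ n : ℝ, ∀ t : ℝ, 0 ≤ t →
      DifferentiableAt ℝ (V n) t ∧ DifferentiableAt ℝ (deriv (V n)) t)
    (hode : ∀ n : ℝ, ∀ t : ℝ, 0 ≤ t →
      deriv (deriv (V n)) t + 3 * deriv (V n) t = R (V n t))
    (hic : ∀ n : ℝ, V n 0 = m ∧ deriv (V n) 0 = n)
    {n1 n2 : ℝ} (hn : n1 < n2) :
    ∀ t : ℝ, 0 < t → V n1 t < V n2 t ∧ deriv (V n1) t < deriv (V n2) t := by
  set E : ℝ → ℝ := fun t => V n2 t - V n1 t with hEdef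
  set F : ℝ → ℝ := fun t => Real.exp (3 * t) * (deriv (V n2) t - deriv (V n1) t) with hFdef
  have hE0 : E 0 = 0 := by simp [hEdef, (hic n1).1, (hic n2).1]
  have hF0 : F 0 = n2 - n1 := by simp [hFdef, (hic n1).2, (hic n2).2]
  have hEderiv : ∀ t : ℝ, 0 ≤ t → HasDerivAt E (deriv (V n2) t - deriv (V n1) t) t :=
    fun t ht => ((hdiff n2 t ht).1.hasDerivAt).sub ((hdiff n1 t ht).1.hasDerivAt)
  have hFderiv : ∀ t : ℝ, 0 ≤ t →
      HasDerivAt F (Real.exp (3 * t) * (R (V n2 t) - R (V n1 t))) t := by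
    intro t ht
    have hexp : HasDerivAt (fun s : ℝ => Real.exp (3 * s)) (Real.exp (3 * t) * 3) t := by
      have h3 : HasDerivAt (fun s : ℝ => 3 * s) 3 t := by
        simpa using (hasDerivAt_id t).const_mul (3 : ℝ)
      exact h3.exp
    have hd : HasDerivAt (fun s => deriv (V n2) s - deriv (V n1) s)
        (deriv (deriv (V n2)) t - deriv (deriv (V n1)) t) t :=
      ((hdiff n2 t ht).2.hasDerivAt).sub ((hdiff n1 t ht).2.hasDerivAt)
    have := hexp.mul hd
    have h2 := hode n2 t ht
    have h1 := hode n1 t ht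
    have heq : Real.exp (3 * t) * 3 * (deriv (V n2) t - deriv (V n1) t) +
        Real.exp (3 * t) * (deriv (deriv (V n2)) t - deriv (deriv (V n1)) t) =
        Real.exp (3 * t) * (R (V n2 t) - R (V n1 t)) := by
      have e2 : deriv (deriv (V n2)) t = R (V n2 t) - 3 * deriv (V n2) t := by linarith
      have e1 : deriv (deriv (V n1)) t = R (V n1 t) - 3 * deriv (V n1) t := by linarith
      rw [e1, e2]; ring
    rw [heq] at this
    exact this
  -- key: if E ≥ 0 on (0,T) then E T > 0 and F T ≥ n2 - n1
  have key : ∀ T : ℝ, 0 < T → (∀ s : ℝ, 0 < s → s < T → 0 ≤ E s) →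
      0 < E T ∧ n2 - n1 ≤ F T := by
    intro T hT hE
    have hFcont : ContinuousOn F (Icc 0 T) := fun s hs =>
      ((hFderiv s hs.1).differentiableAt.continuousAt).continuousWithinAt
    have hFmono : MonotoneOn F (Icc 0 T) := by
      apply monotoneOn_of_deriv_nonneg (convex_Icc 0 T) hFcont
      · intro s hs
        rw [interior_Icc] at hs
        exact (hFderiv s hs.1.le).differentiableAt.differentiableWithinAt
      · intro s hs
        rw [interior_Icc] at hs
        rw [(hFderiv s hs.1.le).deriv]
        have hEs : 0 ≤ E s := hE s hs.1 hs.2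
        have hVs : V n1 s ≤ V n2 s := by simp [hEdef] at hEs; linarith
        have := hRmono hVs
        have := Real.exp_pos (3 * s)
        nlinarith
    have hFge : ∀ s ∈ Icc (0:ℝ) T, n2 - n1 ≤ F s := by
      intro s hs
      rw [← hF0]
      exact hFmono (left_mem_Icc.mpr hT.le) hs hs.1
    have hEcont : ContinuousOn E (Icc 0 T) := fun s hs =>
      ((hEderiv s hs.1).differentiableAt.continuousAt).continuousWithinAt
    have hEmono : StrictMonoOn E (Icc 0 T) := by
      apply strictMonoOn_of_deriv_pos (convex_Icc 0 T) hEcont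
      intro s hs
      rw [interior_Icc] at hs
      rw [(hEderiv s hs.1.le).deriv]
      have h1 := hFge s ⟨hs.1.le, hs.2.le⟩
      have h2 : 0 < Real.exp (3 * s) := Real.exp_pos _
      have h3 : F s = Real.exp (3 * s) * (deriv (V n2) s - deriv (V n1) s) := rfl
      nlinarith
    refine ⟨?_, hFge T ⟨hT.le, le_rfl⟩⟩
    have := hEmono (left_mem_Icc.mpr hT.le) (right_mem_Icc.mpr hT.le) hT
    rwa [hE0] at this
  -- Step 1: E ≥ 0 everywhere on [0,∞)
  have hEnn : ∀ t : ℝ, 0 ≤ t → 0 ≤ E t := by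
    by_contra hc
    push_neg at hc
    obtain ⟨t₀, ht₀, hEt₀⟩ := hc
    set S : Set ℝ := {t | 0 ≤ t ∧ E t < 0} with hSdef
    have hSne : S.Nonempty := ⟨t₀, ht₀, hEt₀⟩
    have hSbdd : BddBelow S := ⟨0, fun s hs => hs.1⟩
    set t₁ := sInf S with ht₁def
    have ht₁0 : 0 ≤ t₁ := le_csInf hSne (fun s hs => hs.1)
    have ht₁lb : ∀ s ∈ S, t₁ ≤ s := fun s hs => csInf_le hSbdd hs
    have hsmall : ∀ δ : ℝ, 0 < δ → ∃ s ∈ S, s < t₁ + δ := by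
      intro δ hδ
      by_contra hcc
      push_neg at hcc
      have : t₁ + δ ≤ t₁ := le_csInf hSne hcc
      linarith
    have hE_nonneg_lt : ∀ s : ℝ, 0 ≤ s → s < t₁ → 0 ≤ E s := by
      intro s hs hst
      by_contra h
      push_neg at h
      exact absurd (ht₁lb s ⟨hs, h⟩) (not_le.mpr hst)
    rcases eq_or_lt_of_le ht₁0 with h0 | h0
    · -- t₁ = 0 : use positive derivative of E at 0
      have hder := hEderiv 0 le_rfl
      rw [(hic n1).2, (hic n2).2] at hder
      have hslope := hasDerivAt_iff_tendsto_slope.mp hder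
      have hpos : ∀ᶠ s in 𝓝[>] (0:ℝ), 0 < slope E 0 s := by
        have : 𝓝[>] (0:ℝ) ≤ 𝓝[≠] (0:ℝ) :=
          nhdsWithin_mono 0 (fun x hx => ne_of_gt hx)
        exact (hslope.mono_left this).eventually_const_lt (by linarith)
      rw [eventually_nhdsWithin_iff] at hpos
      rw [Metric.eventually_nhds_iff] at hpos
      obtain ⟨ε, hε, hball⟩ := hpos
      obtain ⟨s, hsS, hslt⟩ := hsmall ε hε
      rw [← h0] at hslt
      have hs0 : 0 < s := by
        rcases eq_or_lt_of_le hsS.1 with h | h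
        · exfalso
          have h2 : E s < 0 := hsS.2
          rw [← h] at h2
          linarith
        · exact h
      have hdist : dist s 0 < ε := by
        rw [Real.dist_eq, sub_zero, abs_of_pos hs0]
        linarith
      have hsl := hball hdist hs0
      rw [slope_def_field, hE0, sub_zero, sub_zero] at hsl
      have hEs : 0 < E s := by
        have h2 := mul_pos hsl hs0
        rwa [div_mul_cancel₀ _ (ne_of_gt hs0)] at h2
      exact absurd hsS.2 (not_lt.mpr hEs.le)
    · -- t₁ > 0
      have hEt₁pos := (key t₁ h0 (fun s hs hst => hE_nonneg_lt s hs.le hst)).1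
      -- but E t₁ ≤ 0 by continuity from the right via elements of S
      have hEt₁le : E t₁ ≤ 0 := by
        by_contra hcc
        push_neg at hcc
        have hcont : ContinuousAt E t₁ := (hEderiv t₁ ht₁0).differentiableAt.continuousAt
        have hev : ∀ᶠ s in 𝓝 t₁, 0 < E s := hcont.eventually_const_lt hcc
        rw [Metric.eventually_nhds_iff] at hev
        obtain ⟨ε, hε, hball⟩ := hev
        obtain ⟨s, hsS, hslt⟩ := hsmall ε hε
        have h1 : t₁ ≤ s := ht₁lb s hsS
        have hdist : dist s t₁ < ε := by
          rw [Real.dist_eq, abs_of_nonneg (by linarith)]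
          linarith
        exact absurd hsS.2 (not_lt.mpr (hball hdist).le)
      linarith
  -- Step 2: conclude
  intro t ht
  obtain ⟨hEt, hFt⟩ := key t ht (fun s hs _ => hEnn s hs.le)
  constructor
  · simp [hEdef] at hEt; linarith
  · have h3 : F t = Real.exp (3 * t) * (deriv (V n2) t - deriv (V n1) t) := rfl
    have h2 : 0 < Real.exp (3 * t) := Real.exp_pos _
    have h2' : Real.exp (3 * t) ≤ Real.exp (3 * t) := le_rfl
    nlinarith



/-- For fixed `m < -1` and the shooting family `V(·; n)` solving
`V'' + 3V' = R(V)`, `V(0) = m`, `V'(0) = n`, if `n₀` is the unique element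
of `β⁰`, then the sets of undesired shooting data are the open intervals
`β⁻ = (-∞, n₀)` and `β⁺ = (n₀, +∞)`. -/
theorem shooting_sets_are_intervals
    (Q R : ℝ → ℝ)
    (hQ : ∀ v : ℝ, v < -1 → Q v < 0 ∧ Q v - Real.exp (Q v) = v)
    (hR : ∀ v : ℝ, R v = if v < -1 then -2 * (1 - Real.exp (Q v)) ^ 2 else 4 * (v + 1))
    (m : ℝ) (hm : m < -1)
    (V : ℝ → ℝ → ℝ)
    (hdiff : ∀ n : ℝ, ∀ t : ℝ, 0 ≤ t →
      DifferentiableAt ℝ (V n) t ∧ DifferentiableAt ℝ (deriv (V n)) t)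
    (hode : ∀ n : ℝ, ∀ t : ℝ, 0 ≤ t →
      deriv (deriv (V n)) t + 3 * deriv (V n) t = R (V n t))
    (hic : ∀ n : ℝ, V n 0 = m ∧ deriv (V n) 0 = n)
    (Bm B0 Bp : Set ℝ)
    (hBm : Bm = {n : ℝ | ∃ t > 0, deriv (V n) t < 0})
    (hB0 : B0 = {n : ℝ | ∀ t > 0, 0 < deriv (V n) t ∧ V n t ≤ -1})
    (hBp : Bp = {n : ℝ | (∀ t : ℝ, 0 ≤ t → 0 < deriv (V n) t) ∧ ∃ t > 0, -1 < V n t})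
    (n₀ : ℝ) (hn₀ : B0 = {n₀}) :
    Bm = Set.Iio n₀ ∧ Bp = Set.Ioi n₀ := by
  have hRmono : Monotone R := aux_R_mono Q R hQ hR
  have hcomp : ∀ n1 n2 : ℝ, n1 < n2 → ∀ t : ℝ, 0 < t →
      V n1 t < V n2 t ∧ deriv (V n1) t < deriv (V n2) t :=
    fun n1 n2 hn => aux_comparison R hRmono m V hdiff hode hic hn
  -- n₀ ∈ B0
  have hn₀B0 : ∀ t > (0:ℝ), 0 < deriv (V n₀) t ∧ V n₀ t ≤ -1 := by
    have h1 : n₀ ∈ B0 := by rw [hn₀]; exact mem_singleton _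
    rwa [hB0] at h1
  -- n₀ ≥ 0
  have hn₀nonneg : 0 ≤ n₀ := by
    have hcont : ContinuousAt (deriv (V n₀)) 0 := (hdiff n₀ 0 le_rfl).2.continuousAt
    have htend : Tendsto (deriv (V n₀)) (𝓝[>] (0:ℝ)) (𝓝 (deriv (V n₀) 0)) :=
      hcont.continuousWithinAt.tendsto
    have hge : deriv (V n₀) 0 ≥ 0 := by
      refine ge_of_tendsto htend ?_
      filter_upwards [self_mem_nhdsWithin] with t ht
      exact (hn₀B0 t ht).1.le
    rw [(hic n₀).2] at hge
    exact hge
  constructor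
  · -- Bm = Iio n₀
    ext n
    simp only [mem_Iio]
    constructor
    · intro hnBm
      rw [hBm] at hnBm
      obtain ⟨t, ht, hd⟩ := hnBm
      by_contra h
      push_neg at h
      rcases eq_or_lt_of_le h with h' | h'
      · rw [h'] at hn₀B0
        linarith [(hn₀B0 t ht).1]
      · linarith [(hcomp n₀ n h' t ht).2, (hn₀B0 t ht).1]
    · intro hn
      rw [hBm]
      simp only [mem_setOf_eq]
      by_contra hc
      push_neg at hc
      have hVle : ∀ t > (0:ℝ), V n t < -1 := fun t ht =>
        lt_of_lt_of_le (hcomp n n₀ hn t ht).1 (hn₀B0 t ht).2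
      have hdpos : ∀ t > (0:ℝ), 0 < deriv (V n) t := by
        intro t ht
        rcases lt_or_eq_of_le (hc t ht) with h' | h'
        · exact h'
        · exfalso
          have hmin : IsLocalMin (deriv (V n)) t := by
            filter_upwards [isOpen_Ioi.eventually_mem ht] with s hs
            rw [← h']
            exact hc s hs
          have h0 : deriv (deriv (V n)) t = 0 := hmin.deriv_eq_zero
          have hodet := hode n t ht.le
          rw [h0, ← h'] at hodet
          have hRneg := aux_R_neg Q R hQ hR (hVle t ht)
          linarith
      have hmem : n ∈ B0 := by
        rw [hB0]
        exact fun t ht => ⟨hdpos t ht, (hVle t ht).le⟩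
      rw [hn₀] at hmem
      have : n = n₀ := hmem
      linarith
  · -- Bp = Ioi n₀
    ext n
    simp only [mem_Ioi]
    constructor
    · intro hnBp
      rw [hBp] at hnBp
      obtain ⟨hd, t, ht, hV⟩ := hnBp
      by_contra h
      push_neg at h
      rcases eq_or_lt_of_le h with h' | h'
      · rw [h'] at hV
        linarith [(hn₀B0 t ht).2]
      · linarith [(hcomp n n₀ h' t ht).1, (hn₀B0 t ht).2]
    · intro hn
      rw [hBp]
      simp only [mem_setOf_eq]
      have hdpos : ∀ t : ℝ, 0 ≤ t → 0 < deriv (V n) t := by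
        intro t ht
        rcases eq_or_lt_of_le ht with h' | h'
        · rw [← h', (hic n).2]
          linarith
        · linarith [(hcomp n₀ n hn t h').2, (hn₀B0 t h').1]
      refine ⟨hdpos, ?_⟩
      by_contra hc
      push_neg at hc
      have hmem : n ∈ B0 := by
        rw [hB0]
        exact fun t ht => ⟨hdpos t ht.le, hc t ht⟩
      rw [hn₀] at hmem
      have : n = n₀ := hmem
      linarith
end
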